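/- arXiv:2501.03733 — 10 statements merged into one kernel-verified Lean document; each statement's English description precedes it below -/
import Mathlib

section
/- Let (Ω, μ) be a measure space and let H = L²(μ; ℝ), the real Hilbert lattice of square-integrable functions with the a.e. pointwise order. Let A be a bounded linear operator on H that is positive (A f ≥ 0 whenever f ≥ 0), idempotent (A ∘ A = A), and whose self-commutator A*A − AA* is a positive operator. Then A is self-adjoint (A* = A), i.e. A is an orthogonal projection; in particular A*A − AA* = 0. -/
open MeasureTheory ContinuousLinearMap

section Aux

variable {Ω : Type*} [MeasurableSpace Ω] {μ : Measure Ω}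

private lemma aux_inner_nonneg (f g : Lp ℝ 2 μ) (hf : 0 ≤ f) (hg : 0 ≤ g) :
    0 ≤ (inner ℝ f g : ℝ) := by
  rw [L2.inner_def]
  refine integral_nonneg_of_ae ?_
  filter_upwards [(Lp.coeFn_nonneg f).mpr hf, (Lp.coeFn_nonneg g).mpr hg] with x hx hy
  simp only [RCLike.inner_apply, conj_trivial]
  exact mul_nonneg hy hx

private lemma aux_nonneg_of_inner (h : Lp ℝ 2 μ)
    (hh : ∀ g : Lp ℝ 2 μ, 0 ≤ g → 0 ≤ (inner ℝ h g : ℝ)) : 0 ≤ h := by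
  set g : Lp ℝ 2 μ := (-h) ⊔ 0 with hgdef
  have hg0 : 0 ≤ g := le_sup_right
  have hcg : ⇑g =ᵐ[μ] fun x => max (-h x) 0 := by
    filter_upwards [Lp.coeFn_sup (-h) 0, Lp.coeFn_neg h,
      Lp.coeFn_zero (E := ℝ) (p := 2) (μ := μ)] with x h1 h2 h3
    rw [h1, Pi.sup_apply, h2, h3, Pi.neg_apply, Pi.zero_apply]
  have key : (inner ℝ h g : ℝ) = - (inner ℝ g g : ℝ) := by
    rw [L2.inner_def, L2.inner_def, ← integral_neg]
    refine integral_congr_ae ?_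
    filter_upwards [hcg] with x hx
    simp only [RCLike.inner_apply, conj_trivial, hx]
    rcases le_total (h x) 0 with h0 | h0
    · rw [max_eq_left (by linarith)]; ring
    · rw [max_eq_right (by linarith)]; ring
  have h1 := hh g hg0
  rw [key] at h1
  have h2 : (inner ℝ g g : ℝ) = 0 := le_antisymm (by linarith) real_inner_self_nonneg
  have h3 : g = 0 := by rwa [inner_self_eq_zero] at h2
  have h4 : -h ≤ g := le_sup_left
  rw [h3] at h4
  exact neg_nonpos.mp h4

private lemma aux_ortho {u v : Lp ℝ 2 μ} (c : ℝ) (hc : c = (inner ℝ u v : ℝ))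
    (hkey : ∀ t : ℝ, ‖u‖ ≤ ‖u + t • v‖) : c = 0 := by
  have key : ∀ t : ℝ, 0 ≤ 2 * t * c + t ^ 2 * ‖v‖ ^ 2 := by
    intro t
    have h1 := hkey t
    have h2 : ‖u + t • v‖ ^ 2 = ‖u‖ ^ 2 + 2 * (inner ℝ u (t • v) : ℝ) + ‖t • v‖ ^ 2 :=
      norm_add_sq_real u (t • v)
    rw [real_inner_smul_right, ← hc, norm_smul] at h2
    have h3 : ‖u‖ ^ 2 ≤ ‖u + t • v‖ ^ 2 := by
      have := norm_nonneg u
      nlinarith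
    rw [h2] at h3
    have h4 : (‖t‖ * ‖v‖) ^ 2 = t ^ 2 * ‖v‖ ^ 2 := by
      rw [Real.norm_eq_abs, mul_pow, sq_abs]
    nlinarith
  rcases eq_or_ne v 0 with hv | hv
  · rw [hc, hv, inner_zero_right]
  · have hd : (0 : ℝ) < ‖v‖ ^ 2 := pow_pos (norm_pos_iff.mpr hv) 2
    have := key (-c / ‖v‖ ^ 2)
    have h5 : 2 * (-c / ‖v‖ ^ 2) * c + (-c / ‖v‖ ^ 2) ^ 2 * ‖v‖ ^ 2 = -(c ^ 2) / ‖v‖ ^ 2 := by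
      field_simp; ring
    rw [h5] at this
    have h6 : c ^ 2 ≤ 0 := by
      by_contra h7
      push_neg at h7
      have : -(c ^ 2) / ‖v‖ ^ 2 < 0 := div_neg_of_neg_of_pos (by linarith) hd
      linarith
    nlinarith

end Aux

set_option maxHeartbeats 1000000 in
/-- A positive idempotent operator on the Hilbert lattice `L²(μ; ℝ)` whose self-commutator
`A*A - AA*` is a positive operator is an orthogonal projection (`A* = A`); in particular the
self-commutator vanishes. -/
theorem positive_idempotent_selfCommutator_positive_implies_selfAdjoint
    {Ω : Type*} [MeasurableSpace Ω] (μ : Measure Ω)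
    (A : Lp ℝ 2 μ →L[ℝ] Lp ℝ 2 μ)
    (hA_pos : ∀ f : Lp ℝ 2 μ, 0 ≤ f → 0 ≤ A f)
    (hA_idem : A ∘L A = A)
    (hC_pos : ∀ f : Lp ℝ 2 μ, 0 ≤ f → 0 ≤ (adjoint A ∘L A - A ∘L adjoint A) f) :
    adjoint A = A ∧ adjoint A ∘L A - A ∘L adjoint A = 0 := by
  -- the adjoint is also a positive operator
  have hAs_pos : ∀ f : Lp ℝ 2 μ, 0 ≤ f → 0 ≤ adjoint A f := by
    intro f hf
    refine aux_nonneg_of_inner _ (fun g hg => ?_)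
    rw [adjoint_inner_left]
    exact aux_inner_nonneg f (A g) hf (hA_pos g hg)
  -- monotonicity of positive operators
  have mono : ∀ (T : Lp ℝ 2 μ →L[ℝ] Lp ℝ 2 μ), (∀ f, 0 ≤ f → 0 ≤ T f) →
      ∀ f g : Lp ℝ 2 μ, f ≤ g → T f ≤ T g := by
    intro T hT f g hfg
    have h1 := hT (g - f) (sub_nonneg.mpr hfg)
    rw [map_sub] at h1
    exact sub_nonneg.mp h1
  -- idempotency of A and A*
  have idemA : ∀ x, A (A x) = A x := by
    intro x
    have := ContinuousLinearMap.ext_iff.mp hA_idem x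
    simpa using this
  have idemAs : ∀ x, adjoint A (adjoint A x) = adjoint A x := by
    intro x
    have h1 : adjoint A ∘L adjoint A = adjoint A := by
      rw [← adjoint_comp, hA_idem]
    have := ContinuousLinearMap.ext_iff.mp h1 x
    simpa using this
  -- key lattice inequality : Q² ≤ P where P = A*A, Q = AA*
  have hQQP : ∀ f : Lp ℝ 2 μ, 0 ≤ f →
      A (adjoint A (A (adjoint A f))) ≤ adjoint A (A f) := by
    intro f hf
    have h1 : 0 ≤ adjoint A ((adjoint A ∘L A - A ∘L adjoint A) (A f)) :=
      hAs_pos _ (hC_pos _ (hA_pos f hf))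
    have h2 : 0 ≤ adjoint A (A ((adjoint A ∘L A - A ∘L adjoint A) f)) :=
      hAs_pos _ (hA_pos _ (hC_pos f hf))
    have h3 : 0 ≤ (adjoint A ∘L A - A ∘L adjoint A) (A (adjoint A f)) :=
      hC_pos _ (hA_pos _ (hAs_pos f hf))
    have e : adjoint A (A f) - A (adjoint A (A (adjoint A f))) =
        adjoint A ((adjoint A ∘L A - A ∘L adjoint A) (A f)) +
        adjoint A (A ((adjoint A ∘L A - A ∘L adjoint A) f)) +
        (adjoint A ∘L A - A ∘L adjoint A) (A (adjoint A f)) := by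
      simp only [ContinuousLinearMap.sub_apply, ContinuousLinearMap.comp_apply, map_sub,
        idemA, idemAs]
      abel
    have h4 : 0 ≤ adjoint A (A f) - A (adjoint A (A (adjoint A f))) := by
      rw [e]; exact add_nonneg (add_nonneg h1 h2) h3
    exact sub_nonneg.mp h4
  -- pointwise norm bound ‖Q² f‖ ≤ ‖P‖ * ‖f‖
  set Q : Lp ℝ 2 μ →L[ℝ] Lp ℝ 2 μ := A ∘L adjoint A with hQdef
  set P : Lp ℝ 2 μ →L[ℝ] Lp ℝ 2 μ := adjoint A ∘L A with hPdef
  have hQ_pos : ∀ f, 0 ≤ f → 0 ≤ Q f := fun f hf => hA_pos _ (hAs_pos f hf)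
  have habs : ∀ f : Lp ℝ 2 μ, |Q (Q f)| ≤ P |f| := by
    intro f
    have h1 : Q (Q f) ≤ Q (Q |f|) :=
      mono Q hQ_pos _ _ (mono Q hQ_pos _ _ (le_abs_self f))
    have h2 : -(Q (Q f)) ≤ Q (Q |f|) := by
      have : Q (Q (-f)) ≤ Q (Q |f|) :=
        mono Q hQ_pos _ _ (mono Q hQ_pos _ _ (neg_le_abs f))
      simpa using this
    have h3 : Q (Q |f|) ≤ P |f| := by
      have := hQQP |f| (abs_nonneg f)
      simpa [hQdef, hPdef, ContinuousLinearMap.comp_apply] using this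
    exact sup_le (h1.trans h3) (h2.trans h3)
  -- operator norm bound ‖Q ∘ Q‖ ≤ ‖P‖
  have hQ2_le : ‖Q ∘L Q‖ ≤ ‖P‖ := by
    refine opNorm_le_bound _ (norm_nonneg P) (fun f => ?_)
    have h1 : ‖Q (Q f)‖ ≤ ‖P |f|‖ := by
      have h2 : |Q (Q f)| ≤ |(P (|f|))| := by
        rw [abs_of_nonneg (show (0 : Lp ℝ 2 μ) ≤ P |f| from hAs_pos _ (hA_pos _ (abs_nonneg f)))]
        exact habs f
      exact HasSolidNorm.solid h2
    have h3 : ‖P |f|‖ ≤ ‖P‖ * ‖|f|‖ := le_opNorm P |f|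
    rw [norm_abs_eq_norm] at h3
    calc ‖(Q ∘L Q) f‖ = ‖Q (Q f)‖ := rfl
      _ ≤ ‖P |f|‖ := h1
      _ ≤ ‖P‖ * ‖f‖ := h3
  -- C* norm identities
  have hPnorm : ‖P‖ = ‖A‖ * ‖A‖ := norm_adjoint_comp_self A
  have hQnorm : ‖Q‖ = ‖A‖ * ‖A‖ := by
    have h1 : Q = adjoint (adjoint A) ∘L adjoint A := by rw [adjoint_adjoint]
    rw [h1, norm_adjoint_comp_self, LinearIsometryEquiv.norm_map]
  have hQsa : adjoint Q = Q := by
    rw [hQdef, adjoint_comp, adjoint_adjoint]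
  have hQ2norm : ‖Q ∘L Q‖ = ‖Q‖ * ‖Q‖ := by
    have h1 := norm_adjoint_comp_self Q
    rwa [hQsa] at h1
  -- conclude ‖A‖ ≤ 1
  have hAnorm : ‖A‖ ≤ 1 := by
    have h1 : (‖A‖ * ‖A‖) * (‖A‖ * ‖A‖) ≤ ‖A‖ * ‖A‖ := by
      calc (‖A‖ * ‖A‖) * (‖A‖ * ‖A‖) = ‖Q ∘L Q‖ := by rw [hQ2norm, hQnorm]
        _ ≤ ‖P‖ := hQ2_le
        _ = ‖A‖ * ‖A‖ := hPnorm
    by_contra h2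
    push_neg at h2
    have h3 : (0 : ℝ) < ‖A‖ := lt_trans zero_lt_one h2
    have h4 : 1 < ‖A‖ * ‖A‖ := by nlinarith
    nlinarith
  have hcontr : ∀ z : Lp ℝ 2 μ, ‖A z‖ ≤ ‖z‖ := by
    intro z
    calc ‖A z‖ ≤ ‖A‖ * ‖z‖ := le_opNorm A z
      _ ≤ 1 * ‖z‖ := by
          have := norm_nonneg z
          nlinarith
      _ = ‖z‖ := one_mul _
  -- a norm-one idempotent is self-adjoint: kernel ⟂ range
  have hortho : ∀ u v : Lp ℝ 2 μ, A u = u → A v = 0 → (inner ℝ u v : ℝ) = 0 := by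
    intro u v hu hv
    refine aux_ortho (inner ℝ u v : ℝ) rfl (fun t => ?_)
    have h1 : A (u + t • v) = u := by
      rw [map_add, _root_.map_smul, hu, hv, smul_zero, add_zero]
    calc ‖u‖ = ‖A (u + t • v)‖ := by rw [h1]
      _ ≤ ‖u + t • v‖ := hcontr _
  have hsym : ∀ x y : Lp ℝ 2 μ, (inner ℝ (A x) y : ℝ) = (inner ℝ x (A y) : ℝ) := by
    intro x y
    have h1 : (inner ℝ (A x) (y - A y) : ℝ) = 0 :=
      hortho (A x) (y - A y) (idemA x) (by rw [map_sub, idemA, sub_self])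
    have h2 : (inner ℝ (A y) (x - A x) : ℝ) = 0 :=
      hortho (A y) (x - A x) (idemA y) (by rw [map_sub, idemA, sub_self])
    have h3 : (inner ℝ (A x) y : ℝ) = (inner ℝ (A x) (A y) : ℝ) := by
      have := inner_sub_right (𝕜 := ℝ) (A x) y (A y)
      rw [h1] at this
      linarith [this]
    have h4 : (inner ℝ x (A y) : ℝ) = (inner ℝ (A x) (A y) : ℝ) := by
      have h5 := inner_sub_right (𝕜 := ℝ) (A y) x (A x)
      rw [h2] at h5
      have h6 : (inner ℝ (A y) x : ℝ) = (inner ℝ (A y) (A x) : ℝ) := by linarith [h5]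
      exact (real_inner_comm (A y) x).trans (h6.trans (real_inner_comm (A x) (A y)))
    rw [h3, h4]
  have hadj : adjoint A = A := by
    have := (eq_adjoint_iff A A).mpr hsym
    exact this.symm
  refine ⟨hadj, ?_⟩
  rw [hPdef, hQdef, hadj, sub_self]
end

section
/- Let (Ω, μ) be a measure space, H = L²(μ; ℝ), and let A be a positive bounded linear operator on H such that A*A − AA* is a positive operator. Then (1) for every positive integer n the operator (A*)ⁿAⁿ − (A*A)ⁿ is positive, and (2) the spectral radius satisfies r(A*A) ≤ r(A)². -/
open MeasureTheory ContinuousLinearMap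
open scoped ENNReal

open scoped NNReal RealInnerProductSpace

open MeasureTheory ContinuousLinearMap
open scoped ENNReal NNReal RealInnerProductSpace

set_option maxHeartbeats 1000000
set_option synthInstance.maxHeartbeats 400000

namespace SelfCommAux

variable {Ω : Type*} [MeasurableSpace Ω] {μ : Measure Ω}

/-- Positivity (in the lattice sense) of an operator on `L²(μ; ℝ)`. -/
def Pos (T : Lp ℝ 2 μ →L[ℝ] Lp ℝ 2 μ) : Prop := ∀ f, 0 ≤ f → 0 ≤ T f

namespace Pos

variable {S T : Lp ℝ 2 μ →L[ℝ] Lp ℝ 2 μ}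

lemma zero : Pos (0 : Lp ℝ 2 μ →L[ℝ] Lp ℝ 2 μ) := fun f _ => by simp

lemma one : Pos (1 : Lp ℝ 2 μ →L[ℝ] Lp ℝ 2 μ) := fun f hf => by
  simpa [ContinuousLinearMap.one_apply] using hf

lemma add (hS : Pos S) (hT : Pos T) : Pos (S + T) := fun f hf => by
  simpa [ContinuousLinearMap.add_apply] using add_nonneg (hS f hf) (hT f hf)

lemma mul (hS : Pos S) (hT : Pos T) : Pos (S * T) := fun f hf => by
  simpa [ContinuousLinearMap.mul_apply] using hS _ (hT f hf)

lemma smul {c : ℝ} (hc : 0 ≤ c) (hT : Pos T) : Pos (c • T) := fun f hf => by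
  rw [ContinuousLinearMap.smul_apply]
  have h1 := hT f hf
  rw [← Lp.coeFn_nonneg] at h1 ⊢
  filter_upwards [h1, Lp.coeFn_smul c (T f)] with a ha hs
  rw [hs, Pi.smul_apply, smul_eq_mul]
  exact mul_nonneg hc ha

lemma pow (hT : Pos T) : ∀ n, Pos (T ^ n)
  | 0 => by simpa [pow_zero] using (one : Pos (1 : Lp ℝ 2 μ →L[ℝ] Lp ℝ 2 μ))
  | n + 1 => by
      rw [pow_succ]
      exact (hT.pow n).mul hT

end Pos

lemma inner_nonneg {f g : Lp ℝ 2 μ} (hf : 0 ≤ f) (hg : 0 ≤ g) : 0 ≤ ⟪f, g⟫ := by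
  rw [MeasureTheory.L2.inner_def]
  refine integral_nonneg_of_ae ?_
  rw [← Lp.coeFn_nonneg] at hf hg
  filter_upwards [hf, hg] with a ha hb
  simpa [RCLike.inner_apply, starRingEnd_apply] using mul_nonneg hb ha

lemma nonneg_of_forall_inner {h : Lp ℝ 2 μ} (hh : ∀ g : Lp ℝ 2 μ, 0 ≤ g → 0 ≤ ⟪h, g⟫) :
    0 ≤ h := by
  set g : Lp ℝ 2 μ := MeasureTheory.Lp.posPart (-h) with hgdef
  have hgfn : ⇑g =ᵐ[μ] fun a => max ((-h : Lp ℝ 2 μ) a) 0 := Lp.coeFn_posPart _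
  have hgnn : 0 ≤ g := by
    rw [← Lp.coeFn_nonneg]
    filter_upwards [hgfn] with a ha
    rw [ha]; exact le_max_right _ _
  have hint : 0 ≤ ⟪h, g⟫ := hh g hgnn
  rw [MeasureTheory.L2.inner_def] at hint
  -- the integrand is a.e. equal to `-(min (h a) 0)^2`
  have hkey : (fun a => (inner ℝ (h a) (g a) : ℝ)) =ᵐ[μ] fun a => -(min (h a) 0)^2 := by
    filter_upwards [hgfn, Lp.coeFn_neg h] with a ha hneg
    rw [RCLike.inner_apply, starRingEnd_apply, star_trivial, ha, hneg]
    simp only [Pi.neg_apply]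
    rcases le_or_gt (h a) 0 with hle | hlt
    · rw [max_eq_left (by linarith), min_eq_left hle]; ring
    · rw [max_eq_right (by linarith), min_eq_right hlt.le]; ring
  have hInt : Integrable (fun a => (inner ℝ (h a) (g a) : ℝ)) μ := L2.integrable_inner h g
  have hInt2 : Integrable (fun a => (min (h a) 0)^2) μ :=
    hInt.neg.congr (by filter_upwards [hkey] with a ha; simp only [Pi.neg_apply, ha, neg_neg])
  have hz : ∫ a, (min (h a) 0)^2 ∂μ = 0 := by
    have h1 : ∫ a, (inner ℝ (h a) (g a) : ℝ) ∂μ = -∫ a, (min (h a) 0)^2 ∂μ := by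
      rw [integral_congr_ae hkey, integral_neg]
    have h2 : 0 ≤ ∫ a, (min (h a) 0)^2 ∂μ := integral_nonneg fun a => sq_nonneg _
    rw [h1] at hint
    linarith
  have hae : (fun a => (min (h a) 0)^2) =ᵐ[μ] 0 :=
    (integral_eq_zero_iff_of_nonneg (fun a => sq_nonneg _) hInt2).mp hz
  rw [← Lp.coeFn_nonneg]
  filter_upwards [hae] with a ha
  have : min (h a) 0 = 0 := by
    have := sq_eq_zero_iff.mp ha
    exact this
  exact min_eq_right_iff.mp this

lemma Pos.adjoint {A : Lp ℝ 2 μ →L[ℝ] Lp ℝ 2 μ} (hA : Pos A) :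
    Pos (ContinuousLinearMap.adjoint A) := fun f hf =>
  nonneg_of_forall_inner fun g hg => by
    rw [ContinuousLinearMap.adjoint_inner_left]
    exact inner_nonneg hf (hA g hg)

lemma Pos.norm_le {S T : Lp ℝ 2 μ →L[ℝ] Lp ℝ 2 μ} (hS : Pos S) (hTS : Pos (T - S)) :
    ‖S‖ ≤ ‖T‖ := by
  have hT : Pos T := fun f hf => by
    have h1 := add_nonneg (hTS f hf) (hS f hf)
    rwa [ContinuousLinearMap.sub_apply, sub_add_cancel] at h1
  refine ContinuousLinearMap.opNorm_le_bound _ (norm_nonneg T) fun f => ?_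
  have habs : (0 : Lp ℝ 2 μ) ≤ |f| := abs_nonneg f
  have e1 : S f ≤ S |f| := by
    have h1 := hS (|f| - f) (by simpa [sub_nonneg] using le_abs_self f)
    rwa [map_sub, sub_nonneg] at h1
  have e2 : -(S f) ≤ S |f| := by
    have h1 := hS (|f| + f) (by
      have h2 := le_abs_self (-f)
      rw [abs_neg] at h2
      rwa [← sub_neg_eq_add, sub_nonneg])
    rw [map_add] at h1
    rwa [← sub_neg_eq_add, sub_nonneg] at h1
  have e3 : S |f| ≤ T |f| := by
    have h1 := hTS |f| habs
    rwa [ContinuousLinearMap.sub_apply, sub_nonneg] at h1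
  have e4 : |S f| ≤ T (|f|) := (abs_le'.mpr ⟨e1.trans e3, e2.trans e3⟩)
  have e5 : |S f| ≤ |(T (|f|))| := by rwa [abs_of_nonneg (hT _ habs)]
  calc ‖S f‖ ≤ ‖T (|f|)‖ := norm_le_norm_of_abs_le_abs (by simpa [abs_abs] using e5)
    _ ≤ ‖T‖ * ‖(|f| : Lp ℝ 2 μ)‖ := T.le_opNorm _
    _ = ‖T‖ * ‖f‖ := by rw [norm_abs_eq_norm]

lemma pos_of_tendsto {ι : Type*} {l : Filter ι} [l.NeBot] {F : ι → Lp ℝ 2 μ →L[ℝ] Lp ℝ 2 μ}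
    {T : Lp ℝ 2 μ →L[ℝ] Lp ℝ 2 μ} (h : Filter.Tendsto F l (nhds T))
    (hF : ∀ᶠ i in l, Pos (F i)) : Pos T := fun f hf => by
  have happ : Filter.Tendsto (fun i => F i f) l (nhds (T f)) :=
    ((ContinuousLinearMap.apply ℝ (Lp ℝ 2 μ) f).continuous.tendsto T).comp h
  exact le_of_tendsto_of_tendsto tendsto_const_nhds happ
    (hF.mono fun i hi => hi f hf)

lemma pos_tsum {F : ℕ → Lp ℝ 2 μ →L[ℝ] Lp ℝ 2 μ} (hsum : Summable F)
    (hF : ∀ n, Pos (F n)) : Pos (∑' n, F n) := fun f hf => by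
  have heval : (∑' n, F n) f = ∑' n, F n f := by
    exact (ContinuousLinearMap.apply ℝ (Lp ℝ 2 μ) f).map_tsum hsum
  rw [heval]
  exact tsum_nonneg fun n => hF n f hf

end SelfCommAux

namespace SelfCommAux

variable {Ω : Type*} [MeasurableSpace Ω] {μ : Measure Ω}

local notation "E" => Lp ℝ 2 μ →L[ℝ] Lp ℝ 2 μ

lemma pos_inverse_of_norm_lt {A : E} (hA : Pos A) {lam : ℝ} (h : ‖A‖ < lam) :
    Pos (Ring.inverse (algebraMap ℝ (Lp ℝ 2 μ →L[ℝ] Lp ℝ 2 μ) lam - A)) := by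
  have hlam : 0 < lam := lt_of_le_of_lt (norm_nonneg A) h
  set t : E := lam⁻¹ • A with htdef
  have ht : ‖t‖ < 1 := by
    refine lt_of_le_of_lt (norm_smul_le lam⁻¹ A) ?_
    rw [norm_inv, Real.norm_of_nonneg hlam.le, inv_mul_lt_iff₀ hlam, mul_one]
    exact h
  have hval : algebraMap ℝ (Lp ℝ 2 μ →L[ℝ] Lp ℝ 2 μ) lam - A = lam • ((1 : E) - t) := by
    rw [smul_sub, htdef, smul_smul, mul_inv_cancel₀ hlam.ne', one_smul,
      Algebra.algebraMap_eq_smul_one]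
  have hsummable : Summable fun n : ℕ => t ^ n := summable_geometric_of_norm_lt_one ht
  -- explicit unit
  set u : (Lp ℝ 2 μ →L[ℝ] Lp ℝ 2 μ)ˣ :=
    { val := algebraMap ℝ (Lp ℝ 2 μ →L[ℝ] Lp ℝ 2 μ) lam - A
      inv := lam⁻¹ • ∑' n : ℕ, t ^ n
      val_inv := by
        rw [hval, smul_mul_smul_comm, mul_inv_cancel₀ hlam.ne',
          mul_neg_geom_series t ht, one_smul]
      inv_val := by
        rw [hval, smul_mul_smul_comm, inv_mul_cancel₀ hlam.ne',
          geom_series_mul_neg t ht, one_smul] } with hudef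
  have : Ring.inverse (algebraMap ℝ (Lp ℝ 2 μ →L[ℝ] Lp ℝ 2 μ) lam - A) = ↑u⁻¹ := by
    rw [← Ring.inverse_unit u]
  rw [this]
  show Pos (lam⁻¹ • ∑' n : ℕ, t ^ n)
  exact Pos.smul (inv_nonneg.mpr hlam.le)
    (pos_tsum hsummable fun n => (Pos.smul (inv_nonneg.mpr hlam.le) hA).pow n)

lemma pos_pow_le_smul_inv {A B : E} (hA : Pos A) (hB : Pos B) {lam : ℝ} (hl : 0 < lam)
    (h1 : B * (algebraMap ℝ (Lp ℝ 2 μ →L[ℝ] Lp ℝ 2 μ) lam - A) = 1)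
    (h2 : (algebraMap ℝ (Lp ℝ 2 μ →L[ℝ] Lp ℝ 2 μ) lam - A) * B = 1) :
    ∀ n : ℕ, Pos (lam ^ (n + 1) • B - A ^ n) := by
  have halg : algebraMap ℝ (Lp ℝ 2 μ →L[ℝ] Lp ℝ 2 μ) lam = lam • (1 : E) :=
    Algebra.algebraMap_eq_smul_one lam
  have hlamB : lam • B = 1 + B * A := by
    have h' := h1
    rw [mul_sub, halg, mul_smul_comm, mul_one] at h'
    rw [← h']
    abel
  have hAB : A * B = B * A := by
    have e1 := h1
    have e2 := h2
    rw [mul_sub, halg, mul_smul_comm, mul_one] at e1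
    rw [sub_mul, halg, smul_mul_assoc, one_mul] at e2
    have h3 : lam • B - B * A = lam • B - A * B := by rw [e1, e2]
    exact (sub_right_inj.mp h3).symm
  intro n
  induction n with
  | zero =>
      have : lam ^ (0 + 1) • B - A ^ 0 = B * A := by
        rw [pow_one, pow_zero, hlamB]
        abel
      rw [this]
      exact hB.mul hA
  | succ n ih =>
      have key : lam ^ (n + 2) • B - A ^ (n + 1)
          = lam ^ (n + 1) • (1 : E) + A * (lam ^ (n + 1) • B - A ^ n) := by
        rw [mul_sub, mul_smul_comm, hAB, pow_succ' A]
        have : lam ^ (n + 2) • B = lam ^ (n + 1) • (1 + B * A) := by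
          rw [← hlamB, smul_smul, ← pow_succ]
        rw [this, smul_add]
        abel
      rw [key]
      exact (Pos.smul (pow_nonneg hl.le _) Pos.one).add (hA.mul ih)

end SelfCommAux
namespace SelfCommAux

variable {Ω : Type*} [MeasurableSpace Ω] {μ : Measure Ω}

lemma norm_mem_spectrum {A : Lp ℝ 2 μ →L[ℝ] Lp ℝ 2 μ} (hA : Pos A)
    (hpow : ∀ n : ℕ, 1 ≤ n → ‖A‖ ^ n ≤ ‖A ^ n‖) (hA0 : A ≠ 0) :
    (‖A‖ : ℝ) ∈ spectrum ℝ A := by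
  by_contra hr
  rw [spectrum.notMem_iff] at hr
  obtain ⟨u, hu⟩ := hr
  have hrpos : 0 < ‖A‖ := norm_pos_iff.mpr hA0
  set r := ‖A‖ with hrdef
  set B : Lp ℝ 2 μ →L[ℝ] Lp ℝ 2 μ := ↑u⁻¹ with hBdef
  have huB : (algebraMap ℝ (Lp ℝ 2 μ →L[ℝ] Lp ℝ 2 μ) r - A) * B = 1 := by
    rw [← hu]; exact u.mul_inv
  have hone : (1 : Lp ℝ 2 μ →L[ℝ] Lp ℝ 2 μ) ≠ 0 := by
    intro h1
    apply hA0
    calc A = A * 1 := (mul_one A).symm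
      _ = 0 := by rw [h1, mul_zero]
  have hBne : B ≠ 0 := by
    intro h0
    rw [h0, mul_zero] at huB
    exact hone huB.symm
  have hBnorm : 0 < ‖B‖ := norm_pos_iff.mpr hBne
  -- B is a positive operator, as a limit of resolvents from the right
  have hBpos : Pos B := by
    have hg : Continuous fun lam : ℝ => algebraMap ℝ (Lp ℝ 2 μ →L[ℝ] Lp ℝ 2 μ) lam - A :=
      (continuous_algebraMap ℝ _).sub continuous_const
    have h1 : Filter.Tendsto (fun lam : ℝ => algebraMap ℝ (Lp ℝ 2 μ →L[ℝ] Lp ℝ 2 μ) lam - A)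
        (nhds r) (nhds ↑u) := by
      have := hg.tendsto r
      rwa [← hu] at this
    have h2 := (NormedRing.inverse_continuousAt u).tendsto.comp h1
    rw [Ring.inverse_unit] at h2
    have hcont : Filter.Tendsto
        (fun lam : ℝ => Ring.inverse (algebraMap ℝ (Lp ℝ 2 μ →L[ℝ] Lp ℝ 2 μ) lam - A))
        (nhdsWithin r (Set.Ioi r)) (nhds B) := h2.mono_left nhdsWithin_le_nhds
    refine pos_of_tendsto hcont ?_
    refine eventually_nhdsWithin_of_forall fun lam hlam => ?_
    exact pos_inverse_of_norm_lt hA hlam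
  -- now produce a positive resolvent strictly below the norm
  set ε : ℝ := min (r / 2) ((2 * ‖B‖)⁻¹) with hεdef
  have hε : 0 < ε := lt_min (by positivity) (by positivity)
  set lam : ℝ := r - ε with hlamdef
  have hεr : ε ≤ r / 2 := min_le_left _ _
  have hlam : 0 < lam := by rw [hlamdef]; linarith
  have hlamr : lam < r := by rw [hlamdef]; linarith
  have hεB : ‖ε • B‖ < 1 := by
    refine lt_of_le_of_lt (norm_smul_le ε B) ?_
    have h3 : ε ≤ (2 * ‖B‖)⁻¹ := min_le_right _ _
    rw [Real.norm_of_nonneg hε.le]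
    calc ε * ‖B‖ ≤ (2 * ‖B‖)⁻¹ * ‖B‖ :=
          mul_le_mul_of_nonneg_right h3 (norm_nonneg B)
      _ = 2⁻¹ := by field_simp
      _ < 1 := by norm_num
  set v := Units.oneSub (ε • B) hεB with hvdef
  have hval : (↑(u * v) : Lp ℝ 2 μ →L[ℝ] Lp ℝ 2 μ)
      = algebraMap ℝ (Lp ℝ 2 μ →L[ℝ] Lp ℝ 2 μ) lam - A := by
    rw [Units.val_mul, hvdef, Units.val_oneSub, mul_sub, mul_one, mul_smul_comm]
    have huu : (↑u : Lp ℝ 2 μ →L[ℝ] Lp ℝ 2 μ) * B = 1 := u.mul_inv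
    rw [huu, hu, hlamdef, map_sub, Algebra.algebraMap_eq_smul_one ε]
    abel
  set B' : Lp ℝ 2 μ →L[ℝ] Lp ℝ 2 μ := ↑(u * v)⁻¹ with hB'def
  have hB'eq : B' = (∑' n : ℕ, (ε • B) ^ n) * B := by
    rw [hB'def, mul_inv_rev, Units.val_mul]
    congr 1
  have hB'pos : Pos B' := by
    rw [hB'eq]
    exact Pos.mul
      (pos_tsum (summable_geometric_of_norm_lt_one hεB)
        fun n => (hBpos.smul hε.le).pow n) hBpos
  have hkey := pos_pow_le_smul_inv hA hB'pos hlam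
    (by rw [← hval]; exact (u * v).inv_mul)
    (by rw [← hval]; exact (u * v).mul_inv)
  have hnormB' : ∀ n : ℕ, 1 ≤ n → r ^ n ≤ lam ^ (n + 1) * ‖B'‖ := by
    intro n hn
    have h1 : ‖A ^ n‖ ≤ ‖lam ^ (n + 1) • B'‖ := Pos.norm_le (hA.pow n) (hkey n)
    have h2 : ‖lam ^ (n + 1) • B'‖ ≤ lam ^ (n + 1) * ‖B'‖ := by
      refine le_trans (norm_smul_le (lam ^ (n + 1)) B') ?_
      rw [Real.norm_of_nonneg (pow_nonneg hlam.le _)]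
    calc r ^ n ≤ ‖A ^ n‖ := hpow n hn
      _ ≤ lam ^ (n + 1) * ‖B'‖ := h1.trans h2
  have hone_lt : (1 : ℝ) < r / lam := (one_lt_div hlam).mpr hlamr
  obtain ⟨n, hn⟩ := pow_unbounded_of_one_lt (lam * ‖B'‖) hone_lt
  have h2 := hnormB' (n + 1) (by omega)
  have h3 : (r / lam) ^ (n + 1) ≤ lam * ‖B'‖ := by
    rw [div_pow, div_le_iff₀ (pow_pos hlam _)]
    calc r ^ (n + 1) ≤ lam ^ (n + 2) * ‖B'‖ := h2
      _ = lam * ‖B'‖ * lam ^ (n + 1) := by ring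
  have h4 : lam * ‖B'‖ < (r / lam) ^ (n + 1) :=
    lt_of_lt_of_le hn (pow_le_pow_right₀ hone_lt.le (by omega))
  linarith

end SelfCommAux
namespace SelfCommAux

variable {Ω : Type*} [MeasurableSpace Ω] {μ : Measure Ω}

lemma norm_star_mul_self'' (B : Lp ℝ 2 μ →L[ℝ] Lp ℝ 2 μ) : ‖star B * B‖ = ‖B‖ * ‖B‖ := by
  rw [ContinuousLinearMap.star_eq_adjoint, ContinuousLinearMap.mul_def]
  exact ContinuousLinearMap.norm_adjoint_comp_self B

lemma norm_star'' (B : Lp ℝ 2 μ →L[ℝ] Lp ℝ 2 μ) : ‖star B‖ = ‖B‖ := by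
  rw [ContinuousLinearMap.star_eq_adjoint]
  exact (ContinuousLinearMap.adjoint : (Lp ℝ 2 μ →L[ℝ] Lp ℝ 2 μ) ≃ₗᵢ⋆[ℝ]
    (Lp ℝ 2 μ →L[ℝ] Lp ℝ 2 μ)).norm_map B

lemma part1 {A : Lp ℝ 2 μ →L[ℝ] Lp ℝ 2 μ} (hA : Pos A)
    (hC : Pos (star A * A - A * star A)) :
    ∀ n : ℕ, Pos ((star A) ^ n * A ^ n - (star A * A) ^ n) := by
  have hA' : Pos (star A) := by
    rw [ContinuousLinearMap.star_eq_adjoint]; exact hA.adjoint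
  have hD : ∀ n : ℕ, Pos ((star A * A) ^ n - (A * star A) ^ n) := by
    intro n
    induction n with
    | zero => simpa using (Pos.zero : Pos (0 : Lp ℝ 2 μ →L[ℝ] Lp ℝ 2 μ))
    | succ n ih =>
        have key : (star A * A) ^ (n + 1) - (A * star A) ^ (n + 1)
            = (star A * A) * ((star A * A) ^ n - (A * star A) ^ n)
              + (star A * A - A * star A) * (A * star A) ^ n := by
          rw [pow_succ' (star A * A), pow_succ' (A * star A)]
          noncomm_ring
        rw [key]
        exact ((hA'.mul hA).mul ih).add (hC.mul ((hA.mul hA').pow n))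
  have hsemi : ∀ n : ℕ, A * (star A * A) ^ n = (A * star A) ^ n * A := by
    intro n
    have h : SemiconjBy A (star A * A) (A * star A) := (mul_assoc A (star A) A).symm
    exact h.pow_right n
  intro n
  induction n with
  | zero => simpa using (Pos.zero : Pos (0 : Lp ℝ 2 μ →L[ℝ] Lp ℝ 2 μ))
  | succ n ih =>
      have key : (star A) ^ (n + 1) * A ^ (n + 1) - (star A * A) ^ (n + 1)
          = star A * (((star A) ^ n * A ^ n - (star A * A) ^ n) * A)
            + star A * (((star A * A) ^ n - (A * star A) ^ n) * A) := by
        have h1 : (star A * A) ^ (n + 1) = star A * ((A * star A) ^ n * A) := by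
          rw [pow_succ' (star A * A), ← hsemi n]
          noncomm_ring
        rw [pow_succ' (star A), pow_succ A, h1]
        noncomm_ring
      rw [key]
      exact (hA'.mul (ih.mul hA)).add (hA'.mul ((hD n).mul hA))

lemma sa_norm_pow_le {x : Lp ℝ 2 μ →L[ℝ] Lp ℝ 2 μ} (hx : IsSelfAdjoint x) :
    ∀ n : ℕ, 1 ≤ n → ‖x‖ ^ n ≤ ‖x ^ n‖ := by
  intro n hn
  rcases eq_or_ne ‖x‖ 0 with h0 | h0
  · have hx0 : x = 0 := norm_eq_zero.mp h0
    rw [hx0, norm_zero, zero_pow (by omega : n ≠ 0), zero_pow (by omega : n ≠ 0), norm_zero]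
  have hxpos : 0 < ‖x‖ := (norm_nonneg x).lt_of_ne' h0
  have h2 : ∀ k : ℕ, ‖x ^ 2 ^ k‖ = ‖x‖ ^ 2 ^ k := by
    intro k
    induction k with
    | zero => simp
    | succ k ih =>
        have hsa : IsSelfAdjoint (x ^ 2 ^ k) := hx.pow _
        have hsplit : x ^ 2 ^ (k + 1) = x ^ 2 ^ k * x ^ 2 ^ k := by
          rw [← pow_add]; congr 1; ring
        rw [hsplit]
        calc ‖x ^ 2 ^ k * x ^ 2 ^ k‖ = ‖star (x ^ 2 ^ k) * x ^ 2 ^ k‖ := by rw [hsa.star_eq]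
          _ = ‖x ^ 2 ^ k‖ * ‖x ^ 2 ^ k‖ := norm_star_mul_self'' _
          _ = ‖x‖ ^ 2 ^ (k + 1) := by rw [ih, ← pow_add]; congr 1; ring
  have hlt : n < 2 ^ n := Nat.lt_two_pow_self
  set m := 2 ^ n - n with hm
  have hm1 : 1 ≤ m := by omega
  have hnm : n + m = 2 ^ n := by omega
  have h3 : ‖x‖ ^ n * ‖x‖ ^ m ≤ ‖x ^ n‖ * ‖x‖ ^ m := by
    calc ‖x‖ ^ n * ‖x‖ ^ m = ‖x‖ ^ 2 ^ n := by rw [← pow_add, hnm]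
      _ = ‖x ^ 2 ^ n‖ := (h2 n).symm
      _ = ‖x ^ n * x ^ m‖ := by rw [← pow_add, hnm]
      _ ≤ ‖x ^ n‖ * ‖x ^ m‖ := norm_mul_le _ _
      _ ≤ ‖x ^ n‖ * ‖x‖ ^ m :=
          mul_le_mul_of_nonneg_left (norm_pow_le' x (by omega)) (norm_nonneg _)
  exact le_of_mul_le_mul_right h3 (pow_pos hxpos m)

end SelfCommAux


open SelfCommAux in
/-- If `A` is a positive operator on the Hilbert lattice `L²(μ; ℝ)` with positive self-commutator
`A*A - AA*`, then `(A*)ⁿAⁿ - (A*A)ⁿ` is a positive operator for every positive integer `n`, and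
the spectral radius satisfies `r(A*A) ≤ r(A)²`. -/
theorem positive_selfCommutator_powers_and_spectralRadius
    {Ω : Type*} [MeasurableSpace Ω] (μ : Measure Ω)
    (A : Lp ℝ 2 μ →L[ℝ] Lp ℝ 2 μ)
    (hA_pos : ∀ f : Lp ℝ 2 μ, 0 ≤ f → 0 ≤ A f)
    (hC_pos : ∀ f : Lp ℝ 2 μ, 0 ≤ f → 0 ≤ (adjoint A ∘L A - A ∘L adjoint A) f) :
    (∀ n : ℕ, 1 ≤ n →
      ∀ f : Lp ℝ 2 μ, 0 ≤ f → 0 ≤ (((adjoint A) ^ n) ∘L (A ^ n) - (adjoint A ∘L A) ^ n) f) ∧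
    spectralRadius ℝ (adjoint A ∘L A) ≤ (spectralRadius ℝ A) ^ 2 := by
  
  have hA : Pos A := hA_pos
  have hC : Pos (star A * A - A * star A) := by
    simp only [ContinuousLinearMap.star_eq_adjoint, ContinuousLinearMap.mul_def]
    exact hC_pos
  have hA' : Pos (star A) := by
    rw [ContinuousLinearMap.star_eq_adjoint]; exact hA.adjoint
  have hpart1 := part1 hA hC
  constructor
  · intro n _ f hf
    have h := hpart1 n f hf
    simpa only [ContinuousLinearMap.star_eq_adjoint, ContinuousLinearMap.mul_def] using h
  by_cases hA0 : A = 0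
  · subst hA0
    rw [ContinuousLinearMap.comp_zero, spectrum.spectralRadius_zero]
    exact zero_le
  have hnormpow : ∀ n : ℕ, 1 ≤ n → ‖A‖ ^ n ≤ ‖A ^ n‖ := by
    intro n hn
    have hx : IsSelfAdjoint (star A * A) := IsSelfAdjoint.star_mul_self A
    have c1 : ‖star A * A‖ = ‖A‖ * ‖A‖ := norm_star_mul_self'' A
    have c2 := sa_norm_pow_le hx n hn
    have c3 : ‖(star A * A) ^ n‖ ≤ ‖(star A) ^ n * A ^ n‖ :=
      Pos.norm_le ((hA'.mul hA).pow n) (hpart1 n)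
    have c4 : ‖(star A) ^ n * A ^ n‖ ≤ ‖A ^ n‖ * ‖A ^ n‖ := by
      calc ‖(star A) ^ n * A ^ n‖ ≤ ‖(star A) ^ n‖ * ‖A ^ n‖ := norm_mul_le _ _
        _ = ‖A ^ n‖ * ‖A ^ n‖ := by rw [← star_pow, norm_star'' (A ^ n)]
    have c5 : (‖A‖ ^ n) ^ 2 ≤ ‖A ^ n‖ ^ 2 := by
      calc (‖A‖ ^ n) ^ 2 = (‖A‖ * ‖A‖) ^ n := by ring
        _ = ‖star A * A‖ ^ n := by rw [c1]
        _ ≤ ‖(star A * A) ^ n‖ := c2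
        _ ≤ ‖A ^ n‖ * ‖A ^ n‖ := c3.trans c4
        _ = ‖A ^ n‖ ^ 2 := (sq _).symm
    exact (pow_le_pow_iff_left₀ (by positivity) (norm_nonneg _) (by norm_num)).mp c5
  have hmem := norm_mem_spectrum hA hnormpow hA0
  haveI : Nontrivial (Lp ℝ 2 μ) := by
    by_contra hcon
    rw [not_nontrivial_iff_subsingleton] at hcon
    exact hA0 (ContinuousLinearMap.ext fun f => Subsingleton.elim _ _)
  have le1 : (‖A‖₊ : ℝ≥0∞) ≤ spectralRadius ℝ A := by
    have h := le_iSup₂ (f := fun k (_ : k ∈ spectrum ℝ A) => (‖k‖₊ : ℝ≥0∞)) (‖A‖ : ℝ) hmem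
    simpa [spectralRadius, nnnorm_norm] using h
  have le2 : spectralRadius ℝ (adjoint A ∘L A) ≤ (‖adjoint A ∘L A‖₊ : ℝ≥0∞) :=
    spectrum.spectralRadius_le_nnnorm _
  have eq3 : ‖adjoint A ∘L A‖₊ = ‖A‖₊ * ‖A‖₊ := by
    apply NNReal.coe_injective
    push_cast
    exact ContinuousLinearMap.norm_adjoint_comp_self A
  calc spectralRadius ℝ (adjoint A ∘L A) ≤ (‖adjoint A ∘L A‖₊ : ℝ≥0∞) := le2
    _ = (‖A‖₊ : ℝ≥0∞) * (‖A‖₊ : ℝ≥0∞) := by rw [eq3, ENNReal.coe_mul]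
    _ ≤ spectralRadius ℝ A * spectralRadius ℝ A := mul_le_mul' le1 le1
    _ = (spectralRadius ℝ A) ^ 2 := (sq _).symm
end

section
/- Let d : ℕ → ℝ be a bounded sequence with dₙ ≥ 0 for all n, and let D be the bounded diagonal operator on ℓ² given by (D x)ₙ = dₙ xₙ. Then there exists a positive bounded linear operator X : ℓ² → L²[0,1] such that X* ∘ X = D, and there exists a positive self-adjoint bounded linear operator Y on L²[0,1] such that Y ∘ Y = X ∘ X*. -/
open MeasureTheory ContinuousLinearMap Set
open scoped ENNReal

noncomputable section DiagAux
namespace DiagAux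

abbrev Ω : Type := Set.Icc (0:ℝ) 1
abbrev E : Type := Lp ℝ 2 (volume : Measure Ω)
abbrev H : Type := lp (fun _ : ℕ => ℝ) 2

def a (n : ℕ) : ℝ := 1 - (2:ℝ)⁻¹ ^ n

lemma a_mono : Monotone a := fun m n h => by
  have := pow_le_pow_of_le_one (by norm_num : (0:ℝ) ≤ 2⁻¹) (by norm_num) h
  simp only [a]; linarith

lemma a_nonneg (n : ℕ) : 0 ≤ a n := by
  have : (2:ℝ)⁻¹ ^ n ≤ 1 := pow_le_one₀ (by norm_num) (by norm_num)
  simp only [a]; linarith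

lemma a_le_one (n : ℕ) : a n ≤ 1 := by
  have : (0:ℝ) ≤ 2⁻¹ ^ n := by positivity
  simp only [a]; linarith

def I (n : ℕ) : Set Ω := Subtype.val ⁻¹' Set.Ico (a n) (a (n+1))

lemma I_meas (n : ℕ) : MeasurableSet (I n) :=
  measurableSet_Ico.preimage measurable_subtype_coe

lemma I_vol (n : ℕ) : (volume : Measure Ω) (I n) = ENNReal.ofReal ((2:ℝ)⁻¹ ^ (n+1)) := by
  rw [I, volume_preimage_coe measurableSet_Icc.nullMeasurableSet measurableSet_Ico]
  have hsub : Set.Ico (a n) (a (n+1)) ⊆ Set.Icc (0:ℝ) 1 := fun x hx =>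
    ⟨le_trans (a_nonneg n) hx.1, le_trans hx.2.le (a_le_one (n+1))⟩
  rw [Set.inter_eq_left.mpr hsub, Real.volume_Ico]
  congr 1
  simp only [a, pow_succ]
  ring

lemma I_fin (n : ℕ) : (volume : Measure Ω) (I n) ≠ ⊤ := by
  rw [I_vol]; exact ENNReal.ofReal_ne_top

lemma I_disj {m n : ℕ} (h : m ≠ n) : Disjoint (I m) (I n) := by
  have key : ∀ {m n : ℕ}, m < n → Disjoint (Set.Ico (a m) (a (m+1))) (Set.Ico (a n) (a (n+1))) := by
    intro m n hmn
    rw [Set.Ico_disjoint_Ico]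
    exact le_trans (min_le_left _ _) (le_trans (a_mono hmn) (le_max_right _ _))
  rcases h.lt_or_gt with hmn | hmn
  · exact Disjoint.preimage _ (key hmn)
  · exact (Disjoint.preimage _ (key hmn)).symm

def c (n : ℕ) : ℝ := Real.sqrt ((2:ℝ) ^ (n+1))

lemma c_nonneg (n : ℕ) : 0 ≤ c n := Real.sqrt_nonneg _

def φ (n : ℕ) : E := indicatorConstLp 2 (I_meas n) (I_fin n) (c n)

lemma φ_nonneg (n : ℕ) : 0 ≤ φ n := by
  rw [← Lp.coeFn_nonneg]
  simp only [φ]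
  filter_upwards [indicatorConstLp_coeFn (p := 2) (hs := I_meas n) (hμs := I_fin n) (c := c n)]
    with x hx
  rw [Pi.zero_apply, hx]
  exact Set.indicator_nonneg (fun _ _ => c_nonneg n) x

lemma inner_φ (n : ℕ) (f : E) :
    (inner ℝ (φ n) f : ℝ) = ∫ x in I n, c n * f x ∂(volume : Measure Ω) := by
  rw [φ, MeasureTheory.L2.inner_indicatorConstLp_eq_setIntegral_inner]
  simp [RCLike.inner_apply]
  exact setIntegral_congr_fun (I_meas n) (fun x _ => mul_comm _ _)

lemma inner_φ_φ (m n : ℕ) : (inner ℝ (φ m) (φ n) : ℝ) = if m = n then 1 else 0 := by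
  rw [inner_φ]
  simp only [φ]
  rw [MeasureTheory.integral_const_mul,
    setIntegral_indicatorConstLp (I_meas m) (I_meas n) (I_fin n) (c n)]
  by_cases h : m = n
  · subst h
    rw [Set.inter_self, measureReal_def, I_vol, if_pos rfl]
    rw [ENNReal.toReal_ofReal (by positivity)]
    rw [smul_eq_mul]
    have hc : c m * c m = (2:ℝ) ^ (m+1) := Real.mul_self_sqrt (by positivity)
    calc c m * ((2:ℝ)⁻¹ ^ (m+1) * c m) = (c m * c m) * (2:ℝ)⁻¹ ^ (m+1) := by ring
    _ = (2 * 2⁻¹ : ℝ) ^ (m+1) := by rw [hc, ← mul_pow]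
    _ = 1 := by norm_num
  · rw [if_neg h, Set.disjoint_iff_inter_eq_empty.mp (I_disj (Ne.symm h)), measureReal_def, measure_empty]
    simp

lemma φ_orthonormal : Orthonormal ℝ φ := by
  rw [orthonormal_iff_ite]
  intro i j
  exact inner_φ_φ i j


def J : H →ₗᵢ[ℝ] E := (φ_orthonormal.orthogonalFamily).linearIsometry

def Jc : H →L[ℝ] E := J.toContinuousLinearMap

lemma Jc_hasSum (x : H) : HasSum (fun n => x n • φ n) (Jc x) := by
  have := (φ_orthonormal.orthogonalFamily).hasSum_linearIsometry x
  simpa [LinearIsometry.toSpanSingleton_apply, Jc, J] using this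

lemma smul_φ_nonneg {t : ℝ} (ht : 0 ≤ t) (n : ℕ) : 0 ≤ t • φ n := by
  rw [← Lp.coeFn_nonneg]
  filter_upwards [Lp.coeFn_smul t (φ n), (Lp.coeFn_nonneg (φ n)).2 (φ_nonneg n)] with x hx h0
  rw [hx]
  exact mul_nonneg ht h0

lemma Jc_pos (x : H) (hx : ∀ n, 0 ≤ x n) : 0 ≤ Jc x :=
  hasSum_le (fun n => smul_φ_nonneg (hx n) n) hasSum_zero (Jc_hasSum x)

lemma Jc_single (n : ℕ) (t : ℝ) : Jc (lp.single 2 n t) = t • φ n := by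
  have := (φ_orthonormal.orthogonalFamily).linearIsometry_apply_single (i := n) t
  simpa [LinearIsometry.toSpanSingleton_apply, Jc, J] using this

lemma Jc_adjoint_coord (f : E) (n : ℕ) : (adjoint Jc f) n = (inner ℝ (φ n) f : ℝ) := by
  have h1 : (adjoint Jc f) n = (inner ℝ (lp.single 2 n (1:ℝ)) (adjoint Jc f) : ℝ) := by
    rw [lp.inner_single_left]
    simp [RCLike.inner_apply]
  rw [h1, adjoint_inner_right, Jc_single, one_smul]

lemma Jc_adjoint_pos (f : E) (hf : 0 ≤ f) (n : ℕ) : 0 ≤ (adjoint Jc f) n := by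
  rw [Jc_adjoint_coord, inner_φ]
  refine integral_nonneg_of_ae ?_
  filter_upwards [ae_restrict_of_ae ((Lp.coeFn_nonneg f).2 hf)] with x h0
  exact mul_nonneg (c_nonneg n) h0

lemma Jc_adjoint_comp : adjoint Jc ∘L Jc = ContinuousLinearMap.id ℝ H := by
  refine ContinuousLinearMap.ext fun x => ?_
  refine ext_inner_right ℝ fun y => ?_
  rw [ContinuousLinearMap.comp_apply, adjoint_inner_left]
  exact J.inner_map_map x y


lemma rpow_toReal_two (x : ℝ) : x ^ (2:ℝ≥0∞).toReal = x ^ (2:ℕ) := by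
  rw [show ((2:ℝ≥0∞).toReal) = ((2:ℕ):ℝ) by norm_num, Real.rpow_natCast]

lemma toReal_two_pos : 0 < (2:ℝ≥0∞).toReal := by norm_num

lemma exists_diag (s : ℕ → ℝ) (C : ℝ) (hC : 0 ≤ C) (hs : ∀ n, ‖s n‖ ≤ C) :
    ∃ T : H →L[ℝ] H, ∀ (x : H) (n : ℕ), T x n = s n * x n := by
  have hmem : ∀ x : H, Memℓp (fun n => s n * x n) 2 := by
    intro x
    apply memℓp_gen
    have hsum := (lp.memℓp x).summable toReal_two_pos
    refine Summable.of_nonneg_of_le (fun n => by positivity)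
      (fun n => ?_) (hsum.mul_left (C ^ (2:ℕ)))
    simp only [rpow_toReal_two, norm_mul, mul_pow]
    have h1 : ‖s n‖ ^ (2:ℕ) ≤ C ^ (2:ℕ) := pow_le_pow_left₀ (norm_nonneg _) (hs n) 2
    have h2 : (0:ℝ) ≤ ‖x n‖ ^ (2:ℕ) := by positivity
    exact mul_le_mul_of_nonneg_right h1 h2
  let L : H →ₗ[ℝ] H :=
    { toFun := fun x => ⟨fun n => s n * x n, hmem x⟩
      map_add' := fun x y => by
        apply lp.ext
        funext n
        simp only [lp.coeFn_add, Pi.add_apply]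
        show s n * (x + y) n = s n * x n + s n * y n
        rw [lp.coeFn_add, Pi.add_apply]
        ring
      map_smul' := fun r x => by
        apply lp.ext
        funext n
        show s n * (r • x) n =
          (r • (⟨fun n => s n * x n, hmem x⟩ : lp (fun _ : ℕ => ℝ) 2)) n
        rw [lp.coeFn_smul, Pi.smul_apply, lp.coeFn_smul, Pi.smul_apply]
        show s n * (r * x n) = r * (s n * x n)
        ring }
  refine ⟨L.mkContinuous C (fun x => ?_), fun x n => rfl⟩
  apply lp.norm_le_of_forall_sum_le toReal_two_pos (mul_nonneg hC (norm_nonneg x))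
  intro F
  have hb := lp.sum_rpow_le_norm_rpow toReal_two_pos x F
  simp only [rpow_toReal_two] at hb ⊢
  have hptwise : ∀ n ∈ F, ‖(L x) n‖ ^ (2:ℕ) ≤ C ^ (2:ℕ) * ‖x n‖ ^ (2:ℕ) := by
    intro n _
    show ‖s n * x n‖ ^ (2:ℕ) ≤ _
    rw [norm_mul, mul_pow]
    exact mul_le_mul_of_nonneg_right (pow_le_pow_left₀ (norm_nonneg _) (hs n) 2) (by positivity)
  calc ∑ n ∈ F, ‖(L x) n‖ ^ (2:ℕ) ≤ ∑ n ∈ F, C ^ (2:ℕ) * ‖x n‖ ^ (2:ℕ) :=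
        Finset.sum_le_sum hptwise
  _ = C ^ (2:ℕ) * ∑ n ∈ F, ‖x n‖ ^ (2:ℕ) := by rw [Finset.mul_sum]
  _ ≤ C ^ (2:ℕ) * ‖x‖ ^ (2:ℕ) := mul_le_mul_of_nonneg_left hb (by positivity)
  _ = (C * ‖x‖) ^ (2:ℕ) := by rw [mul_pow]

end DiagAux

open DiagAux

/-- Every positive bounded diagonal operator `D` on `ℓ²` factors through `L²[0,1]` as `D = X*X`
for some positive operator `X : ℓ² → L²[0,1]`; moreover there is a positive self-adjoint operator
`Y` on `L²[0,1]` with `Y² = XX*`. -/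
theorem diagonal_operator_factors_positively_through_L2
    (d : ℕ → ℝ) (hd_nonneg : ∀ n, 0 ≤ d n) (hd_bdd : ∃ M : ℝ, ∀ n, d n ≤ M)
    (D : lp (fun _ : ℕ => ℝ) 2 →L[ℝ] lp (fun _ : ℕ => ℝ) 2)
    (hD : ∀ (x : lp (fun _ : ℕ => ℝ) 2) (n : ℕ), D x n = d n * x n) :
    ∃ X : lp (fun _ : ℕ => ℝ) 2 →L[ℝ] Lp ℝ 2 (volume : Measure (Set.Icc (0:ℝ) 1)),
      (∀ x : lp (fun _ : ℕ => ℝ) 2, (∀ n, 0 ≤ x n) → 0 ≤ X x) ∧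
      adjoint X ∘L X = D ∧
      ∃ Y : Lp ℝ 2 (volume : Measure (Set.Icc (0:ℝ) 1)) →L[ℝ]
          Lp ℝ 2 (volume : Measure (Set.Icc (0:ℝ) 1)),
        (∀ f, 0 ≤ f → 0 ≤ Y f) ∧ adjoint Y = Y ∧ Y ∘L Y = X ∘L adjoint X := by
  classical
  obtain ⟨M, hM⟩ := hd_bdd
  set C := Real.sqrt (max M 0) with hCdef
  have hC0 : 0 ≤ C := Real.sqrt_nonneg _
  have hs_bdd : ∀ n, ‖Real.sqrt (d n)‖ ≤ C := fun n => by
    rw [Real.norm_eq_abs, abs_of_nonneg (Real.sqrt_nonneg _)]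
    exact Real.sqrt_le_sqrt (le_max_of_le_left (hM n))
  obtain ⟨Sc, hSc⟩ := exists_diag (fun n => Real.sqrt (d n)) C hC0 hs_bdd
  have hSpos : ∀ x : H, (∀ n, 0 ≤ x n) → ∀ n, 0 ≤ Sc x n := fun x hx n => by
    rw [hSc]; exact mul_nonneg (Real.sqrt_nonneg _) (hx n)
  have hSadj : adjoint Sc = Sc := by
    have h : Sc = adjoint Sc := (eq_adjoint_iff Sc Sc).mpr (fun x y => by
      rw [lp.inner_eq_tsum, lp.inner_eq_tsum]
      refine tsum_congr fun n => ?_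
      simp only [RCLike.inner_apply, starRingEnd_apply, star_trivial, hSc]
      ring)
    exact h.symm
  have hSS : ∀ x : H, Sc (Sc x) = D x := fun x => lp.ext (funext fun n => by
    rw [hSc, hSc, hD, ← mul_assoc, Real.mul_self_sqrt (hd_nonneg n)])
  have hJJ : ∀ y : H, adjoint Jc (Jc y) = y := fun y => by
    have h := ContinuousLinearMap.ext_iff.mp Jc_adjoint_comp y
    simpa using h
  refine ⟨Jc ∘L Sc, ?_, ?_, Jc ∘L (Sc ∘L adjoint Jc), ?_, ?_, ?_⟩
  · intro x hx
    exact Jc_pos _ (hSpos x hx)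
  · rw [adjoint_comp, hSadj]
    refine ContinuousLinearMap.ext fun x => ?_
    simp only [ContinuousLinearMap.comp_apply]
    rw [hJJ, hSS]
  · intro f hf
    exact Jc_pos _ (hSpos _ (Jc_adjoint_pos f hf))
  · rw [adjoint_comp, adjoint_comp, adjoint_adjoint, hSadj]
    rfl
  · rw [adjoint_comp, hSadj]
    refine ContinuousLinearMap.ext fun f => ?_
    simp only [ContinuousLinearMap.comp_apply]
    rw [hJJ]
end DiagAux
end

section
/- Let n be a positive integer, let d : Fin n → ℝ satisfy dₖ ≥ 0 for all k, and let D be the diagonal operator on the Euclidean space ℝⁿ given by (D x)ₖ = dₖ xₖ. Then there exists a positive bounded linear operator X : ℝⁿ → L²[0,1] such that X* ∘ X = D, and there exists a positive self-adjoint bounded linear operator Y on L²[0,1] such that Y ∘ Y = X ∘ X*. -/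
open MeasureTheory ContinuousLinearMap
open scoped RealInnerProductSpace

namespace DiagL2
noncomputable section

abbrev I01 := Set.Icc (0:ℝ) 1
abbrev μ01 : Measure I01 := volume

variable (n : ℕ)

def S (k : Fin n) : Set I01 := Subtype.val ⁻¹' Set.Ico ((k:ℝ)/n) (((k:ℝ)+1)/n)

lemma measurableSet_S (k : Fin n) : MeasurableSet (S n k) :=
  measurable_subtype_coe measurableSet_Ico

lemma volume_S (k : Fin n) : μ01 (S n k) = ENNReal.ofReal (1/n) := by
  have hn' : (0:ℝ) < n := by exact_mod_cast k.pos
  have hsub : Set.Ico ((k:ℝ)/n) (((k:ℝ)+1)/n) ⊆ Set.Icc (0:ℝ) 1 := by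
    intro x hx
    refine ⟨le_trans (by positivity) hx.1, le_of_lt (lt_of_lt_of_le hx.2 ?_)⟩
    rw [div_le_one hn']
    have : (k:ℝ) + 1 ≤ n := by exact_mod_cast k.2
    linarith
  have h0 : μ01 (S n k) = volume (Subtype.val '' (S n k)) :=
    comap_subtype_coe_apply measurableSet_Icc volume _
  rw [h0, S, Set.image_preimage_eq_inter_range, Subtype.range_coe,
    Set.inter_eq_self_of_subset_left hsub, Real.volume_Ico]
  congr 1
  field_simp
  ring

lemma volume_S_ne_top (k : Fin n) : μ01 (S n k) ≠ ⊤ := by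
  rw [volume_S n k]; exact ENNReal.ofReal_ne_top

lemma S_disjoint {k l : Fin n} (hkl : k ≠ l) : S n k ∩ S n l = ∅ := by
  have hn' : (0:ℝ) < n := by exact_mod_cast k.pos
  rw [S, S, ← Set.preimage_inter, Set.Ico_inter_Ico, Set.Ico_eq_empty, Set.preimage_empty]
  rw [not_lt]
  have key : ∀ a b : Fin n, a < b →
      min (((a:ℝ)+1)/n) (((b:ℝ)+1)/n) ≤ max ((a:ℝ)/n) ((b:ℝ)/n) := by
    intro a b h
    have hab : (a:ℝ) + 1 ≤ b := by exact_mod_cast h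
    calc min (((a:ℝ)+1)/n) (((b:ℝ)+1)/n) ≤ ((a:ℝ)+1)/n := min_le_left _ _
      _ ≤ (b:ℝ)/n := by gcongr
      _ ≤ max ((a:ℝ)/n) ((b:ℝ)/n) := le_max_right _ _
  rcases hkl.lt_or_gt with h | h
  · exact key k l h
  · rw [min_comm, max_comm]; exact key l k h

def φ (k : Fin n) : Lp ℝ 2 μ01 :=
  indicatorConstLp 2 (measurableSet_S n k) (volume_S_ne_top n k) (Real.sqrt n)

lemma phi_coeFn (k : Fin n) :
    ⇑(φ n k) =ᵐ[μ01] (S n k).indicator (fun _ => Real.sqrt n) :=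
  indicatorConstLp_coeFn

lemma inner_phi (k : Fin n) (f : Lp ℝ 2 μ01) :
    ⟪φ n k, f⟫ = Real.sqrt n * ∫ x in S n k, f x ∂μ01 := by
  rw [φ, L2.inner_indicatorConstLp_eq_inner_setIntegral ℝ (measurableSet_S n k)
    (volume_S_ne_top n k) _ f]
  simp [RCLike.inner_apply]
  ring

lemma inner_phi_phi (k l : Fin n) :
    ⟪φ n k, φ n l⟫ = if k = l then 1 else 0 := by
  have hn' : (0:ℝ) < n := by exact_mod_cast k.pos
  rw [inner_phi]
  have h1 : ∫ x in S n k, (φ n l) x ∂μ01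
      = ∫ x in S n k, (S n l).indicator (fun _ => Real.sqrt n) x ∂μ01 :=
by
    refine setIntegral_congr_ae (measurableSet_S n k) ?_
    filter_upwards [phi_coeFn n l] with x hx _
    exact hx
  rw [h1, setIntegral_indicator (measurableSet_S n l), setIntegral_const]
  by_cases h : k = l
  · subst h
    rw [Set.inter_self, measureReal_def, volume_S n k, if_pos rfl]
    rw [ENNReal.toReal_ofReal (by positivity)]
    rw [smul_eq_mul, ← mul_assoc, mul_comm (Real.sqrt n) _, mul_assoc,
      Real.mul_self_sqrt n.cast_nonneg]
    field_simp
  · rw [S_disjoint n h, measureReal_empty, if_neg h]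
    simp

variable (d : Fin n → ℝ)

/-- The factor operator `X : ℝⁿ → L²`. -/
def X : EuclideanSpace ℝ (Fin n) →L[ℝ] Lp ℝ 2 μ01 :=
  ∑ k : Fin n, (innerSL ℝ (EuclideanSpace.single k (1:ℝ))).smulRight (Real.sqrt (d k) • φ n k)

lemma X_apply (x : EuclideanSpace ℝ (Fin n)) :
    X n d x = ∑ k : Fin n, (x k * Real.sqrt (d k)) • φ n k := by
  simp [X, ContinuousLinearMap.sum_apply, smulRight_apply, innerSL_apply_apply,
    EuclideanSpace.inner_single_left, smul_smul]

lemma inner_X (x : EuclideanSpace ℝ (Fin n)) (f : Lp ℝ 2 μ01) :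
    ⟪X n d x, f⟫ = ∑ k : Fin n, x k * Real.sqrt (d k) * ⟪φ n k, f⟫ := by
  rw [X_apply, sum_inner]
  simp [real_inner_smul_left]

lemma inner_X_X (hd : ∀ k, 0 ≤ d k) (x y : EuclideanSpace ℝ (Fin n)) :
    ⟪X n d x, X n d y⟫ = ∑ k : Fin n, d k * x k * y k := by
  rw [inner_X]
  refine Finset.sum_congr rfl fun k _ => ?_
  rw [X_apply, inner_sum]
  simp only [real_inner_smul_right, inner_phi_phi, mul_ite, mul_one, mul_zero]
  rw [Finset.sum_ite_eq Finset.univ k (fun j => y j * Real.sqrt (d j)),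
    if_pos (Finset.mem_univ k)]
  linear_combination (x k * y k) * Real.mul_self_sqrt (hd k)

/-- The operator `Y : L² → L²`. -/
def Y : Lp ℝ 2 μ01 →L[ℝ] Lp ℝ 2 μ01 :=
  ∑ k : Fin n, (innerSL ℝ (φ n k)).smulRight (Real.sqrt (d k) • φ n k)

lemma Y_apply (f : Lp ℝ 2 μ01) :
    Y n d f = ∑ k : Fin n, (⟪φ n k, f⟫ * Real.sqrt (d k)) • φ n k := by
  simp [Y, ContinuousLinearMap.sum_apply, smulRight_apply, innerSL_apply_apply, smul_smul]

lemma inner_Y (f g : Lp ℝ 2 μ01) :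
    ⟪Y n d f, g⟫ = ∑ k : Fin n, ⟪φ n k, f⟫ * Real.sqrt (d k) * ⟪φ n k, g⟫ := by
  rw [Y_apply, sum_inner]
  simp [real_inner_smul_left]

lemma inner_phi_Y (k : Fin n) (f : Lp ℝ 2 μ01) :
    ⟪φ n k, Y n d f⟫ = ⟪φ n k, f⟫ * Real.sqrt (d k) := by
  rw [Y_apply, inner_sum]
  simp only [real_inner_smul_right, inner_phi_phi, mul_ite, mul_one, mul_zero]
  rw [Finset.sum_ite_eq Finset.univ k (fun j => ⟪φ n j, f⟫ * Real.sqrt (d j)),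
    if_pos (Finset.mem_univ k)]

lemma smul_phi_nonneg (k : Fin n) {c : ℝ} (hc : 0 ≤ c) : 0 ≤ c • φ n k := by
  rw [← Lp.coeFn_nonneg]
  filter_upwards [Lp.coeFn_smul c (φ n k), phi_coeFn n k] with x h1 h2
  rw [Pi.zero_apply, h1, Pi.smul_apply, h2, smul_eq_mul]
  exact mul_nonneg hc (Set.indicator_nonneg (fun _ _ => Real.sqrt_nonneg _) x)

lemma inner_phi_nonneg (k : Fin n) {f : Lp ℝ 2 μ01} (hf : 0 ≤ f) : 0 ≤ ⟪φ n k, f⟫ := by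
  rw [inner_phi]
  refine mul_nonneg (Real.sqrt_nonneg _) ?_
  refine setIntegral_nonneg_ae (measurableSet_S n k) ?_
  filter_upwards [(Lp.coeFn_nonneg f).mpr hf] with x hx _
  exact hx

lemma X_single (k : Fin n) :
    X n d (EuclideanSpace.single k (1:ℝ)) = Real.sqrt (d k) • φ n k := by
  rw [X_apply]
  rw [Finset.sum_eq_single k]
  · simp
  · intro j _ hj
    rw [EuclideanSpace.single_apply, if_neg hj]
    simp
  · simp

lemma adjoint_X_apply (f : Lp ℝ 2 μ01) (k : Fin n) :
    (adjoint (X n d)) f k = Real.sqrt (d k) * ⟪φ n k, f⟫ := by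
  have h : (adjoint (X n d)) f k = ⟪adjoint (X n d) f, EuclideanSpace.single k (1:ℝ)⟫ := by
    rw [EuclideanSpace.inner_single_right]
    simp
  rw [h, adjoint_inner_left, X_single, real_inner_smul_right, real_inner_comm]

end
end DiagL2

open DiagL2 in
/-- Every positive diagonal operator `D` on the Euclidean lattice `ℝⁿ` factors through `L²[0,1]`
as `D = X*X` for some positive operator `X : ℝⁿ → L²[0,1]`; moreover there is a positive
self-adjoint operator `Y` on `L²[0,1]` with `Y² = XX*`. -/
theorem diagonal_matrix_factors_positively_through_L2
    (n : ℕ) (hn : 0 < n) (d : Fin n → ℝ) (hd_nonneg : ∀ k, 0 ≤ d k)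
    (D : EuclideanSpace ℝ (Fin n) →L[ℝ] EuclideanSpace ℝ (Fin n))
    (hD : ∀ (x : EuclideanSpace ℝ (Fin n)) (k : Fin n), D x k = d k * x k) :
    ∃ X : EuclideanSpace ℝ (Fin n) →L[ℝ] Lp ℝ 2 (volume : Measure (Set.Icc (0:ℝ) 1)),
      (∀ x : EuclideanSpace ℝ (Fin n), (∀ k, 0 ≤ x k) → 0 ≤ X x) ∧
      adjoint X ∘L X = D ∧
      ∃ Y : Lp ℝ 2 (volume : Measure (Set.Icc (0:ℝ) 1)) →L[ℝ]
          Lp ℝ 2 (volume : Measure (Set.Icc (0:ℝ) 1)),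
        (∀ f, 0 ≤ f → 0 ≤ Y f) ∧ adjoint Y = Y ∧ Y ∘L Y = X ∘L adjoint X := by
  refine ⟨X n d, ?_, ?_, Y n d, ?_, ?_, ?_⟩
  · intro x hx
    rw [X_apply]
    exact Finset.sum_nonneg fun k _ =>
      smul_phi_nonneg n k (mul_nonneg (hx k) (Real.sqrt_nonneg _))
  · refine ContinuousLinearMap.ext fun x => ?_
    refine ext_inner_right ℝ fun y => ?_
    rw [ContinuousLinearMap.comp_apply, adjoint_inner_left, inner_X_X n d hd_nonneg,
      PiLp.inner_apply]
    refine Finset.sum_congr rfl fun k _ => ?_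
    rw [hD]
    simp [RCLike.inner_apply]
    ring
  · intro f hf
    rw [Y_apply]
    exact Finset.sum_nonneg fun k _ =>
      smul_phi_nonneg n k (mul_nonneg (inner_phi_nonneg n k hf) (Real.sqrt_nonneg _))
  · refine ((eq_adjoint_iff _ _).mpr ?_).symm
    intro f g
    rw [inner_Y, real_inner_comm, inner_Y]
    refine Finset.sum_congr rfl fun k _ => ?_
    ring
  · refine ContinuousLinearMap.ext fun f => ?_
    refine ext_inner_right ℝ fun g => ?_
    rw [ContinuousLinearMap.comp_apply, ContinuousLinearMap.comp_apply, inner_Y]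
    have hR : ⟪X n d (adjoint (X n d) f), g⟫
        = ∑ k : Fin n, (Real.sqrt (d k) * ⟪φ n k, f⟫) * (Real.sqrt (d k) * ⟪φ n k, g⟫) := by
      rw [← adjoint_inner_right, PiLp.inner_apply]
      refine Finset.sum_congr rfl fun k _ => ?_
      rw [adjoint_X_apply, adjoint_X_apply]
      simp [RCLike.inner_apply]
      ring
    rw [hR]
    refine Finset.sum_congr rfl fun k _ => ?_
    rw [inner_phi_Y]
    ring
end

section
/- Let p be a real number with 1 < p < ∞. There is no positive linear isometry V : Lᵖ[0,1] → ℓᵖ; that is, there is no linear map V from Lᵖ[0,1] to ℓᵖ such that ‖V f‖ = ‖f‖ for all f and V f ≥ 0 whenever f ≥ 0. -/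
open MeasureTheory
open scoped ENNReal

namespace NoPosIsoAux

noncomputable section

/-- The subinterval `(a,b]` viewed as a subset of the subtype `Icc 0 1`. -/
def S (a b : ℝ) : Set (Set.Icc (0:ℝ) 1) := Subtype.val ⁻¹' Set.Ioc a b

lemma measurableSet_S (a b : ℝ) : MeasurableSet (S a b) :=
  measurable_subtype_coe measurableSet_Ioc

lemma volume_S {a b : ℝ} (ha : 0 ≤ a) (hb : b ≤ 1) :
    (volume : Measure (Set.Icc (0:ℝ) 1)) (S a b) = ENNReal.ofReal (b - a) := by
  rw [show (volume : Measure (Set.Icc (0:ℝ) 1)) = (volume : Measure ℝ).comap Subtype.val from rfl,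
    (MeasurableEmbedding.subtype_coe measurableSet_Icc).comap_apply]
  have him : Subtype.val '' (S a b) = Set.Ioc a b := by
    rw [S, Set.image_preimage_eq_inter_range, Subtype.range_coe]
    exact Set.inter_eq_self_of_subset_left fun x hx => ⟨le_trans ha hx.1.le, hx.2.trans hb⟩
  rw [him, Real.volume_Ioc]

lemma volume_S_ne_top {a b : ℝ} (ha : 0 ≤ a) (hb : b ≤ 1) :
    (volume : Measure (Set.Icc (0:ℝ) 1)) (S a b) ≠ ∞ := by
  rw [volume_S ha hb]; exact ENNReal.ofReal_ne_top

/-- The indicator of `(a,b]` as an element of `Lᵖ[0,1]`. -/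
def F (p : ℝ≥0∞) (a b : ℝ) (ha : 0 ≤ a) (hb : b ≤ 1) :
    Lp ℝ p (volume : Measure (Set.Icc (0:ℝ) 1)) :=
  indicatorConstLp p (measurableSet_S a b) (volume_S_ne_top ha hb) (1:ℝ)

lemma F_coe (p : ℝ≥0∞) (a b : ℝ) (ha : 0 ≤ a) (hb : b ≤ 1) :
    ⇑(F p a b ha hb) =ᵐ[(volume : Measure (Set.Icc (0:ℝ) 1))]
      (S a b).indicator (fun _ => (1:ℝ)) :=
  indicatorConstLp_coeFn

lemma norm_F (p : ℝ≥0∞) (hp0 : p ≠ 0) (hpt : p ≠ ∞) {a b : ℝ}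
    (ha : 0 ≤ a) (hab : a ≤ b) (hb : b ≤ 1) :
    ‖F p a b ha hb‖ = (b - a) ^ (1 / p.toReal) := by
  rw [F, norm_indicatorConstLp hp0 hpt, measureReal_def, volume_S ha hb,
    ENNReal.toReal_ofReal (by linarith), norm_one, one_mul]

lemma F_nonneg (p : ℝ≥0∞) (a b : ℝ) (ha : 0 ≤ a) (hb : b ≤ 1) :
    0 ≤ F p a b ha hb := by
  rw [← Lp.coeFn_nonneg]
  filter_upwards [F_coe p a b ha hb] with x hx
  rw [hx]
  exact Set.indicator_nonneg (fun _ _ => zero_le_one) x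

lemma S_disjoint {a m b : ℝ} : Disjoint (S a m) (S m b) :=
  Set.disjoint_left.mpr fun x hx hx' => absurd hx'.1 (not_lt.mpr hx.2)

lemma S_union {a m b : ℝ} (h1 : a ≤ m) (h2 : m ≤ b) : S a m ∪ S m b = S a b := by
  rw [S, S, S, ← Set.preimage_union, Set.Ioc_union_Ioc_eq_Ioc h1 h2]

lemma F_add (p : ℝ≥0∞) {a m b : ℝ} (ha : 0 ≤ a) (h1 : a ≤ m) (h2 : m ≤ b) (hb : b ≤ 1)
    (hm0 : 0 ≤ m) (hm1 : m ≤ 1) :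
    F p a m ha hm1 + F p m b hm0 hb = F p a b ha hb := by
  apply Lp.ext
  filter_upwards [Lp.coeFn_add (F p a m ha hm1) (F p m b hm0 hb),
    F_coe p a m ha hm1, F_coe p m b hm0 hb, F_coe p a b ha hb] with x h0 hx1 hx2 hx3
  rw [h0, Pi.add_apply, hx1, hx2, hx3, ← S_union h1 h2,
    Set.indicator_union_of_disjoint S_disjoint]

lemma F_norm_sub (p : ℝ≥0∞) {a m b : ℝ} (ha : 0 ≤ a) (hb : b ≤ 1)
    (hm0 : 0 ≤ m) (hm1 : m ≤ 1) :
    ‖F p a m ha hm1 - F p m b hm0 hb‖ = ‖F p a m ha hm1 + F p m b hm0 hb‖ := by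
  rw [Lp.norm_def, Lp.norm_def]
  congr 1
  apply eLpNorm_congr_norm_ae
  filter_upwards [Lp.coeFn_sub (F p a m ha hm1) (F p m b hm0 hb),
    Lp.coeFn_add (F p a m ha hm1) (F p m b hm0 hb),
    F_coe p a m ha hm1, F_coe p m b hm0 hb] with x hs hp hx1 hx2
  rw [hs, hp, Pi.sub_apply, Pi.add_apply, hx1, hx2]
  by_cases hx : x ∈ S a m
  · have hx' : x ∉ S m b := fun h => absurd h.1 (not_lt.mpr hx.2)
    simp [Set.indicator_of_mem hx, Set.indicator_of_notMem hx']
  · simp [Set.indicator_of_notMem hx]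

/-- In `ℓᵖ` (with `0 < p < ∞`), nonnegative elements with `‖a - b‖ = ‖a + b‖`
have disjoint supports. -/
lemma lp_disj {p : ℝ≥0∞} (hq : 0 < p.toReal) (a b : lp (fun _ : ℕ => ℝ) p)
    (ha : ∀ n, 0 ≤ a n) (hb : ∀ n, 0 ≤ b n) (h : ‖a - b‖ = ‖a + b‖) (n : ℕ) :
    a n = 0 ∨ b n = 0 := by
  by_contra hc
  push_neg at hc
  have han : 0 < a n := (ha n).lt_of_ne (Ne.symm hc.1)
  have hbn : 0 < b n := (hb n).lt_of_ne (Ne.symm hc.2)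
  have hpt : ∀ m, ‖(a - b) m‖ ^ p.toReal ≤ ‖(a + b) m‖ ^ p.toReal := by
    intro m
    apply Real.rpow_le_rpow (norm_nonneg _) _ hq.le
    simp only [lp.coeFn_sub, lp.coeFn_add, Pi.sub_apply, Pi.add_apply,
      Real.norm_eq_abs]
    have h1 := ha m; have h2 := hb m
    rw [abs_of_nonneg (add_nonneg h1 h2)]
    exact abs_le.mpr ⟨by linarith, by linarith⟩
  have hlt : ‖(a - b) n‖ ^ p.toReal < ‖(a + b) n‖ ^ p.toReal := by
    apply Real.rpow_lt_rpow (norm_nonneg _) _ hq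
    simp only [lp.coeFn_sub, lp.coeFn_add, Pi.sub_apply, Pi.add_apply,
      Real.norm_eq_abs]
    rw [abs_of_nonneg (add_nonneg han.le hbn.le)]
    exact abs_lt.mpr ⟨by linarith, by linarith⟩
  have hstrict := Summable.tsum_lt_tsum hpt hlt ((lp.memℓp (a - b)).summable hq)
    ((lp.memℓp (a + b)).summable hq)
  have heq : (∑' m, ‖(a - b) m‖ ^ p.toReal) = ∑' m, ‖(a + b) m‖ ^ p.toReal := by
    rw [← lp.norm_rpow_eq_tsum hq, ← lp.norm_rpow_eq_tsum hq, h]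
  exact hstrict.ne heq

end

end NoPosIsoAux

open NoPosIsoAux

/-- For `1 < p < ∞` there is no positive linear isometry `V : Lᵖ[0,1] → ℓᵖ`. -/
theorem no_positive_linear_isometry_Lp_to_lp
    (p : ℝ≥0∞) (hp1 : 1 < p) (hp2 : p ≠ ⊤) :
    ¬ ∃ V : Lp ℝ p (volume : Measure (Set.Icc (0:ℝ) 1)) →ₗ[ℝ] lp (fun _ : ℕ => ℝ) p,
        (∀ f, ‖V f‖ = ‖f‖) ∧ (∀ f, 0 ≤ f → ∀ n, 0 ≤ V f n) := by
  rintro ⟨V, hiso, hpos⟩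
  have hp0 : p ≠ 0 := (zero_lt_one.trans hp1).ne'
  have hq1 : 1 < p.toReal := by
    rw [← ENNReal.toReal_one]
    exact (ENNReal.toReal_lt_toReal (by simp) hp2).mpr hp1
  have hq0 : 0 < p.toReal := lt_trans one_pos hq1
  -- every coordinate of the image of the full indicator is zero
  have key : ∀ k : ℕ, V (F p 0 1 le_rfl le_rfl) k = 0 := by
    intro k
    set c := V (F p 0 1 le_rfl le_rfl) k with hc
    have main : ∀ n : ℕ, ∃ a b : ℝ, ∃ (ha : 0 ≤ a) (hb : b ≤ 1),
        a ≤ b ∧ b - a = (1/2 : ℝ) ^ n ∧ V (F p a b ha hb) k = c := by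
      intro n
      induction n with
      | zero => exact ⟨0, 1, le_rfl, le_rfl, zero_le_one, by norm_num, rfl⟩
      | succ n ih =>
        obtain ⟨a, b, ha, hb, hab, hlen, hval⟩ := ih
        set m := (a + b) / 2 with hm
        have ham : a ≤ m := by rw [hm]; linarith
        have hmb : m ≤ b := by rw [hm]; linarith
        have hm0 : 0 ≤ m := ha.trans ham
        have hm1 : m ≤ 1 := hmb.trans hb
        have hadd : F p a m ha hm1 + F p m b hm0 hb = F p a b ha hb :=
          F_add p ha ham hmb hb hm0 hm1
        have hnorm : ‖V (F p a m ha hm1) - V (F p m b hm0 hb)‖ =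
            ‖V (F p a m ha hm1) + V (F p m b hm0 hb)‖ := by
          rw [← map_sub, ← map_add, hiso, hiso, F_norm_sub]
        have hdisj := lp_disj hq0 (V (F p a m ha hm1)) (V (F p m b hm0 hb))
          (hpos _ (F_nonneg p a m ha hm1)) (hpos _ (F_nonneg p m b hm0 hb)) hnorm k
        have hsumc : V (F p a m ha hm1) k + V (F p m b hm0 hb) k = c := by
          rw [← hval, ← hadd, map_add, lp.coeFn_add, Pi.add_apply]
        have hlen2 : b - m = (1/2 : ℝ) ^ (n + 1) := by
          rw [pow_succ, ← hlen, hm]; ring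
        have hlen1 : m - a = (1/2 : ℝ) ^ (n + 1) := by
          rw [pow_succ, ← hlen, hm]; ring
        rcases hdisj with h0 | h0
        · exact ⟨m, b, hm0, hb, hmb, hlen2, by linarith⟩
        · exact ⟨a, m, ha, hm1, ham, hlen1, by linarith⟩
    have hle : ∀ n : ℕ, |c| ≤ ((1/2 : ℝ) ^ (1 / p.toReal)) ^ n := by
      intro n
      obtain ⟨a, b, ha, hb, hab, hlen, hval⟩ := main n
      calc |c| = ‖V (F p a b ha hb) k‖ := by rw [hval, Real.norm_eq_abs]
        _ ≤ ‖V (F p a b ha hb)‖ := lp.norm_apply_le_norm hp0 _ k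
        _ = ‖F p a b ha hb‖ := hiso _
        _ = (b - a) ^ (1 / p.toReal) := norm_F p hp0 hp2 ha hab hb
        _ = ((1/2 : ℝ) ^ (1 / p.toReal)) ^ n := by
            rw [hlen, ← Real.rpow_natCast (1/2 : ℝ) n,
              ← Real.rpow_natCast ((1/2 : ℝ) ^ (1 / p.toReal)) n,
              ← Real.rpow_mul (by norm_num), ← Real.rpow_mul (by norm_num),
              mul_comm]
    have htend : Filter.Tendsto (fun n : ℕ => ((1/2 : ℝ) ^ (1 / p.toReal)) ^ n)
        Filter.atTop (nhds 0) :=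
      tendsto_pow_atTop_nhds_zero_of_lt_one
        (Real.rpow_nonneg (by norm_num) _)
        (Real.rpow_lt_one (by norm_num) (by norm_num) (by positivity))
    have : |c| ≤ 0 := ge_of_tendsto' htend hle
    exact abs_nonpos_iff.mp this
  have hV0 : V (F p 0 1 le_rfl le_rfl) = 0 := lp.ext (funext key)
  have h1 : ‖F p 0 1 le_rfl le_rfl‖ = 1 := by
    rw [norm_F p hp0 hp2 le_rfl zero_le_one le_rfl]
    norm_num
  have := hiso (F p 0 1 le_rfl le_rfl)
  rw [hV0, h1] at this
  simp at this
end

section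
/- Let p be a real number with 1 < p < ∞, let (Ω, μ) be a measure space, and let V : Lᵖ(μ; ℝ) → ℓᵖ be a positive linear isometry. Then V preserves disjointness of positive elements: if f, g ∈ Lᵖ(μ; ℝ) satisfy f ≥ 0, g ≥ 0 and f ⊓ g = 0, then (V f) ⊓ (V g) = 0. -/
open MeasureTheory
open scoped ENNReal

/-- For `1 < p < ∞`, a positive linear isometry `V : Lᵖ(μ; ℝ) → ℓᵖ` preserves disjointness of
positive elements: if `f, g ≥ 0` and `f ⊓ g = 0`, then `(V f) ⊓ (V g) = 0` (coordinatewise). -/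
theorem positive_isometry_Lp_to_lp_preserves_disjointness
    (p : ℝ≥0∞) (hp1 : 1 < p) (hp2 : p ≠ ⊤)
    {Ω : Type*} [MeasurableSpace Ω] (μ : Measure Ω)
    (V : Lp ℝ p μ →ₗ[ℝ] lp (fun _ : ℕ => ℝ) p)
    (hV_isom : ∀ f, ‖V f‖ = ‖f‖)
    (hV_pos : ∀ f, 0 ≤ f → ∀ n, 0 ≤ V f n)
    (f g : Lp ℝ p μ) (hf : 0 ≤ f) (hg : 0 ≤ g) (hfg : f ⊓ g = 0) :
    ∀ n, (V f n) ⊓ (V g n) = 0 := by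
  have hpt : 1 < p.toReal := by
    rw [← ENNReal.toReal_one]
    exact ENNReal.toReal_strict_mono hp2 hp1
  have hpt0 : 0 < p.toReal := by linarith
  -- Step 1: ‖f - g‖ = ‖f + g‖ in Lp, since f, g are a.e. disjoint nonneg
  have hfa : 0 ≤ᵐ[μ] ⇑f := (Lp.coeFn_nonneg f).mpr hf
  have hga : 0 ≤ᵐ[μ] ⇑g := (Lp.coeFn_nonneg g).mpr hg
  have hinf : ⇑(f ⊓ g) =ᵐ[μ] ⇑f ⊓ ⇑g := Lp.coeFn_inf f g
  have hzero : ⇑(f ⊓ g) =ᵐ[μ] (0 : Ω → ℝ) := by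
    rw [hfg]; exact Lp.coeFn_zero _ _ _
  have hdisj : ∀ᵐ x ∂μ, min (f x) (g x) = 0 := by
    filter_upwards [hinf, hzero] with x h1 h2
    have h3 : (⇑f ⊓ ⇑g) x = (0 : Ω → ℝ) x := by rw [← h1]; exact h2
    simpa [Pi.inf_apply] using h3
  have habs : ∀ᵐ x ∂μ, ‖(⇑(f - g)) x‖ = ‖(⇑(f + g)) x‖ := by
    filter_upwards [hfa, hga, hdisj, Lp.coeFn_sub f g, Lp.coeFn_add f g]
      with x h1 h2 h3 h4 h5
    rw [h4, h5]
    simp only [Pi.sub_apply, Pi.add_apply, Real.norm_eq_abs]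
    rcases le_total (f x) (g x) with h | h
    · have : f x = 0 := by rw [← min_eq_left h]; exact h3
      rw [this]; simp [abs_of_nonneg h2]
    · have : g x = 0 := by rw [← min_eq_right h]; exact h3
      rw [this]; simp [abs_of_nonneg h1]
  have hnorm_eq : ‖f - g‖ = ‖f + g‖ := by
    rw [Lp.norm_def, Lp.norm_def]
    congr 1
    exact le_antisymm (eLpNorm_mono_ae (habs.mono fun x hx => hx.le))
      (eLpNorm_mono_ae (habs.mono fun x hx => hx.ge))
  -- Step 2: transfer to lp
  have hV_eq : ‖V f - V g‖ = ‖V f + V g‖ := by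
    rw [← map_sub, ← map_add, hV_isom, hV_isom, hnorm_eq]
  set a := V f
  set b := V g
  have ha : ∀ n, 0 ≤ a n := hV_pos f hf
  have hb : ∀ n, 0 ≤ b n := hV_pos g hg
  have hSum : Summable fun n => ‖(a + b) n‖ ^ p.toReal :=
    (lp.hasSum_norm hpt0 (a + b)).summable
  have hle : ∀ n, ‖(a - b) n‖ ^ p.toReal ≤ ‖(a + b) n‖ ^ p.toReal := by
    intro n
    apply Real.rpow_le_rpow (norm_nonneg _) _ hpt0.le
    rw [lp.coeFn_sub, lp.coeFn_add]
    simp only [Pi.sub_apply, Pi.add_apply, Real.norm_eq_abs]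
    rw [abs_of_nonneg (add_nonneg (ha n) (hb n))]
    exact abs_le.mpr ⟨by linarith [ha n, hb n], by linarith [ha n, hb n]⟩
  have htsum_eq : (∑' n, ‖(a - b) n‖ ^ p.toReal) = ∑' n, ‖(a + b) n‖ ^ p.toReal := by
    rw [← lp.norm_rpow_eq_tsum hpt0, ← lp.norm_rpow_eq_tsum hpt0, hV_eq]
  intro n
  by_contra hne
  have hmin : 0 < min (a n) (b n) := lt_of_le_of_ne (le_min (ha n) (hb n)) (Ne.symm hne)
  have han : 0 < a n := lt_of_lt_of_le hmin (min_le_left _ _)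
  have hbn : 0 < b n := lt_of_lt_of_le hmin (min_le_right _ _)
  have hstrict : ‖(a - b) n‖ ^ p.toReal < ‖(a + b) n‖ ^ p.toReal := by
    apply Real.rpow_lt_rpow (norm_nonneg _) _ hpt0
    rw [lp.coeFn_sub, lp.coeFn_add]
    simp only [Pi.sub_apply, Pi.add_apply, Real.norm_eq_abs]
    rw [abs_of_nonneg (add_nonneg (ha n) (hb n))]
    exact abs_lt.mpr ⟨by linarith, by linarith⟩
  have : (∑' n, ‖(a - b) n‖ ^ p.toReal) < ∑' n, ‖(a + b) n‖ ^ p.toReal :=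
    Summable.tsum_lt_tsum_of_nonneg (fun m => by positivity) hle hstrict hSum
  exact absurd htsum_eq this.ne
end

section
/- Let C be a positive central bounded linear operator on ℓ² whose kernel is infinite-dimensional. Then C is a self-commutator of a positive operator: there exists a positive bounded linear operator A on ℓ² such that C = A*A − AA*. -/
open ContinuousLinearMap
open scoped ENNReal
noncomputable section SCA
namespace SCA
open Classical

abbrev H := lp (fun _ : ℕ => ℝ) 2

lemma rp2 (x : ℝ) : x ^ ((2:ℝ≥0∞).toReal) = x ^ 2 := by
  rw [show ((2:ℝ≥0∞).toReal) = ((2:ℕ):ℝ) by norm_num, Real.rpow_natCast]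

lemma memtwo (f : ℕ → ℝ) : Memℓp f 2 ↔ Summable (fun n => f n ^ 2) := by
  rw [memℓp_gen_iff (by norm_num : 0 < (2:ℝ≥0∞).toReal)]
  apply summable_congr; intro n; rw [rp2]; simp [sq_abs]

lemma normsq (f : H) : ‖f‖ ^ 2 = ∑' i, f i ^ 2 := by
  have := lp.norm_rpow_eq_tsum (by norm_num : 0 < (2:ℝ≥0∞).toReal) f
  rw [rp2] at this; rw [this]
  apply tsum_congr; intro n; rw [rp2]; simp [sq_abs]

lemma summable_sq (f : H) : Summable (fun n => f n ^ 2) :=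
  (memtwo f).mp (lp.memℓp f)

lemma norm_le_of_sq {f : H} {b : ℝ} (hb : 0 ≤ b)
    (h : ∑' i, f i ^ 2 ≤ b ^ 2) : ‖f‖ ≤ b := by
  apply lp.norm_le_of_tsum_le (by norm_num : 0 < (2:ℝ≥0∞).toReal) hb
  calc ∑' i, ‖f i‖ ^ ((2:ℝ≥0∞).toReal) = ∑' i, f i ^ 2 := by
        apply tsum_congr; intro n; rw [rp2]; simp [sq_abs]
    _ ≤ b ^ 2 := h
    _ = b ^ ((2:ℝ≥0∞).toReal) := (rp2 b).symm

def shiftFun (w : ℕ → ℝ) (σ : ℕ → ℕ) (x : ℕ → ℝ) : ℕ → ℝ :=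
  fun m => if h : ∃ n, σ n = m then w h.choose * x h.choose else 0

variable {w : ℕ → ℝ} {σ : ℕ → ℕ}

lemma shiftFun_sigma (hσ : Function.Injective σ) (x : ℕ → ℝ) (n : ℕ) :
    shiftFun w σ x (σ n) = w n * x n := by
  have h : ∃ k, σ k = σ n := ⟨n, rfl⟩
  have hc : h.choose = n := hσ h.choose_spec
  simp only [shiftFun, dif_pos h, hc]

lemma shiftFun_nm (x : ℕ → ℝ) {m : ℕ} (hm : ¬ ∃ n, σ n = m) :
    shiftFun w σ x m = 0 := dif_neg hm

lemma sq_mul_le {a b c : ℝ} (hab : |a| ≤ b) : (a * c) ^ 2 ≤ b ^ 2 * c ^ 2 := by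
  rw [mul_pow]
  have h1 : a ^ 2 ≤ b ^ 2 := by
    rw [← sq_abs a]; exact pow_le_pow_left₀ (abs_nonneg _) hab 2
  nlinarith [sq_nonneg c]

lemma shiftFun_sq_summable (hσ : Function.Injective σ) {b : ℝ}
    (hwb : ∀ n, |w n| ≤ b) (x : H) :
    Summable (fun m => shiftFun w σ (⇑x) m ^ 2) := by
  have hs : Summable (fun n : ℕ => b ^ 2 * (x n) ^ 2) := (summable_sq x).mul_left _
  have h2 : Summable (fun n => shiftFun w σ (⇑x) (σ n) ^ 2) := by
    refine Summable.of_nonneg_of_le (fun n => sq_nonneg _) (fun n => ?_) hs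
    rw [shiftFun_sigma hσ]
    exact sq_mul_le (hwb n)
  refine (hσ.summable_iff ?_).mp h2
  intro m hm
  rw [shiftFun_nm _ (by simpa [Set.range] using hm)]; norm_num

lemma shiftFun_tsum_sq (hσ : Function.Injective σ) (x : H) :
    ∑' m, shiftFun w σ (⇑x) m ^ 2 = ∑' n, (w n * x n) ^ 2 := by
  rw [← hσ.tsum_eq (f := fun m => shiftFun w σ (⇑x) m ^ 2)]
  · apply tsum_congr; intro n; rw [shiftFun_sigma hσ]
  · intro m hm
    simp only [Function.mem_support, Set.mem_range] at *
    by_contra hmem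
    exact hm (by rw [shiftFun_nm _ (by simpa using hmem)]; norm_num)

lemma wsq_summable {b : ℝ} (hwb : ∀ n, |w n| ≤ b) (x : H) :
    Summable (fun n => (w n * x n) ^ 2) :=
  Summable.of_nonneg_of_le (fun n => sq_nonneg _) (fun n => sq_mul_le (hwb n))
    ((summable_sq x).mul_left _)

lemma tsum_wsq_le {b : ℝ} (hwb : ∀ n, |w n| ≤ b) (x : H) :
    ∑' n, (w n * x n) ^ 2 ≤ b ^ 2 * ‖x‖ ^ 2 := by
  rw [normsq, ← tsum_mul_left]
  exact Summable.tsum_le_tsum (fun n => sq_mul_le (hwb n)) (wsq_summable hwb x)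
    ((summable_sq x).mul_left _)

section op
variable (w σ)
variable (hσ : Function.Injective σ) {b : ℝ} (hb : 0 ≤ b) (hwb : ∀ n, |w n| ≤ b)

/-- the weighted shift operator -/
def shiftL : H →L[ℝ] H :=
  LinearMap.mkContinuous
    { toFun := fun x => ⟨shiftFun w σ (⇑x), (memtwo _).mpr (shiftFun_sq_summable hσ hwb x)⟩
      map_add' := by
        intro x y; apply Subtype.ext; funext m
        simp only [shiftFun, lp.coeFn_add, Pi.add_apply]
        split <;> [ring; norm_num]
      map_smul' := by
        intro c x; apply Subtype.ext; funext m
        simp only [shiftFun, lp.coeFn_smul, Pi.smul_apply, smul_eq_mul, RingHom.id_apply]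
        split <;> [ring; norm_num] }
    b
    (by
      intro x
      apply norm_le_of_sq (by positivity)
      rw [mul_pow]
      calc ∑' m, shiftFun w σ (⇑x) m ^ 2 = ∑' n, (w n * x n) ^ 2 :=
            shiftFun_tsum_sq hσ x
        _ ≤ b ^ 2 * ‖x‖ ^ 2 := tsum_wsq_le hwb x)


lemma shiftL_apply (x : H) :
    ⇑(shiftL w σ hσ hb hwb x) = shiftFun w σ (⇑x) := rfl

/-- multiplication-composition operator, the adjoint of the shift -/
def coL : H →L[ℝ] H :=
  LinearMap.mkContinuous
    { toFun := fun x => ⟨fun m => w m * x (σ m), by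
        apply (memtwo _).mpr
        refine Summable.of_nonneg_of_le (fun n => sq_nonneg _)
          (fun n => sq_mul_le (hwb n)) ?_
        exact ((summable_sq x).comp_injective hσ).mul_left _⟩
      map_add' := by
        intro x y; apply Subtype.ext; funext m
        simp only [lp.coeFn_add, Pi.add_apply]; ring
      map_smul' := by
        intro c x; apply Subtype.ext; funext m
        simp only [lp.coeFn_smul, Pi.smul_apply, smul_eq_mul, RingHom.id_apply]; ring }
    b
    (by
      intro x
      apply norm_le_of_sq (by positivity)
      rw [mul_pow]
      calc ∑' m, (w m * x (σ m)) ^ 2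
          ≤ ∑' m, b ^ 2 * (x (σ m)) ^ 2 := by
            refine Summable.tsum_le_tsum (fun n => sq_mul_le (hwb n)) ?_ ?_
            · refine Summable.of_nonneg_of_le (fun n => sq_nonneg _)
                (fun n => sq_mul_le (hwb n)) ?_
              exact ((summable_sq x).comp_injective hσ).mul_left _
            · exact ((summable_sq x).comp_injective hσ).mul_left _
        _ ≤ b ^ 2 * ‖x‖ ^ 2 := by
            rw [normsq, ← tsum_mul_left]
            refine Summable.tsum_le_tsum_of_inj σ hσ (fun m _ => by positivity) (fun n => le_rfl)
              (((summable_sq x).comp_injective hσ).mul_left _)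
              ((summable_sq x).mul_left _))

lemma coL_apply (x : H) (m : ℕ) : (coL w σ hσ hb hwb x) m = w m * x (σ m) := rfl

lemma real_inner_lp (f g : H) : (inner ℝ f g : ℝ) = ∑' i, f i * g i := by
  rw [lp.inner_eq_tsum]; simp [RCLike.inner_apply]; exact tsum_congr fun i => mul_comm _ _

lemma coL_eq_adjoint : coL w σ hσ hb hwb = ContinuousLinearMap.adjoint (shiftL w σ hσ hb hwb) := by
  rw [ContinuousLinearMap.eq_adjoint_iff]
  intro x y
  rw [real_inner_lp, real_inner_lp]
  rw [← hσ.tsum_eq (f := fun m => x m * (shiftL w σ hσ hb hwb y) m)]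
  · apply tsum_congr; intro n
    rw [coL_apply, shiftL_apply, shiftFun_sigma hσ]; ring
  · intro m hm
    simp only [Function.mem_support, Set.mem_range] at *
    by_contra hmem
    refine hm ?_
    rw [shiftL_apply, shiftFun_nm _ (by simpa using hmem)]; ring


lemma adjA_A_apply (x : H) (m : ℕ) :
    ((ContinuousLinearMap.adjoint (shiftL w σ hσ hb hwb)).comp (shiftL w σ hσ hb hwb)) x m
      = w m ^ 2 * x m := by
  rw [← coL_eq_adjoint, ContinuousLinearMap.comp_apply, coL_apply, shiftL_apply,
    shiftFun_sigma hσ]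
  ring

lemma A_adjA_apply (hws : ∀ n, w (σ n) = w n) (x : H) (m : ℕ) :
    ((shiftL w σ hσ hb hwb).comp (ContinuousLinearMap.adjoint (shiftL w σ hσ hb hwb))) x m
      = (if ∃ n, σ n = m then w m ^ 2 * x m else 0) := by
  rw [← coL_eq_adjoint, ContinuousLinearMap.comp_apply, shiftL_apply]
  unfold shiftFun
  split
  · next h =>
    rw [coL_apply]
    have h1 : σ h.choose = m := h.choose_spec
    have h2 : w h.choose = w m := by conv_rhs => rw [← h1, hws]
    rw [h2, h1]; ring
  · rfl

end op

/-! ### Combinatorics of the chain structure -/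

section comb
variable (z : ℕ → ℕ)

def base (m : ℕ) : ℕ := if h : ∃ p, z p = m then (Nat.unpair h.choose).1 else m

def nxt (m : ℕ) : ℕ :=
  if h : ∃ p, z p = m then
    z (Nat.pair (Nat.unpair h.choose).1 ((Nat.unpair h.choose).2 + 1))
  else z (Nat.pair m 0)

variable {z} (hz : Function.Injective z)
include hz

lemma base_z (p : ℕ) : base z (z p) = (Nat.unpair p).1 := by
  have h : ∃ q, z q = z p := ⟨p, rfl⟩
  have hc : h.choose = p := hz h.choose_spec
  simp only [base, dif_pos h, hc]

omit hz in
lemma base_nz {m : ℕ} (hm : ¬ ∃ p, z p = m) : base z m = m := by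
  simp only [base, dif_neg hm]

lemma nxt_z (p : ℕ) :
    nxt z (z p) = z (Nat.pair (Nat.unpair p).1 ((Nat.unpair p).2 + 1)) := by
  have h : ∃ q, z q = z p := ⟨p, rfl⟩
  have hc : h.choose = p := hz h.choose_spec
  simp only [nxt, dif_pos h, hc]

omit hz in
lemma nxt_nz {m : ℕ} (hm : ¬ ∃ p, z p = m) : nxt z m = z (Nat.pair m 0) := by
  simp only [nxt, dif_neg hm]

lemma nxt_mem_range (m : ℕ) : ∃ p, z p = nxt z m := by
  by_cases h : ∃ p, z p = m
  · obtain ⟨p, rfl⟩ := h; rw [nxt_z hz]; exact ⟨_, rfl⟩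
  · rw [nxt_nz h]; exact ⟨_, rfl⟩

lemma base_nxt (m : ℕ) : base z (nxt z m) = base z m := by
  by_cases h : ∃ p, z p = m
  · obtain ⟨p, rfl⟩ := h
    rw [nxt_z hz, base_z hz, base_z hz, Nat.unpair_pair]
  · rw [nxt_nz h, base_z hz, Nat.unpair_pair, base_nz h]

lemma nxt_inj : Function.Injective (nxt z) := by
  intro a b hab
  by_cases ha : ∃ p, z p = a <;> by_cases hb : ∃ q, z q = b
  · obtain ⟨p, rfl⟩ := ha; obtain ⟨q, rfl⟩ := hb
    rw [nxt_z hz, nxt_z hz] at hab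
    have := Nat.pair_eq_pair.mp (hz hab)
    have hp : p = q := by
      have := congrArg (fun t : ℕ × ℕ => Nat.pair t.1 t.2)
        (Prod.ext this.1 (Nat.succ_injective this.2) :
          (Nat.unpair p : ℕ × ℕ) = Nat.unpair q)
      simpa [Nat.pair_unpair] using this
    rw [hp]
  · obtain ⟨p, rfl⟩ := ha
    rw [nxt_z hz, nxt_nz hb] at hab
    exact absurd (Nat.pair_eq_pair.mp (hz hab)).2 (Nat.succ_ne_zero _)
  · obtain ⟨q, rfl⟩ := hb
    rw [nxt_nz ha, nxt_z hz] at hab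
    exact absurd (Nat.pair_eq_pair.mp (hz hab)).2.symm (Nat.succ_ne_zero _)
  · rw [nxt_nz ha, nxt_nz hb] at hab
    exact (Nat.pair_eq_pair.mp (hz hab)).1

lemma key_diag {c : ℕ → ℝ} (hc0 : ∀ n, 0 ≤ c n) (hcz : ∀ p, c (z p) = 0) (m : ℕ) :
    c (base z m) - (if ∃ n, nxt z n = m then c (base z m) else 0) = c m := by
  by_cases hm : ∃ p, z p = m
  · obtain ⟨p, rfl⟩ := hm
    rw [hcz p]
    by_cases hr : ∃ n, nxt z n = z p
    · rw [if_pos hr]; ring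
    · rw [if_neg hr]
      -- show c (base z (z p)) = 0
      rw [base_z hz]
      rcases hk : (Nat.unpair p).2 with _ | k'
      · -- k = 0 : the chain start (unpair p).1 must itself be in range z
        by_cases hb : ∃ q, z q = (Nat.unpair p).1
        · obtain ⟨q, hq⟩ := hb; rw [← hq, hcz]; ring
        · exfalso
          apply hr
          refine ⟨(Nat.unpair p).1, ?_⟩
          rw [nxt_nz hb]
          congr 1
          conv_rhs => rw [← Nat.pair_unpair p, hk]
      · exfalso
        apply hr
        refine ⟨z (Nat.pair (Nat.unpair p).1 k'), ?_⟩
        rw [nxt_z hz]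
        congr 1
        rw [Nat.unpair_pair]
        conv_rhs => rw [← Nat.pair_unpair p, hk]
  · have hr : ¬ ∃ n, nxt z n = m := by
      rintro ⟨n, rfl⟩
      exact hm (nxt_mem_range hz n)
    rw [if_neg hr, base_nz hm]; ring

end comb

/-! ### Central operators are diagonal -/

lemma single_coord (m j : ℕ) :
    (lp.single (E := fun _ : ℕ => ℝ) 2 m 1) j = if j = m then 1 else 0 := by
  by_cases h : j = m
  · subst h; rw [if_pos rfl, lp.single_apply_self]
  · rw [if_neg h]
    exact lp.single_apply_ne 2 m _ h

lemma diag_of_central (C : H →L[ℝ] H) {l : ℝ}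
    (hl : ∀ (x : H) (m : ℕ), |C x m| ≤ l * |x m|) (x : H) (m : ℕ) :
    C x m = C (lp.single 2 m (1:ℝ)) m * x m := by
  set e : H := lp.single 2 m (1:ℝ) with he
  have hy : (x - x m • e) m = 0 := by
    show x m - x m • e m = 0
    simp [he, lp.single_apply_self]
  have h0 : C (x - x m • e) m = 0 := by
    have h := hl (x - x m • e) m
    rw [hy] at h
    simp only [abs_zero, mul_zero] at h
    exact abs_nonpos_iff.mp h
  have hsplit : C x = C (x - x m • e) + x m • C e := by
    rw [map_sub, map_smul, sub_add_cancel]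
  rw [hsplit, lp.coeFn_add, Pi.add_apply, h0, zero_add, lp.coeFn_smul, Pi.smul_apply,
    smul_eq_mul, mul_comm]

lemma zeros_infinite (C : H →L[ℝ] H) (c : ℕ → ℝ)
    (hdiag : ∀ (x : H) (m : ℕ), C x m = c m * x m)
    (hker : ¬ FiniteDimensional ℝ (LinearMap.ker (C : H →ₗ[ℝ] H))) :
    {m : ℕ | c m = 0}.Infinite := by
  by_contra h
  rw [Set.not_infinite] at h
  apply hker
  haveI := h.fintype
  have hzero : ∀ x : H, C x = 0 → ∀ m : ℕ, c m ≠ 0 → x m = 0 := by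
    intro x hx m hm
    have := hdiag x m
    rw [hx] at this
    simp only [lp.coeFn_zero, Pi.zero_apply] at this
    exact (mul_eq_zero.mp this.symm).resolve_left hm
  let φ : LinearMap.ker (C : H →ₗ[ℝ] H) →ₗ[ℝ] ({m : ℕ | c m = 0} → ℝ) :=
    { toFun := fun x i => (x : H) i.1
      map_add' := by intro a b; funext i; simp [lp.coeFn_add]
      map_smul' := by intro r a; funext i; simp [lp.coeFn_smul] }
  refine FiniteDimensional.of_injective φ ?_
  intro a b hab
  apply Subtype.ext
  apply lp.ext
  funext m
  by_cases hm : c m = 0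
  · exact congrFun hab ⟨m, hm⟩
  · rw [hzero a.1 a.2 m hm, hzero b.1 b.2 m hm]

/-! ### Main theorem -/

theorem main
    (C : lp (fun _ : ℕ => ℝ) 2 →L[ℝ] lp (fun _ : ℕ => ℝ) 2)
    (hC_pos : ∀ x : lp (fun _ : ℕ => ℝ) 2, (∀ n, 0 ≤ x n) → ∀ n, 0 ≤ C x n)
    (hC_central : ∃ l : ℝ, 0 ≤ l ∧ ∀ (x : lp (fun _ : ℕ => ℝ) 2) (n : ℕ), |C x n| ≤ l * |x n|)
    (hC_ker : ¬ FiniteDimensional ℝ (LinearMap.ker (C : lp (fun _ : ℕ => ℝ) 2 →ₗ[ℝ] lp (fun _ : ℕ => ℝ) 2))) :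
    ∃ A : lp (fun _ : ℕ => ℝ) 2 →L[ℝ] lp (fun _ : ℕ => ℝ) 2,
      (∀ x : lp (fun _ : ℕ => ℝ) 2, (∀ n, 0 ≤ x n) → ∀ n, 0 ≤ A x n) ∧
      C = ContinuousLinearMap.adjoint A ∘L A - A ∘L ContinuousLinearMap.adjoint A := by
  obtain ⟨l, hl0, hl⟩ := hC_central
  set c : ℕ → ℝ := fun m => C (lp.single 2 m (1:ℝ)) m with hc
  have hdiag : ∀ (x : H) (m : ℕ), C x m = c m * x m := diag_of_central C hl
  have hc0 : ∀ m, 0 ≤ c m := by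
    intro m
    exact hC_pos (lp.single 2 m (1:ℝ))
      (fun j => by rw [single_coord]; split <;> norm_num) m
  have hcl : ∀ m, c m ≤ l := by
    intro m
    have h := hl (lp.single 2 m (1:ℝ)) m
    rw [lp.single_apply_self] at h
    calc c m ≤ |c m| := le_abs_self _
      _ ≤ l * |(1:ℝ)| := h
      _ = l := by norm_num
  have hinf : {m : ℕ | c m = 0}.Infinite := zeros_infinite C c hdiag hC_ker
  let emb := hinf.natEmbedding
  set z : ℕ → ℕ := fun p => (emb p : ℕ) with hzdef
  have hz : Function.Injective z := fun a b hab =>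
    emb.injective (Subtype.ext hab)
  have hcz : ∀ p, c (z p) = 0 := fun p => (emb p).2
  set w : ℕ → ℝ := fun m => Real.sqrt (c (base z m)) with hw
  set σ : ℕ → ℕ := nxt z with hσdef
  have hσ : Function.Injective σ := nxt_inj hz
  have hb : (0:ℝ) ≤ Real.sqrt l := Real.sqrt_nonneg l
  have hwb : ∀ n, |w n| ≤ Real.sqrt l := by
    intro n
    rw [hw, abs_of_nonneg (Real.sqrt_nonneg _)]
    exact Real.sqrt_le_sqrt (hcl _)
  have hws : ∀ n, w (σ n) = w n := by
    intro n
    simp only [hw, hσdef, base_nxt hz]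
  have hwsq : ∀ m, w m ^ 2 = c (base z m) := fun m => Real.sq_sqrt (hc0 _)
  refine ⟨shiftL w σ hσ hb hwb, ?_, ?_⟩
  · intro x hx n
    rw [shiftL_apply]
    unfold shiftFun
    split
    · exact mul_nonneg (Real.sqrt_nonneg _) (hx _)
    · exact le_refl 0
  · apply ContinuousLinearMap.ext
    intro x
    apply lp.ext
    funext m
    rw [hdiag x m]
    rw [ContinuousLinearMap.sub_apply, lp.coeFn_sub, Pi.sub_apply,
      adjA_A_apply w σ hσ hb hwb, A_adjA_apply w σ hσ hb hwb hws]
    have hk := key_diag hz hc0 hcz m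
    by_cases hr : ∃ n, σ n = m
    · rw [if_pos hr] at *
      have : c m = 0 := by linarith [hk]
      rw [this]; ring
    · rw [if_neg hr]
      rw [if_neg hr] at hk
      rw [hwsq]
      have : c (base z m) = c m := by linarith [hk]
      rw [this]; ring

end SCA
end SCA


/-- Every positive central operator on `ℓ²` with infinite-dimensional kernel is a self-commutator
of a positive operator. -/
theorem positive_central_infinite_kernel_is_selfCommutator_l2
    (C : lp (fun _ : ℕ => ℝ) 2 →L[ℝ] lp (fun _ : ℕ => ℝ) 2)
    (hC_pos : ∀ x : lp (fun _ : ℕ => ℝ) 2, (∀ n, 0 ≤ x n) → ∀ n, 0 ≤ C x n)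
    (hC_central : ∃ l : ℝ, 0 ≤ l ∧ ∀ (x : lp (fun _ : ℕ => ℝ) 2) (n : ℕ), |C x n| ≤ l * |x n|)
    (hC_ker : ¬ FiniteDimensional ℝ (LinearMap.ker (C : lp (fun _ : ℕ => ℝ) 2 →ₗ[ℝ] lp (fun _ : ℕ => ℝ) 2))) :
    ∃ A : lp (fun _ : ℕ => ℝ) 2 →L[ℝ] lp (fun _ : ℕ => ℝ) 2,
      (∀ x : lp (fun _ : ℕ => ℝ) 2, (∀ n, 0 ≤ x n) → ∀ n, 0 ≤ A x n) ∧
      C = adjoint A ∘L A - A ∘L adjoint A := by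
  exact SCA.main C hC_pos hC_central hC_ker
end

section
/- Let C be a positive central bounded linear operator on L²[0,1] whose kernel is infinite-dimensional. Then C is a self-commutator of a positive operator: there exists a positive bounded linear operator A on L²[0,1] such that C = A*A − AA*. -/
open MeasureTheory ContinuousLinearMap


open MeasureTheory Set Filter Function
open scoped ENNReal NNReal

noncomputable section

namespace SelfCommAux

variable {α : Type*} [MeasurableSpace α] {μ : Measure α}

/-- A measurable representative of an `Lp` element. -/
def rep (f : Lp ℝ 2 μ) : α → ℝ := (Lp.aestronglyMeasurable f).mk f

lemma rep_measurable (f : Lp ℝ 2 μ) : Measurable (rep f) :=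
  (Lp.aestronglyMeasurable f).stronglyMeasurable_mk.measurable

lemma rep_ae (f : Lp ℝ 2 μ) : (⇑f : α → ℝ) =ᵐ[μ] rep f :=
  (Lp.aestronglyMeasurable f).ae_eq_mk

section WC

variable (k : α → ℝ) (θ : α → α) {b : ℝ≥0} {c : ℝ≥0∞}
lemma wc_null (hθ : Measurable θ)
    (hc : Measure.map θ (μ.restrict {x | k x ≠ 0}) ≤ c • μ)
    {E : Set α} (hE : μ E = 0) :
    μ ({x | k x ≠ 0} ∩ θ ⁻¹' E) = 0 := by
  set E' := toMeasurable μ E with hE'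
  have hE'0 : μ E' = 0 := by rwa [measure_toMeasurable]
  have hsub : {x | k x ≠ 0} ∩ θ ⁻¹' E ⊆ {x | k x ≠ 0} ∩ θ ⁻¹' E' :=
    inter_subset_inter_right _ (preimage_mono (subset_toMeasurable μ E))
  refine measure_mono_null hsub ?_
  have h1 : Measure.map θ (μ.restrict {x | k x ≠ 0}) E' ≤ (c • μ) E' := hc E'
  rw [Measure.map_apply hθ (measurableSet_toMeasurable μ E)] at h1
  rw [Measure.restrict_apply (hθ (measurableSet_toMeasurable μ E))] at h1
  have h2 : (c • μ) E' = 0 := by simp [hE'0]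
  have h3 : μ (θ ⁻¹' E' ∩ {x | k x ≠ 0}) = 0 := le_antisymm (h2 ▸ h1) (zero_le)
  rwa [inter_comm]

lemma wc_congr (hθ : Measurable θ)
    (hc : Measure.map θ (μ.restrict {x | k x ≠ 0}) ≤ c • μ)
    {f g : α → ℝ} (hfg : f =ᵐ[μ] g) :
    (fun x => k x * f (θ x)) =ᵐ[μ] fun x => k x * g (θ x) := by
  have hE : μ {y | f y ≠ g y} = 0 := by
    have := hfg
    rw [Filter.EventuallyEq, ae_iff] at this
    simpa using this
  have : μ ({x | k x ≠ 0} ∩ θ ⁻¹' {y | f y ≠ g y}) = 0 :=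
    wc_null k θ hθ hc hE
  rw [Filter.EventuallyEq, ae_iff]
  refine measure_mono_null ?_ this
  intro x hx
  simp only [mem_setOf_eq] at hx ⊢
  constructor
  · intro hk0; apply hx; simp [hk0]
  · intro hfθ; apply hx; rw [hfθ]

/-- The main `eLpNorm` bound for a weighted composition. -/
lemma wc_eLpNorm (hk : Measurable k) (hθ : Measurable θ) (hb : ∀ x, ‖k x‖₊ ≤ b)
    (hc : Measure.map θ (μ.restrict {x | k x ≠ 0}) ≤ c • μ)
    {F : α → ℝ} (hF : Measurable F) :
    eLpNorm (fun x => k x * F (θ x)) 2 μ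
      ≤ ((b : ℝ≥0∞) ^ (2:ℝ) * c) ^ (1/2 : ℝ) * eLpNorm F 2 μ := by
  have h2 : ((2:ℝ≥0∞)).toReal = (2:ℝ) := by simp
  rw [eLpNorm_eq_lintegral_rpow_enorm_toReal (by norm_num) (by norm_num),
      eLpNorm_eq_lintegral_rpow_enorm_toReal (by norm_num) (by norm_num), h2]
  simp only [enorm_eq_nnnorm]
  set K := {x | k x ≠ 0} with hK
  have hKm : MeasurableSet K := (hk (measurableSet_singleton 0)).compl
  have step1 : ∫⁻ x, (‖k x * F (θ x)‖₊ : ℝ≥0∞) ^ (2:ℝ) ∂μ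
      ≤ ∫⁻ x, K.indicator (fun x => (b : ℝ≥0∞) ^ (2:ℝ) * (‖F (θ x)‖₊ : ℝ≥0∞) ^ (2:ℝ)) x ∂μ := by
    refine lintegral_mono fun x => ?_
    by_cases hx : x ∈ K
    · rw [indicator_of_mem hx]
      rw [nnnorm_mul, ENNReal.coe_mul, ENNReal.mul_rpow_of_nonneg _ _ (by norm_num)]
      gcongr
      exact_mod_cast hb x
    · have : k x = 0 := by simpa [hK] using hx
      simp [this, indicator_of_notMem hx, ENNReal.zero_rpow_of_pos (by norm_num : (0:ℝ) < 2)]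
  have step2 : ∫⁻ x, K.indicator (fun x => (b : ℝ≥0∞) ^ (2:ℝ) * (‖F (θ x)‖₊ : ℝ≥0∞) ^ (2:ℝ)) x ∂μ
      = (b : ℝ≥0∞) ^ (2:ℝ) * ∫⁻ x in K, (‖F (θ x)‖₊ : ℝ≥0∞) ^ (2:ℝ) ∂μ := by
    rw [lintegral_indicator hKm, lintegral_const_mul]
    exact ((hF.comp hθ).nnnorm.coe_nnreal_ennreal.pow_const _)
  have step3 : ∫⁻ x in K, (‖F (θ x)‖₊ : ℝ≥0∞) ^ (2:ℝ) ∂μ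
      = ∫⁻ y, (‖F y‖₊ : ℝ≥0∞) ^ (2:ℝ) ∂(Measure.map θ (μ.restrict K)) := by
    rw [lintegral_map (hF.nnnorm.coe_nnreal_ennreal.pow_const _) hθ]
  have step4 : ∫⁻ y, (‖F y‖₊ : ℝ≥0∞) ^ (2:ℝ) ∂(Measure.map θ (μ.restrict K))
      ≤ c * ∫⁻ y, (‖F y‖₊ : ℝ≥0∞) ^ (2:ℝ) ∂μ := by
    calc _ ≤ ∫⁻ y, (‖F y‖₊ : ℝ≥0∞) ^ (2:ℝ) ∂(c • μ) := lintegral_mono' hc le_rfl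
    _ = c * ∫⁻ y, (‖F y‖₊ : ℝ≥0∞) ^ (2:ℝ) ∂μ := lintegral_smul_measure c _
  calc (∫⁻ x, (‖k x * F (θ x)‖₊ : ℝ≥0∞) ^ (2:ℝ) ∂μ) ^ (1/2:ℝ)
      ≤ ((b : ℝ≥0∞) ^ (2:ℝ) * (c * ∫⁻ y, (‖F y‖₊ : ℝ≥0∞) ^ (2:ℝ) ∂μ)) ^ (1/2:ℝ) := by
        gcongr
        exact step1.trans (le_of_eq step2 |>.trans (by rw [step3]; exact mul_le_mul_right step4 _))
  _ = ((b : ℝ≥0∞) ^ (2:ℝ) * c) ^ (1/2:ℝ) * (∫⁻ y, (‖F y‖₊ : ℝ≥0∞) ^ (2:ℝ) ∂μ) ^ (1/2:ℝ) := by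
        rw [← mul_assoc, ENNReal.mul_rpow_of_nonneg _ _ (by norm_num)]

end WC

section WCL

variable (k : α → ℝ) (θ : α → α) {b : ℝ≥0} {c : ℝ≥0∞}

def wcFun (f : Lp ℝ 2 μ) : α → ℝ := fun x => k x * rep f (θ x)

lemma wcFun_ae (hθ : Measurable θ)
    (hc : Measure.map θ (μ.restrict {x | k x ≠ 0}) ≤ c • μ) (f : Lp ℝ 2 μ) :
    (fun x => k x * f (θ x)) =ᵐ[μ] wcFun k θ f :=
  wc_congr k θ hθ hc (rep_ae f)

lemma wcFun_memℒp (hk : Measurable k) (hθ : Measurable θ) (hb : ∀ x, ‖k x‖₊ ≤ b)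
    (hc : Measure.map θ (μ.restrict {x | k x ≠ 0}) ≤ c • μ) (hc_top : c ≠ ∞)
    (f : Lp ℝ 2 μ) : MemLp (wcFun k θ f) 2 μ := by
  refine ⟨(hk.mul ((rep_measurable f).comp hθ)).aestronglyMeasurable, ?_⟩
  have h1 : eLpNorm (wcFun k θ f) 2 μ
      ≤ ((b : ℝ≥0∞) ^ (2:ℝ) * c) ^ (1/2 : ℝ) * eLpNorm (rep f) 2 μ :=
    wc_eLpNorm k θ hk hθ hb hc (rep_measurable f)
  refine lt_of_le_of_lt h1 (ENNReal.mul_lt_top ?_ ?_)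
  · exact ENNReal.rpow_lt_top_of_nonneg (by norm_num)
      (ENNReal.mul_ne_top (by simp [ENNReal.rpow_lt_top_of_nonneg, ENNReal.coe_ne_top,
        (ENNReal.rpow_lt_top_of_nonneg (by norm_num : (0:ℝ) ≤ 2) ENNReal.coe_ne_top).ne]) hc_top)
  · rw [← eLpNorm_congr_ae (rep_ae f)]
    exact Lp.eLpNorm_lt_top f

def wcL (hk : Measurable k) (hθ : Measurable θ) (hb : ∀ x, ‖k x‖₊ ≤ b)
    (hc : Measure.map θ (μ.restrict {x | k x ≠ 0}) ≤ c • μ) (hc_top : c ≠ ∞) :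
    Lp ℝ 2 μ →L[ℝ] Lp ℝ 2 μ := by
  refine LinearMap.mkContinuous
    { toFun := fun f => (wcFun_memℒp k θ hk hθ hb hc hc_top f).toLp _
      map_add' := ?_
      map_smul' := ?_ }
    ((((b : ℝ≥0∞) ^ (2:ℝ) * c) ^ (1/2 : ℝ)).toReal) ?_
  · intro f g
    refine Lp.ext ?_
    have h1 := MemLp.coeFn_toLp (wcFun_memℒp k θ hk hθ hb hc hc_top (f + g))
    have h2 := MemLp.coeFn_toLp (wcFun_memℒp k θ hk hθ hb hc hc_top f)
    have h3 := MemLp.coeFn_toLp (wcFun_memℒp k θ hk hθ hb hc hc_top g)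
    have hfg : (fun x => k x * (f + g) (θ x)) =ᵐ[μ]
        fun x => k x * f (θ x) + k x * g (θ x) := by
      have : (⇑(f + g) : α → ℝ) =ᵐ[μ] ⇑f + ⇑g := Lp.coeFn_add f g
      filter_upwards [wc_congr k θ hθ hc this] with x hx
      rw [hx]; simp [mul_add]
    filter_upwards [h1, h2, h3, Lp.coeFn_add ((wcFun_memℒp k θ hk hθ hb hc hc_top f).toLp _)
        ((wcFun_memℒp k θ hk hθ hb hc hc_top g).toLp _),
        (wcFun_ae k θ hθ hc (f + g)).symm.trans hfg,
        (wcFun_ae k θ hθ hc f), (wcFun_ae k θ hθ hc g)] with x e1 e2 e3 e4 e5 e6 e7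
    rw [e1, e4, e5, Pi.add_apply, e2, e3, ← e6, ← e7]
  · intro r f
    refine Lp.ext ?_
    have h1 := MemLp.coeFn_toLp (wcFun_memℒp k θ hk hθ hb hc hc_top (r • f))
    have h2 := MemLp.coeFn_toLp (wcFun_memℒp k θ hk hθ hb hc hc_top f)
    have hfg : (fun x => k x * (r • f) (θ x)) =ᵐ[μ] fun x => r * (k x * f (θ x)) := by
      have : (⇑(r • f) : α → ℝ) =ᵐ[μ] r • ⇑f := Lp.coeFn_smul r f
      filter_upwards [wc_congr k θ hθ hc this] with x hx
      rw [hx]; simp; ring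
    filter_upwards [h1, h2, Lp.coeFn_smul r ((wcFun_memℒp k θ hk hθ hb hc hc_top f).toLp _),
        (wcFun_ae k θ hθ hc (r • f)).symm.trans hfg, wcFun_ae k θ hθ hc f] with x e1 e2 e3 e4 e5
    rw [e1, e4, RingHom.id_apply, e3, Pi.smul_apply, e2, ← e5]
    simp
  · intro f
    show ‖MemLp.toLp (wcFun k θ f) (wcFun_memℒp k θ hk hθ hb hc hc_top f)‖ ≤ _
    rw [Lp.norm_toLp]
    have h1 : eLpNorm (wcFun k θ f) 2 μ
        ≤ ((b : ℝ≥0∞) ^ (2:ℝ) * c) ^ (1/2 : ℝ) * eLpNorm (⇑f) 2 μ := by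
      rw [eLpNorm_congr_ae (rep_ae f)]
      exact wc_eLpNorm k θ hk hθ hb hc (rep_measurable f)
    have hD : (((b : ℝ≥0∞) ^ (2:ℝ) * c) ^ (1/2 : ℝ)) ≠ ∞ :=
      (ENNReal.rpow_lt_top_of_nonneg (by norm_num)
        (ENNReal.mul_ne_top
          (ENNReal.rpow_lt_top_of_nonneg (by norm_num : (0:ℝ) ≤ 2) ENNReal.coe_ne_top).ne
          hc_top)).ne
    calc (eLpNorm (wcFun k θ f) 2 μ).toReal
        ≤ ((((b : ℝ≥0∞) ^ (2:ℝ) * c) ^ (1/2 : ℝ)) * eLpNorm (⇑f) 2 μ).toReal :=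
          ENNReal.toReal_mono (ENNReal.mul_ne_top hD (Lp.eLpNorm_ne_top f)) h1
      _ = (((b : ℝ≥0∞) ^ (2:ℝ) * c) ^ (1/2 : ℝ)).toReal * ‖f‖ := by
          rw [ENNReal.toReal_mul, Lp.norm_def]

lemma wcL_coeFn (hk : Measurable k) (hθ : Measurable θ) (hb : ∀ x, ‖k x‖₊ ≤ b)
    (hc : Measure.map θ (μ.restrict {x | k x ≠ 0}) ≤ c • μ) (hc_top : c ≠ ∞) (f : Lp ℝ 2 μ) :
    ⇑(wcL k θ hk hθ hb hc hc_top f) =ᵐ[μ] fun x => k x * f (θ x) :=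
  (MemLp.coeFn_toLp (wcFun_memℒp k θ hk hθ hb hc hc_top f)).trans (wcFun_ae k θ hθ hc f).symm

end WCL


section CDF
open ProbabilityTheory


/-- The cdf of an atomless probability measure on `ℝ` is continuous. -/
lemma cdf_cont (ρ : Measure ℝ) [IsProbabilityMeasure ρ] (hρ : ∀ t, ρ {t} = 0) :
    Continuous (cdf ρ) := by
  rw [continuous_iff_continuousAt]
  intro x
  rw [(monotone_cdf ρ).continuousAt_iff_leftLim_eq_rightLim]
  have hr : Function.rightLim (cdf ρ) x = cdf ρ x :=
    (monotone_cdf ρ).continuousWithinAt_Ioi_iff_rightLim_eq.1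
      (((cdf ρ).right_continuous x).mono Ioi_subset_Ici_self)
  have hl : Function.leftLim (cdf ρ) x = cdf ρ x := by
    have hsing := (cdf ρ).measure_singleton x
    rw [measure_cdf, hρ x] at hsing
    have h1 : cdf ρ x - Function.leftLim (cdf ρ) x ≤ 0 := by
      by_contra hcon
      push_neg at hcon
      rw [eq_comm, ENNReal.ofReal_eq_zero] at hsing
      linarith
    have h2 : Function.leftLim (cdf ρ) x ≤ cdf ρ x := (monotone_cdf ρ).leftLim_le le_rfl
    linarith
  rw [hl, hr]

/-- Probability integral transform: pushing forward an atomless probability measure by its own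
cdf gives the uniform distribution on `[0,1]`. -/
lemma map_cdf_eq (ρ : Measure ℝ) [IsProbabilityMeasure ρ] (hρ : ∀ t, ρ {t} = 0) :
    Measure.map (cdf ρ) ρ = volume.restrict (Icc (0:ℝ) 1) := by
  have hcont : Continuous (cdf ρ) := cdf_cont ρ hρ
  have hmeas : Measurable (cdf ρ) := hcont.measurable
  haveI : IsFiniteMeasure (Measure.map (cdf ρ) ρ) := by
    constructor
    rw [Measure.map_apply hmeas MeasurableSet.univ]
    simp
  refine Measure.ext_of_Iic _ _ (fun s => ?_)
  rw [Measure.map_apply hmeas measurableSet_Iic, Measure.restrict_apply measurableSet_Iic]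
  have hTdef : cdf ρ ⁻¹' Iic s = {t | cdf ρ t ≤ s} := rfl
  rcases lt_or_ge s 0 with hs | hs
  · have hT : cdf ρ ⁻¹' Iic s = ∅ := by
      ext t; simp only [mem_preimage, mem_Iic, mem_empty_iff_false, iff_false, not_le]
      exact lt_of_lt_of_le hs (cdf_nonneg (μ := ρ) t)
    have hI : Iic s ∩ Icc (0:ℝ) 1 = ∅ := by
      ext t; simp only [mem_inter_iff, mem_Iic, mem_Icc, mem_empty_iff_false, iff_false]
      rintro ⟨h1, h2, _⟩; linarith
    rw [hT, hI]
    simp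
  rcases le_or_gt 1 s with hs1 | hs1
  · have hT : cdf ρ ⁻¹' Iic s = univ := by
      ext t; simp only [mem_preimage, mem_Iic, mem_univ, iff_true]
      exact (cdf_le_one (μ := ρ) t).trans hs1
    have hI : Iic s ∩ Icc (0:ℝ) 1 = Icc 0 1 := by
      ext t; simp only [mem_inter_iff, mem_Iic, mem_Icc]
      constructor
      · rintro ⟨_, h⟩; exact h
      · rintro ⟨h1, h2⟩; exact ⟨h2.trans hs1, h1, h2⟩
    rw [hT, hI]
    simp [Real.volume_Icc]
  -- main case : 0 ≤ s < 1
  have hI : Iic s ∩ Icc (0:ℝ) 1 = Icc 0 s := by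
    ext t; simp only [mem_inter_iff, mem_Iic, mem_Icc]
    constructor
    · rintro ⟨h1, h2, _⟩; exact ⟨h2, h1⟩
    · rintro ⟨h1, h2⟩; exact ⟨h2, h1, by linarith⟩
  rw [hI, Real.volume_Icc]
  set T := {t | cdf ρ t ≤ s} with hT
  have hTclosed : IsClosed T := isClosed_le hcont continuous_const
  rcases eq_empty_or_nonempty T with hTe | hTne
  ·
    have hs0 : s = 0 := by
      by_contra hne
      have hspos : 0 < s := lt_of_le_of_ne hs (Ne.symm hne)
      have := tendsto_cdf_atBot (μ := ρ)
      have hev : ∀ᶠ t in atBot, cdf ρ t < s := this.eventually_lt_const hspos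
      rcases hev.exists with ⟨t, ht⟩
      rw [eq_empty_iff_forall_notMem] at hTe
      exact hTe t ht.le
    rw [hTdef, hTe, hs0]
    simp
  · have hbdd : BddAbove T := by
      by_contra hnb
      have hev : ∀ᶠ t in atTop, s < cdf ρ t :=
        (tendsto_cdf_atTop (μ := ρ)).eventually_const_lt hs1
      rcases eventually_atTop.mp hev with ⟨t₀, ht₀⟩
      rw [not_bddAbove_iff] at hnb
      rcases hnb t₀ with ⟨t, htT, htgt⟩
      exact absurd (htT : cdf ρ t ≤ s) (not_le.mpr (ht₀ t htgt.le))
    set u := sSup T with hu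
    have huT : u ∈ T := hTclosed.csSup_mem hTne hbdd
    have hFu_le : cdf ρ u ≤ s := huT
    have hFu_ge : s ≤ cdf ρ u := by
      by_contra hcon
      push_neg at hcon
      have hopen : IsOpen {t | cdf ρ t < s} := isOpen_lt hcont continuous_const
      have humem : u ∈ {t | cdf ρ t < s} := hcon
      rcases (Metric.isOpen_iff.mp hopen) u humem with ⟨ε, hε, hball⟩
      have ht : u + ε / 2 ∈ T := by
        have hmem : u + ε / 2 ∈ {t | cdf ρ t < s} := by
          apply hball
          simp only [Metric.mem_ball, Real.dist_eq]
          rw [show u + ε / 2 - u = ε / 2 by ring, abs_of_nonneg (by linarith)]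
          linarith
        have h2 : cdf ρ (u + ε / 2) < s := hmem
        exact h2.le
      have := le_csSup hbdd ht
      linarith
    have hFu : cdf ρ u = s := le_antisymm hFu_le hFu_ge
    have hTIic : cdf ρ ⁻¹' Iic s = Iic u := by
      ext t
      simp only [mem_preimage, mem_Iic]
      constructor
      · intro h; exact le_csSup hbdd h
      · intro h; exact le_trans ((monotone_cdf ρ) h) (le_of_eq hFu)
    rw [hTIic, ← ofReal_cdf (μ := ρ) u, hFu]
    rw [sub_zero]


end CDF

section Mul

variable {α : Type*} [MeasurableSpace α] {μ : Measure α}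

lemma mul_hc (g : α → ℝ) :
    Measure.map id (μ.restrict {x | g x ≠ 0}) ≤ (1:ℝ≥0∞) • μ := by
  rw [Measure.map_id, one_smul]
  exact Measure.restrict_le_self

/-- Multiplication operator by a bounded measurable function. -/
def mulL (g : α → ℝ) (hg : Measurable g) (b : ℝ≥0) (hb : ∀ x, ‖g x‖₊ ≤ b) :
    Lp ℝ 2 μ →L[ℝ] Lp ℝ 2 μ :=
  wcL g id hg measurable_id hb (mul_hc g) ENNReal.one_ne_top

lemma mulL_coeFn (g : α → ℝ) (hg : Measurable g) (b : ℝ≥0) (hb : ∀ x, ‖g x‖₊ ≤ b)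
    (f : Lp ℝ 2 μ) : ⇑(mulL g hg b hb f) =ᵐ[μ] fun x => g x * f x :=
  wcL_coeFn g id hg measurable_id hb (mul_hc g) ENNReal.one_ne_top f

lemma inner_L2 (f g : Lp ℝ 2 μ) : (inner ℝ f g : ℝ) = ∫ x, f x * g x ∂μ := by
  rw [MeasureTheory.L2.inner_def]
  congr 1
  funext x; exact Real.inner_apply _ _

lemma mulL_adjoint [CompleteSpace (Lp ℝ 2 μ)] (g : α → ℝ) (hg : Measurable g) (b : ℝ≥0)
    (hb : ∀ x, ‖g x‖₊ ≤ b) :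
    ContinuousLinearMap.adjoint (mulL (μ := μ) g hg b hb) = mulL g hg b hb := by
  symm
  rw [ContinuousLinearMap.eq_adjoint_iff]
  intro f h
  rw [inner_L2, inner_L2]
  refine integral_congr_ae ?_
  filter_upwards [mulL_coeFn g hg b hb f, mulL_coeFn g hg b hb h] with x e1 e2
  rw [e1, e2]; ring

/-- A positive central operator on `L²` of a finite measure space is multiplication by a
bounded nonnegative measurable function. -/
lemma central_is_mult [IsFiniteMeasure μ] (C : Lp ℝ 2 μ →L[ℝ] Lp ℝ 2 μ) (l : ℝ) (hl : 0 ≤ l)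
    (hpos : ∀ f, 0 ≤ f → 0 ≤ C f) (hcen : ∀ f, |C f| ≤ l • |f|) :
    ∃ (g : α → ℝ) (hg : Measurable g) (hb : ∀ x, ‖g x‖₊ ≤ l.toNNReal),
      (∀ x, 0 ≤ g x ∧ g x ≤ l) ∧ C = mulL g hg l.toNNReal hb := by
  set one : Lp ℝ 2 μ := indicatorConstLp 2 MeasurableSet.univ (measure_ne_top μ univ) (1:ℝ)
    with hone_def
  have hone : ⇑one =ᵐ[μ] fun _ => (1:ℝ) := by
    filter_upwards [indicatorConstLp_coeFn (p := 2) (hs := MeasurableSet.univ)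
      (hμs := measure_ne_top μ univ) (c := (1:ℝ))] with x hx
    rw [hx, indicator_univ]
  set g₀ : Lp ℝ 2 μ := C one with hg₀_def
  have hone_nonneg : 0 ≤ one := by
    rw [← Lp.coeFn_nonneg]
    filter_upwards [hone] with x hx
    rw [hx]; norm_num
  have hg₀_nonneg : 0 ≤ g₀ := hpos one hone_nonneg
  have hg₀ae : ∀ᵐ x ∂μ, 0 ≤ g₀ x ∧ g₀ x ≤ l := by
    have h1 : (0:α → ℝ) ≤ᵐ[μ] ⇑g₀ := (Lp.coeFn_nonneg g₀).mpr hg₀_nonneg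
    have h2 := hcen one
    rw [← Lp.coeFn_le] at h2
    filter_upwards [h1, h2, Lp.coeFn_abs g₀, Lp.coeFn_smul l |one|, Lp.coeFn_abs one, hone]
      with x e1 e2 e3 e4 e5 e6
    refine ⟨e1, ?_⟩
    rw [e3] at e2
    rw [e4] at e2
    simp only [Pi.smul_apply, smul_eq_mul] at e2
    rw [e5, e6, abs_one, mul_one] at e2
    calc g₀ x ≤ |g₀ x| := le_abs_self _
    _ ≤ l := e2
  set g : α → ℝ := fun x => max 0 (min l (rep g₀ x)) with hg_def
  have hg : Measurable g := measurable_const.max (measurable_const.min (rep_measurable g₀))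
  have hgbd : ∀ x, 0 ≤ g x ∧ g x ≤ l := fun x =>
    ⟨le_max_left _ _, max_le hl (min_le_left _ _)⟩
  have hb : ∀ x, ‖g x‖₊ ≤ l.toNNReal := by
    intro x
    rw [← NNReal.coe_le_coe, coe_nnnorm, Real.norm_eq_abs, Real.coe_toNNReal l hl,
      abs_of_nonneg (hgbd x).1]
    exact (hgbd x).2
  have hgae : g =ᵐ[μ] ⇑g₀ := by
    filter_upwards [hg₀ae, rep_ae g₀] with x hx e1
    rw [hg_def]
    simp only [← e1]
    rw [min_eq_right hx.2, max_eq_right hx.1]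
  refine ⟨g, hg, hb, hgbd, ?_⟩
  refine ContinuousLinearMap.ext ?_
  refine Lp.induction (by norm_num : (2:ℝ≥0∞) ≠ ∞) _ ?_ ?_ ?_
  · -- indicator case
    intro c s hs hμs
    have hcoe : (Lp.simpleFunc.indicatorConst 2 hs hμs.ne c : Lp ℝ 2 μ)
        = indicatorConstLp 2 hs hμs.ne c := Lp.simpleFunc.coe_indicatorConst hs hμs.ne c
    rw [hcoe]
    set iE : Lp ℝ 2 μ := indicatorConstLp 2 hs hμs.ne (1:ℝ) with hiE_def
    have hsmul : indicatorConstLp 2 hs hμs.ne c = c • iE := by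
      refine Lp.ext ?_
      filter_upwards [indicatorConstLp_coeFn (p := 2) (hs := hs) (hμs := hμs.ne) (c := c),
        Lp.coeFn_smul c iE,
        indicatorConstLp_coeFn (p := 2) (hs := hs) (hμs := hμs.ne) (c := (1:ℝ))] with x e1 e2 e3
      rw [e1, e2, Pi.smul_apply, e3, smul_eq_mul]
      by_cases hx : x ∈ s <;> simp [hx]
    have hcore : C iE = mulL g hg l.toNNReal hb iE := by
      set iEc : Lp ℝ 2 μ := indicatorConstLp 2 hs.compl (measure_ne_top μ _) (1:ℝ) with hiEc_def
      have hsum : iE + iEc = one := by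
        refine Lp.ext ?_
        filter_upwards [Lp.coeFn_add iE iEc,
          indicatorConstLp_coeFn (p := 2) (hs := hs) (hμs := hμs.ne) (c := (1:ℝ)),
          indicatorConstLp_coeFn (p := 2) (hs := hs.compl) (hμs := measure_ne_top μ _)
            (c := (1:ℝ)), hone] with x e1 e2 e3 e4
        rw [e1, Pi.add_apply, e2, e3, e4]
        by_cases hx : x ∈ s <;> simp [hx]
      have h0 : ∀ᵐ x ∂μ, x ∉ s → (C iE) x = 0 := by
        have h2 := hcen iE
        rw [← Lp.coeFn_le] at h2
        filter_upwards [h2, Lp.coeFn_abs (C iE), Lp.coeFn_smul l |iE|, Lp.coeFn_abs iE,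
          indicatorConstLp_coeFn (p := 2) (hs := hs) (hμs := hμs.ne) (c := (1:ℝ))]
          with x e2 e3 e4 e5 e6
        intro hx
        rw [e3, e4] at e2
        simp only [Pi.smul_apply, smul_eq_mul] at e2
        rw [e5, e6, indicator_of_notMem hx] at e2
        simp only [abs_zero, mul_zero] at e2
        exact abs_nonpos_iff.mp e2
      have h0c : ∀ᵐ x ∂μ, x ∈ s → (C iEc) x = 0 := by
        have h2 := hcen iEc
        rw [← Lp.coeFn_le] at h2
        filter_upwards [h2, Lp.coeFn_abs (C iEc), Lp.coeFn_smul l |iEc|, Lp.coeFn_abs iEc,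
          indicatorConstLp_coeFn (p := 2) (hs := hs.compl) (hμs := measure_ne_top μ _)
            (c := (1:ℝ))] with x e2 e3 e4 e5 e6
        intro hx
        rw [e3, e4] at e2
        simp only [Pi.smul_apply, smul_eq_mul] at e2
        rw [e5, e6, indicator_of_notMem (by simpa using hx)] at e2
        simp only [abs_zero, mul_zero] at e2
        exact abs_nonpos_iff.mp e2
      have hsplit : ⇑g₀ =ᵐ[μ] ⇑(C iE) + ⇑(C iEc) := by
        have : g₀ = C iE + C iEc := by rw [hg₀_def, ← hsum, map_add]
        rw [this]
        exact Lp.coeFn_add _ _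
      refine Lp.ext ?_
      filter_upwards [h0, h0c, hsplit, hgae, mulL_coeFn g hg l.toNNReal hb iE,
        indicatorConstLp_coeFn (p := 2) (hs := hs) (hμs := hμs.ne) (c := (1:ℝ))]
        with x e1 e2 e3 e4 e5 e6
      rw [e5, e6]
      by_cases hx : x ∈ s
      · rw [indicator_of_mem hx, mul_one]
        have : g₀ x = (C iE) x + (C iEc) x := e3
        rw [e2 hx, add_zero] at this
        rw [← this, e4]
      · rw [indicator_of_notMem hx, mul_zero, e1 hx]
    rw [hsmul, _root_.map_smul, _root_.map_smul, hcore]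
  · -- additivity
    intro f f' hf hf' hdisj hP hP'
    rw [map_add, map_add, hP, hP']
  · -- closedness
    exact isClosed_eq C.continuous (mulL g hg l.toNNReal hb).continuous

end Mul

section Exit
open scoped Classical

variable {α : Type*} [MeasurableSpace α]

open scoped Classical in
/-- First exit time of the orbit of `φ` from `Z` (or `0` if the orbit never leaves `Z`). -/
noncomputable def exitJ (Z : Set α) (φ : α → α) (x : α) : ℕ :=
  if hx : ∃ n, φ^[n] x ∉ Z then Nat.find hx else 0

/-- Value of `g` at the first exit point of the orbit. -/
def exitFun (g : α → ℝ) (φ : α → α) (x : α) : ℝ :=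
  g (φ^[exitJ {y | g y = 0} φ x] x)

lemma exitJ_measurable {Z : Set α} {φ : α → α} (hZ : MeasurableSet Z) (hφ : Measurable φ) :
    Measurable (exitJ Z φ) := by
  apply measurable_to_countable'
  intro n
  have hit : ∀ k : ℕ, Measurable (φ^[k]) := fun k => hφ.iterate k
  match n with
  | 0 =>
    have : exitJ Z φ ⁻¹' {0} = Zᶜ ∪ ⋂ k, φ^[k] ⁻¹' Z := by
      ext x
      simp only [mem_preimage, mem_singleton_iff, mem_union, mem_compl_iff, mem_iInter]
      constructor
      · intro hx
        by_cases hex : ∃ n, φ^[n] x ∉ Z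
        · left
          rw [exitJ, dif_pos hex] at hx
          have := Nat.find_spec hex
          rw [hx] at this
          simpa using this
        · right
          push_neg at hex
          exact fun k => hex k
      · intro hx
        rcases hx with hx | hx
        · rw [exitJ, dif_pos ⟨0, by simpa using hx⟩]
          rw [Nat.find_eq_zero]
          simpa using hx
        · rw [exitJ, dif_neg (by push_neg; exact hx)]
    rw [this]
    exact hZ.compl.union (MeasurableSet.iInter fun k => (hit k) hZ)
  | Nat.succ n =>
    have : exitJ Z φ ⁻¹' {n + 1}
        = (⋂ k ∈ Finset.range (n + 1), φ^[k] ⁻¹' Z) ∩ (φ^[n+1] ⁻¹' Z)ᶜ := by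
      ext x
      simp only [mem_preimage, mem_singleton_iff, mem_inter_iff, mem_iInter, mem_compl_iff,
        Finset.mem_range]
      constructor
      · intro hx
        by_cases hex : ∃ m, φ^[m] x ∉ Z
        · rw [exitJ, dif_pos hex] at hx
          rw [Nat.find_eq_iff] at hx
          refine ⟨fun k hk => ?_, by simpa using hx.1⟩
          have := hx.2 k (by omega)
          simpa using this
        · rw [exitJ, dif_neg hex] at hx
          omega
      · rintro ⟨h1, h2⟩
        have hex : ∃ m, φ^[m] x ∉ Z := ⟨n + 1, h2⟩
        rw [exitJ, dif_pos hex, Nat.find_eq_iff]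
        exact ⟨h2, fun m hm hmem => hmem (h1 m (by omega))⟩
    rw [this]
    exact (MeasurableSet.biInter (Finset.range (n+1)).countable_toSet
      (fun k _ => (hit k) hZ)).inter ((hit (n+1)) hZ).compl

lemma exitFun_measurable {g : α → ℝ} {φ : α → α} (hg : Measurable g) (hφ : Measurable φ) :
    Measurable (exitFun g φ) := by
  have hZ : MeasurableSet {y | g y = 0} := hg (measurableSet_singleton 0)
  set J := exitJ {y | g y = 0} φ with hJ
  have hJm : Measurable J := exitJ_measurable hZ hφ
  have hΦ : Measurable fun x => φ^[J x] x := by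
    intro T hT
    have : (fun x => φ^[J x] x) ⁻¹' T = ⋃ n, (J ⁻¹' {n} ∩ φ^[n] ⁻¹' T) := by
      ext x
      simp only [mem_preimage, mem_iUnion, mem_inter_iff, mem_singleton_iff]
      constructor
      · intro hx; exact ⟨J x, rfl, hx⟩
      · rintro ⟨n, h1, h2⟩; rw [h1]; exact h2
    rw [this]
    exact MeasurableSet.iUnion fun n =>
      (hJm (measurableSet_singleton n)).inter ((hφ.iterate n) hT)
  exact hg.comp hΦ

lemma exitFun_nonneg {g : α → ℝ} {φ : α → α} (hg : ∀ x, 0 ≤ g x) (x : α) :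
    0 ≤ exitFun g φ x := hg _

lemma exitFun_le {g : α → ℝ} {φ : α → α} {l : ℝ} (hg : ∀ x, g x ≤ l) (x : α) :
    exitFun g φ x ≤ l := hg _

/-- The key telescoping identity for the exit function. -/
lemma exitFun_identity (g : α → ℝ) (φ : α → α) (x : α) :
    exitFun g φ x = g x + (if g x = 0 then exitFun g φ (φ x) else 0) := by
  set Z := {y | g y = 0} with hZdef
  by_cases hxZ : g x = 0
  · rw [if_pos hxZ]
    by_cases hex : ∃ n, φ^[n] x ∉ Z
    · -- the orbit exits
      have hfind := Nat.find_spec hex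
      have hpos : Nat.find hex ≠ 0 := by
        intro h0
        rw [h0] at hfind
        exact hfind (by simpa [hZdef] using hxZ)
      obtain ⟨m, hm⟩ : ∃ m, Nat.find hex = m + 1 := ⟨Nat.find hex - 1, by omega⟩
      have hex' : ∃ n, φ^[n] (φ x) ∉ Z := ⟨m, by rw [← Function.iterate_succ_apply]; rw [hm] at hfind; exact hfind⟩
      have hJφ : exitJ Z φ (φ x) = m := by
        rw [exitJ, dif_pos hex', Nat.find_eq_iff]
        constructor
        · rw [← Function.iterate_succ_apply]
          rw [hm] at hfind; exact hfind
        · intro k hk hmem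
          have := Nat.find_min hex (show k + 1 < Nat.find hex by omega)
          rw [Function.iterate_succ_apply] at this
          exact this hmem
      have hJx : exitJ Z φ x = m + 1 := by rw [exitJ, dif_pos hex, hm]
      rw [exitFun, exitFun, ← hZdef, hJx, hJφ, Function.iterate_succ_apply, hxZ, zero_add]
    · -- the orbit never exits
      have hall : ∀ n, φ^[n] x ∈ Z := by push_neg at hex; exact hex
      have hex' : ¬ ∃ n, φ^[n] (φ x) ∉ Z := by
        push_neg
        intro n
        rw [← Function.iterate_succ_apply]
        exact hall (n + 1)
      have hJx : exitJ Z φ x = 0 := by rw [exitJ, dif_neg (by push_neg; exact hall)]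
      have hJφ : exitJ Z φ (φ x) = 0 := by rw [exitJ, dif_neg hex']
      have hφxZ : g (φ x) = 0 := by
        have := hall 1
        simpa [hZdef] using this
      rw [exitFun, exitFun, ← hZdef, hJx, hJφ]
      simp only [Function.iterate_zero, id_eq]
      rw [hxZ, hφxZ]
      ring
  · rw [if_neg hxZ]
    have hJx : exitJ Z φ x = 0 := by
      rw [exitJ, dif_pos ⟨0, by simpa [hZdef] using hxZ⟩, Nat.find_eq_zero]
      simpa [hZdef] using hxZ
    rw [exitFun, ← hZdef, hJx]
    simp

end Exit

section Orbit

variable {α : Type*} [MeasurableSpace α] {μ : Measure α}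

lemma orbit_escape {Z : Set α} {φ : α → α} (hZ : MeasurableSet Z) (hφ : Measurable φ)
    {m : ℝ≥0∞} (hmap : Measure.map φ (μ.restrict Z) = m • μ) (hZm : μ Z = m) (hm1 : m < 1) :
    μ (⋂ n, φ^[n] ⁻¹' Z) = 0 := by
  have key : ∀ S : Set α, MeasurableSet S → μ (Z ∩ φ ⁻¹' S) = m * μ S := by
    intro S hS
    have h1 : Measure.map φ (μ.restrict Z) S = (m • μ) S := by rw [hmap]
    rw [Measure.map_apply hφ hS, Measure.restrict_apply (hφ hS)] at h1
    rw [inter_comm]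
    simpa using h1
  set B : ℕ → Set α := fun n => ⋂ k ∈ Finset.range (n+1), φ^[k] ⁻¹' Z with hB
  have hBmeas : ∀ n, MeasurableSet (B n) := fun n =>
    MeasurableSet.biInter (Finset.range (n+1)).countable_toSet
      (fun k _ => (hφ.iterate k) hZ)
  have hB0 : B 0 = Z := by
    simp [hB]
  have hBsucc : ∀ n, B (n+1) = Z ∩ φ ⁻¹' (B n) := by
    intro n
    ext x
    simp only [hB, mem_iInter, Finset.mem_range, mem_inter_iff, mem_preimage]
    constructor
    · intro hx
      refine ⟨by simpa using hx 0 (by omega), fun k hk => ?_⟩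
      rw [← Function.iterate_succ_apply]
      exact hx (k+1) (by omega)
    · rintro ⟨h1, h2⟩ k hk
      match k with
      | 0 => simpa using h1
      | Nat.succ j =>
        rw [Function.iterate_succ_apply]
        exact h2 j (by omega)
  have hBμ : ∀ n, μ (B n) = m ^ (n + 1) := by
    intro n
    induction n with
    | zero => rw [hB0, hZm]; ring
    | succ j ih =>
      rw [hBsucc j, key (B j) (hBmeas j), ih]
      ring
  have hsub : ∀ n, (⋂ k, φ^[k] ⁻¹' Z) ⊆ B n := by
    intro n x hx
    simp only [hB, mem_iInter, Finset.mem_range]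
    intro k _
    exact mem_iInter.mp hx k
  have hle : ∀ n, μ (⋂ k, φ^[k] ⁻¹' Z) ≤ m ^ (n + 1) := fun n =>
    (measure_mono (hsub n)).trans (le_of_eq (hBμ n))
  have htend : Filter.Tendsto (fun n : ℕ => m ^ (n + 1)) Filter.atTop (nhds 0) := by
    have := ENNReal.tendsto_pow_atTop_nhds_zero_of_lt_one hm1
    exact this.comp (Filter.tendsto_add_atTop_nat 1)
  exact le_antisymm (ge_of_tendsto' htend hle) (zero_le)

end Orbit

section Icc01

abbrev XI : Type := Set.Icc (0:ℝ) 1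

lemma XI_emb : MeasurableEmbedding (Subtype.val : XI → ℝ) :=
  MeasurableEmbedding.subtype_coe measurableSet_Icc

lemma XI_volume_def : (volume : Measure XI) = Measure.comap Subtype.val volume := rfl

lemma XI_apply {A : Set XI} (hA : MeasurableSet A) :
    (volume : Measure XI) A = volume (Subtype.val '' A) := by
  rw [XI_volume_def, XI_emb.comap_apply]

lemma XI_map_val : Measure.map (Subtype.val : XI → ℝ) volume = volume.restrict (Set.Icc 0 1) := by
  rw [XI_volume_def, XI_emb.map_comap, Subtype.range_coe]

lemma XI_prob : IsProbabilityMeasure (volume : Measure XI) := by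
  constructor
  rw [XI_apply MeasurableSet.univ, image_univ, Subtype.range_coe, Real.volume_Icc]
  norm_num

lemma XI_val_preimage_null (t : ℝ) : (volume : Measure XI) (Subtype.val ⁻¹' {t}) = 0 := by
  rw [XI_apply (measurable_subtype_coe (measurableSet_singleton t))]
  refine measure_mono_null (image_preimage_subset _ _) ?_
  exact measure_singleton t

lemma XI_standardBorel : StandardBorelSpace XI := by
  haveI : PolishSpace XI := IsClosed.polishSpace isClosed_Icc
  infer_instance

end Icc01

section Main

open ProbabilityTheory

local notation "μX" => (volume : Measure XI)

set_option maxHeartbeats 2000000 in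
lemma main_construction (g : XI → ℝ) (hg : Measurable g) {l : ℝ} (hl : 0 ≤ l)
    (hgbd : ∀ x, 0 ≤ g x ∧ g x ≤ l) (hb : ∀ x, ‖g x‖₊ ≤ l.toNNReal)
    (hZ0 : μX {x | g x = 0} ≠ 0) (hZc0 : μX {x | g x = 0}ᶜ ≠ 0) :
    ∃ A : Lp ℝ 2 μX →L[ℝ] Lp ℝ 2 μX, (∀ f, 0 ≤ f → 0 ≤ A f) ∧
      ContinuousLinearMap.adjoint A ∘L A - A ∘L ContinuousLinearMap.adjoint A
        = mulL g hg l.toNNReal hb := by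
  haveI : IsProbabilityMeasure μX := XI_prob
  haveI : StandardBorelSpace XI := XI_standardBorel
  set Z : Set XI := {x | g x = 0} with hZdef
  have hZmeas : MeasurableSet Z := hg (measurableSet_singleton 0)
  set m : ℝ≥0∞ := μX Z with hm_def
  have hm_top : m ≠ ∞ := (measure_lt_top μX Z).ne
  have hm1 : m < 1 := by
    rcases lt_or_ge m 1 with h | h
    · exact h
    · exfalso
      have hme : m = 1 := le_antisymm (le_trans (measure_mono (subset_univ Z)) (by simp)) h
      have : μX Zᶜ = 0 := by
        rw [measure_compl hZmeas (measure_ne_top _ _), measure_univ, ← hm_def, hme, tsub_self]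
      exact hZc0 this
  set mR : ℝ := m.toReal with hmR_def
  have hmR_pos : 0 < mR := ENNReal.toReal_pos hZ0 hm_top
  have hsq_pos : 0 < Real.sqrt mR := Real.sqrt_pos.mpr hmR_pos
  -- the pushforward measure on ℝ
  set ρ : Measure ℝ := Measure.map (Subtype.val : XI → ℝ) (Measure.restrict μX Z) with hρ_def
  have hρ_apply : ∀ {T : Set ℝ}, MeasurableSet T → ρ T = μX (Subtype.val ⁻¹' T ∩ Z) := by
    intro T hT
    rw [hρ_def, Measure.map_apply measurable_subtype_coe hT,
      Measure.restrict_apply (measurable_subtype_coe hT)]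
  have hρ_univ : ρ univ = m := by
    rw [hρ_apply MeasurableSet.univ]
    simp [hm_def]
  have hρ_atom : ∀ t : ℝ, ρ {t} = 0 := by
    intro t
    rw [hρ_apply (measurableSet_singleton t)]
    exact measure_mono_null inter_subset_left (XI_val_preimage_null t)
  set ρ' : Measure ℝ := m⁻¹ • ρ with hρ'_def
  haveI hρ'_prob : IsProbabilityMeasure ρ' := by
    constructor
    rw [hρ'_def, Measure.smul_apply, hρ_univ, smul_eq_mul, ENNReal.inv_mul_cancel hZ0 hm_top]
  have hρ'_atom : ∀ t : ℝ, ρ' {t} = 0 := by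
    intro t
    rw [hρ'_def, Measure.smul_apply, hρ_atom, smul_eq_mul, mul_zero]
  have hρ_smul : ρ = m • ρ' := by
    rw [hρ'_def, smul_smul, ENNReal.mul_inv_cancel hZ0 hm_top, one_smul]
  set F : ℝ → ℝ := fun t => cdf ρ' t with hF_def
  have hF_meas : Measurable F := (monotone_cdf ρ').measurable
  have hF_mem : ∀ t, F t ∈ Set.Icc (0:ℝ) 1 := fun t => ⟨cdf_nonneg (μ := ρ') t, cdf_le_one (μ := ρ') t⟩
  have hF_map : Measure.map F ρ' = volume.restrict (Set.Icc 0 1) :=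
    map_cdf_eq ρ' hρ'_atom
  set φ : XI → XI := fun x => ⟨F x.val, hF_mem x.val⟩ with hφ_def
  have hφ_meas : Measurable φ := (hF_meas.comp measurable_subtype_coe).subtype_mk
  -- pushforward property of φ
  have hφmap : Measure.map φ (Measure.restrict μX Z) = m • μX := by
    have h1 : Measure.map (Subtype.val : XI → ℝ) (Measure.map φ (Measure.restrict μX Z))
        = Measure.map (Subtype.val : XI → ℝ) (m • μX) := by
      rw [Measure.map_map measurable_subtype_coe hφ_meas]
      have hcomp : (Subtype.val : XI → ℝ) ∘ φ = F ∘ (Subtype.val : XI → ℝ) := rfl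
      rw [hcomp, ← Measure.map_map hF_meas measurable_subtype_coe, ← hρ_def, hρ_smul,
        Measure.map_smul, hF_map, Measure.map_smul, XI_map_val]
    have h2 := congrArg (Measure.comap (Subtype.val : XI → ℝ)) h1
    rwa [XI_emb.comap_map, XI_emb.comap_map] at h2
  -- the bad plateau set
  set Bq : ℚ → Set ℝ := fun qq => {t : ℝ | t < qq ∧ ρ (Set.Ioc t (qq:ℝ)) = 0} with hBq_def
  have hBq_null : ∀ qq : ℚ, ρ (Bq qq) = 0 := by
    intro qq
    rcases Set.eq_empty_or_nonempty (Bq qq) with hne | hne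
    · rw [hne]; exact measure_empty
    by_cases hbd : BddBelow (Bq qq)
    · set u := sInf (Bq qq) with hu_def
      have hIoo : ρ (Set.Ioo u (qq:ℝ)) = 0 := by
        have hchoice : ∀ n : ℕ, ∃ x ∈ Bq qq, x < u + 1/(n+1) := by
          intro n
          rw [← csInf_lt_iff hbd hne]
          have : (0:ℝ) < 1/(n+1) := by positivity
          linarith
        choose tn htn using hchoice
        have hcover : Set.Ioo u (qq:ℝ) ⊆ ⋃ n : ℕ, Set.Ioc (tn n) (qq:ℝ) := by
          intro y hy
          obtain ⟨n, hn⟩ := exists_nat_one_div_lt (show 0 < y - u by linarith [hy.1])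
          have h1 := (htn n).2
          have h2 : (1:ℝ)/(n+1) < y - u := hn
          have hlt : tn n < y := by linarith
          exact mem_iUnion.mpr ⟨n, hlt, hy.2.le⟩
        refine measure_mono_null hcover (measure_iUnion_null fun n => (htn n).1.2)
      have hsub : Bq qq ⊆ {u} ∪ Set.Ioo u (qq:ℝ) := by
        intro x hx
        rcases eq_or_lt_of_le (csInf_le hbd hx) with h | h
        · left; rw [← h]; rfl
        · right; exact ⟨h, hx.1⟩
      refine measure_mono_null hsub (measure_union_null (hρ_atom u) hIoo)
    · rw [not_bddBelow_iff] at hbd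
      have hchoice : ∀ n : ℕ, ∃ x ∈ Bq qq, x < -(n:ℝ) := fun n => hbd (-(n:ℝ))
      choose tn htn using hchoice
      have hcover : Bq qq ⊆ ⋃ n : ℕ, Set.Ioc (tn n) (qq:ℝ) := by
        intro x hx
        obtain ⟨n, hn⟩ := exists_nat_gt (-x)
        have h1 : tn n < -(n:ℝ) := (htn n).2
        have hlt : tn n < x := by linarith
        exact mem_iUnion.mpr ⟨n, hlt, hx.1.le⟩
      exact measure_mono_null hcover (measure_iUnion_null fun n => (htn n).1.2)
  set NR : Set ℝ := ⋃ qq : ℚ, Bq qq with hNR_def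
  have hNR_null : ρ NR = 0 := measure_iUnion_null hBq_null
  have hBq_meas : ∀ qq : ℚ, MeasurableSet (Bq qq) := by
    intro qq
    refine Set.OrdConnected.measurableSet ?_
    constructor
    rintro t ⟨ht1, ht2⟩ t' ⟨ht1', ht2'⟩ x ⟨hx1, hx2⟩
    refine ⟨lt_of_le_of_lt hx2 ht1', measure_mono_null (fun y hy => ?_) ht2⟩
    exact ⟨lt_of_le_of_lt hx1 hy.1, hy.2⟩
  have hNR_meas : MeasurableSet NR := MeasurableSet.iUnion hBq_meas
  set S : Set XI := Z \ (Subtype.val ⁻¹' NR) with hS_def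
  have hS_meas : MeasurableSet S := hZmeas.diff (measurable_subtype_coe hNR_meas)
  have hZS_null : μX (Z \ S) = 0 := by
    have hsub : Z \ S ⊆ Subtype.val ⁻¹' NR ∩ Z := by
      rintro x ⟨hxZ, hxS⟩
      refine ⟨?_, hxZ⟩
      by_contra hmem
      exact hxS ⟨hxZ, hmem⟩
    refine measure_mono_null hsub ?_
    rw [← hρ_apply hNR_meas]
    exact hNR_null
  -- a.e. injectivity of φ on S
  have hS_inj : ∀ x ∈ S, ∀ y ∈ S, φ x = φ y → x = y := by
    have key : ∀ a b : XI, a ∈ S → b ∈ S → a.val < b.val → φ a ≠ φ b := by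
      intro a b ha hb hab hcon
      have hval : F a.val = F b.val := congrArg Subtype.val hcon
      have hIoc : ρ' (Set.Ioc a.val b.val) = 0 := by
        have h1 : ρ' (Set.Iic b.val) = ρ' (Set.Iic a.val) := by
          rw [← ofReal_cdf (μ := ρ') a.val, ← ofReal_cdf (μ := ρ') b.val]
          rw [show cdf ρ' b.val = F b.val from rfl, show cdf ρ' a.val = F a.val from rfl, hval]
        have h2 : Set.Ioc a.val b.val = Set.Iic b.val \ Set.Iic a.val := (by ext y; simp only [Set.mem_Ioc, Set.mem_diff, Set.mem_Iic, not_le]; exact and_comm)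
        rw [h2, measure_diff (Set.Iic_subset_Iic.2 hab.le) nullMeasurableSet_Iic
          (measure_ne_top ρ' _), h1, tsub_self]
      have hIocρ : ρ (Set.Ioc a.val b.val) = 0 := by
        rw [hρ_smul, Measure.smul_apply, hIoc, smul_eq_mul, mul_zero]
      obtain ⟨qq, hq1, hq2⟩ := exists_rat_btwn hab
      have hsub2 : Set.Ioc a.val (qq:ℝ) ⊆ Set.Ioc a.val b.val :=
        fun y hy => ⟨hy.1, hy.2.trans hq2.le⟩
      have hmem : a.val ∈ Bq qq := ⟨hq1, measure_mono_null hsub2 hIocρ⟩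
      exact ha.2 (mem_iUnion.mpr ⟨qq, hmem⟩)
    intro x hx y hy hxy
    rcases lt_trichotomy x.val y.val with h | h | h
    · exact absurd hxy (key x y hx hy h)
    · exact Subtype.ext h
    · exact absurd hxy.symm (key y x hy hx h)
  have hS_ne : S.Nonempty := by
    by_contra hemp
    rw [not_nonempty_iff_eq_empty] at hemp
    apply hZ0
    have : Z \ S = Z := by rw [hemp, diff_empty]
    rw [hm_def, ← this]
    exact hZS_null
  obtain ⟨x₀, hx₀⟩ := hS_ne
  set e : ↥S → XI := fun s => φ s.val with he_def
  have he_inj : Function.Injective e := by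
    intro s t hst
    exact Subtype.ext (hS_inj s.val s.2 t.val t.2 hst)
  have he_meas : Measurable e := hφ_meas.comp measurable_subtype_coe
  haveI : StandardBorelSpace ↥S := hS_meas.standardBorel
  have hemb : MeasurableEmbedding e := he_meas.measurableEmbedding he_inj
  set ψ : XI → XI := Function.extend e Subtype.val (fun _ => x₀) with hψ_def
  have hψ_meas : Measurable ψ := hemb.measurable_extend measurable_subtype_coe measurable_const
  have hψe : ∀ s : ↥S, ψ (e s) = s.val := fun s => he_inj.extend_apply _ _ s
  have hψS : ∀ t, ψ t ∈ S := by
    intro t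
    by_cases ht : ∃ s, e s = t
    · obtain ⟨s, rfl⟩ := ht
      rw [hψe s]; exact s.2
    · rw [hψ_def, Function.extend_apply' _ _ _ ht]; exact hx₀
  have hφψ : ∀ t ∈ Set.range e, φ (ψ t) = t := by
    rintro t ⟨s, rfl⟩
    rw [hψe s]
  have hrange_conull : μX (Set.range e)ᶜ = 0 := by
    have h1 : (m • μX) (Set.range e)ᶜ = 0 := by
      rw [← hφmap, Measure.map_apply hφ_meas hemb.measurableSet_range.compl,
        Measure.restrict_apply (hφ_meas hemb.measurableSet_range.compl)]
      refine measure_mono_null (fun x hx => ?_) hZS_null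
      exact ⟨hx.2, fun hS => hx.1 ⟨⟨x, hS⟩, rfl⟩⟩
    rw [Measure.smul_apply, smul_eq_mul] at h1
    rcases mul_eq_zero.mp h1 with h | h
    · exact absurd h hZ0
    · exact h
  have hae_range : ∀ᵐ t ∂μX, t ∈ Set.range e := by
    have hcompl : {t : XI | ¬ t ∈ Set.range e} = (Set.range e)ᶜ := rfl
    rw [ae_iff, hcompl]
    exact hrange_conull
  have hae_S : ∀ᵐ x ∂μX, x ∈ Z → x ∈ S := by
    rw [ae_iff]
    refine measure_mono_null (fun x hx => ?_) hZS_null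
    rw [mem_setOf_eq, Classical.not_imp] at hx
    exact ⟨hx.1, hx.2⟩
  -- pushforward property of ψ
  have hψmap : Measure.map ψ μX = m⁻¹ • Measure.restrict μX S := by
    have himg : ∀ U : Set ↥S, MeasurableSet U → m * μX (e '' U) = μX (Subtype.val '' U) := by
      intro U hU
      have hEU : MeasurableSet (e '' U) := hemb.measurableSet_image' hU
      have h1 : (m • μX) (e '' U) = μX (φ ⁻¹' (e '' U) ∩ Z) := by
        rw [← hφmap, Measure.map_apply hφ_meas hEU, Measure.restrict_apply (hφ_meas hEU)]
      have h2 : μX (φ ⁻¹' (e '' U) ∩ Z) = μX (Subtype.val '' U) := by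
        have hkey : φ ⁻¹' (e '' U) ∩ Z ∩ S = Subtype.val '' U := by
          ext x
          simp only [mem_inter_iff, mem_preimage, mem_image]
          constructor
          · rintro ⟨⟨⟨s, hsU, hse⟩, _⟩, hxS⟩
            have : s = ⟨x, hxS⟩ := he_inj (by rw [hse])
            exact ⟨s, hsU, by rw [this]⟩
          · rintro ⟨s, hsU, hsx⟩
            have hxS : x ∈ S := by rw [← hsx]; exact s.2
            refine ⟨⟨⟨s, hsU, by rw [← hsx]⟩, ?_⟩, hxS⟩
            rw [← hsx]; exact s.2.1
        refine le_antisymm ?_ ?_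
        · calc μX (φ ⁻¹' (e '' U) ∩ Z)
              ≤ μX ((φ ⁻¹' (e '' U) ∩ Z ∩ S) ∪ (Z \ S)) := by
                refine measure_mono (fun x hx => ?_)
                by_cases hxS : x ∈ S
                · exact Or.inl ⟨hx, hxS⟩
                · exact Or.inr ⟨hx.2, hxS⟩
          _ ≤ μX (φ ⁻¹' (e '' U) ∩ Z ∩ S) + μX (Z \ S) := measure_union_le _ _
          _ = μX (Subtype.val '' U) := by rw [hkey, hZS_null, add_zero]
        · rw [← hkey]
          exact measure_mono (inter_subset_left)
      rw [← h2, ← h1, Measure.smul_apply, smul_eq_mul]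
    refine Measure.ext fun T hT => ?_
    rw [Measure.map_apply hψ_meas hT, Measure.smul_apply,
      Measure.restrict_apply hT, smul_eq_mul]
    have hset : ψ ⁻¹' T ∩ Set.range e = e '' (Subtype.val ⁻¹' T) := by
      ext t
      simp only [mem_inter_iff, mem_preimage, mem_image, mem_range]
      constructor
      · rintro ⟨hTmem, s, rfl⟩
        exact ⟨s, by rw [← hψe s]; exact hTmem, rfl⟩
      · rintro ⟨s, hsT, rfl⟩
        exact ⟨by rw [hψe s]; exact hsT, s, rfl⟩
    have h3 : μX (ψ ⁻¹' T) = μX (e '' (Subtype.val ⁻¹' T)) := by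
      refine le_antisymm ?_ ?_
      · calc μX (ψ ⁻¹' T) ≤ μX ((ψ ⁻¹' T ∩ Set.range e) ∪ (Set.range e)ᶜ) :=
              measure_mono (fun t ht => by
                by_cases hr : t ∈ Set.range e
                · exact Or.inl ⟨ht, hr⟩
                · exact Or.inr hr)
        _ ≤ μX (ψ ⁻¹' T ∩ Set.range e) + μX (Set.range e)ᶜ := measure_union_le _ _
        _ = μX (e '' (Subtype.val ⁻¹' T)) := by rw [hset, hrange_conull, add_zero]
      · rw [← hset]
        exact measure_mono inter_subset_left
    have h4 := himg ((Subtype.val : ↥S → XI) ⁻¹' T) (measurable_subtype_coe hT)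
    have h5 : ((Subtype.val : ↥S → XI) '' ((Subtype.val : ↥S → XI) ⁻¹' T)) = T ∩ S := by
      rw [Subtype.image_preimage_coe, inter_comm]
    rw [h3]
    rw [h5] at h4
    rw [← h4, ← mul_assoc, ENNReal.inv_mul_cancel hZ0 hm_top, one_mul]
  -- the exit-time function h and the shifted function q
  set hfun : XI → ℝ := exitFun g φ with hh_def
  have hh_meas : Measurable hfun := exitFun_measurable hg hφ_meas
  have hh_nonneg : ∀ x, 0 ≤ hfun x := fun x => (hgbd _).1
  set qfun : XI → ℝ := fun x => if g x = 0 then hfun (φ x) else 0 with hq_def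
  have hident : ∀ x, hfun x = g x + qfun x := fun x => exitFun_identity g φ x
  set sh : XI → ℝ := fun x => Real.sqrt (hfun x) with hsh_def
  have hsh_meas : Measurable sh := Real.continuous_sqrt.measurable.comp hh_meas
  set bs : ℝ≥0 := (Real.sqrt l).toNNReal with hbs_def
  have hsh_bd : ∀ x, ‖sh x‖₊ ≤ bs := by
    intro x
    rw [← NNReal.coe_le_coe, coe_nnnorm, Real.norm_eq_abs, hbs_def,
      Real.coe_toNNReal _ (Real.sqrt_nonneg l), abs_of_nonneg (Real.sqrt_nonneg _)]
    exact Real.sqrt_le_sqrt (hgbd _).2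
  set MS := mulL (μ := μX) sh hsh_meas bs hsh_bd with hMS_def
  have hMco : ∀ f, ⇑(MS f) =ᵐ[μX] fun x => sh x * f x := fun f =>
    mulL_coeFn sh hsh_meas bs hsh_bd f
  -- the isometry V
  set kV : XI → ℝ := Z.indicator (fun _ => (Real.sqrt mR)⁻¹) with hkV_def
  have hkV_meas : Measurable kV := measurable_const.indicator hZmeas
  set bV : ℝ≥0 := ((Real.sqrt mR)⁻¹).toNNReal with hbV_def
  have hkV_nonneg : ∀ x, 0 ≤ kV x := by
    intro x
    rw [hkV_def]
    by_cases hx : x ∈ Z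
    · rw [indicator_of_mem hx]; positivity
    · rw [indicator_of_notMem hx]
  have hkV_bd : ∀ x, ‖kV x‖₊ ≤ bV := by
    intro x
    rw [← NNReal.coe_le_coe, coe_nnnorm, Real.norm_eq_abs, hbV_def,
      Real.coe_toNNReal _ (by positivity), abs_of_nonneg (hkV_nonneg x), hkV_def]
    by_cases hx : x ∈ Z
    · rw [indicator_of_mem hx]
    · rw [indicator_of_notMem hx]; positivity
  have hkV_mem : ∀ x ∈ Z, kV x = (Real.sqrt mR)⁻¹ := by
    intro x hx; rw [hkV_def, indicator_of_mem hx]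
  have hkV_zero : ∀ x, x ∉ Z → kV x = 0 := by
    intro x hx; rw [hkV_def, indicator_of_notMem hx]
  have hcV : Measure.map φ (Measure.restrict μX {x | kV x ≠ 0}) ≤ m • μX := by
    have hsupp : {x | kV x ≠ 0} ⊆ Z := by
      intro x hx
      by_contra hxZ
      exact hx (hkV_zero x hxZ)
    calc Measure.map φ (Measure.restrict μX {x | kV x ≠ 0})
        ≤ Measure.map φ (Measure.restrict μX Z) :=
          Measure.map_mono (Measure.restrict_mono hsupp le_rfl) hφ_meas
    _ = m • μX := hφmap
  set V := wcL (μ := μX) kV φ hkV_meas hφ_meas hkV_bd hcV hm_top with hV_def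
  have hVco : ∀ f, ⇑(V f) =ᵐ[μX] fun x => kV x * f (φ x) := fun f =>
    wcL_coeFn kV φ hkV_meas hφ_meas hkV_bd hcV hm_top f
  -- the coisometry W
  set kW : XI → ℝ := fun _ => Real.sqrt mR with hkW_def
  have hkW_meas : Measurable kW := measurable_const
  set bW : ℝ≥0 := (Real.sqrt mR).toNNReal with hbW_def
  have hkW_bd : ∀ x, ‖kW x‖₊ ≤ bW := by
    intro x
    rw [← NNReal.coe_le_coe, coe_nnnorm, Real.norm_eq_abs, hbW_def,
      Real.coe_toNNReal _ (Real.sqrt_nonneg mR), abs_of_nonneg (Real.sqrt_nonneg mR)]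
  have hm_invtop : m⁻¹ ≠ ∞ := ENNReal.inv_ne_top.mpr hZ0
  have hcW : Measure.map ψ (Measure.restrict μX {x | kW x ≠ 0}) ≤ m⁻¹ • μX := by
    have huniv : {x : XI | kW x ≠ 0} = univ := by
      refine eq_univ_of_forall fun x => ?_
      exact hsq_pos.ne'
    rw [huniv, Measure.restrict_univ, hψmap]
    intro T
    rw [Measure.smul_apply, Measure.smul_apply, smul_eq_mul, smul_eq_mul]
    exact mul_le_mul_right (Measure.restrict_le_self T) _
  set W := wcL (μ := μX) kW ψ hkW_meas hψ_meas hkW_bd hcW hm_invtop with hW_def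
  have hWco : ∀ f, ⇑(W f) =ᵐ[μX] fun x => kW x * f (ψ x) := fun f =>
    wcL_coeFn kW ψ hkW_meas hψ_meas hkW_bd hcW hm_invtop f
  -- identification of sqrt constants
  have hsq_mul : Real.sqrt mR * Real.sqrt mR = mR := Real.mul_self_sqrt hmR_pos.le
  have hsq_cancel : Real.sqrt mR * (Real.sqrt mR)⁻¹ = 1 := mul_inv_cancel₀ hsq_pos.ne'
  -- W is the adjoint of V
  have hVadj : W = ContinuousLinearMap.adjoint V := by
    rw [ContinuousLinearMap.eq_adjoint_iff]
    intro u v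
    set G : XI → ℝ := fun y => Real.sqrt mR * rep u y * rep v (φ y) with hG_def
    have hG_meas : Measurable G :=
      (measurable_const.mul (rep_measurable u)).mul ((rep_measurable v).comp hφ_meas)
    have hEu_null : μX {y | ¬ u y = rep u y} = 0 := by
      have := rep_ae u
      rw [Filter.EventuallyEq, ae_iff] at this
      exact this
    have hEv_null : μX {y | ¬ v y = rep v y} = 0 := by
      have := rep_ae v
      rw [Filter.EventuallyEq, ae_iff] at this
      exact this
    have f2 : ∀ᵐ x ∂μX, u (ψ x) = rep u (ψ x) := by
      rw [ae_iff]
      refine measure_mono_null (fun x hx => ?_)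
        (wc_null (μ := μX) kW ψ hψ_meas hcW hEu_null)
      exact ⟨hsq_pos.ne', hx⟩
    have f4 : ∀ᵐ x ∂μX, kV x ≠ 0 → v (φ x) = rep v (φ x) := by
      rw [ae_iff]
      refine measure_mono_null (fun x hx => ?_)
        (wc_null (μ := μX) kV φ hφ_meas hcV hEv_null)
      rw [mem_setOf_eq, Classical.not_imp] at hx
      exact ⟨hx.1, hx.2⟩
    have hL : (inner ℝ (W u) v : ℝ) = ∫ x, G (ψ x) ∂μX := by
      rw [inner_L2]
      refine integral_congr_ae ?_
      filter_upwards [hWco u, f2, rep_ae v, hae_range] with x e1 e2 e3 e4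
      rw [e1, e2, hG_def]
      simp only
      rw [hφψ x e4, ← e3, hkW_def]
    have hSZae : S =ᵐ[μX] Z := by
      refine (MeasureTheory.ae_eq_set.mpr ⟨?_, ?_⟩)
      · rw [diff_eq_empty.mpr (diff_subset : S ⊆ Z)]
        exact measure_empty
      · exact hZS_null
    have hL2 : ∫ x, G (ψ x) ∂μX = mR⁻¹ * ∫ y in Z, G y ∂μX := by
      rw [← integral_map hψ_meas.aemeasurable hG_meas.aestronglyMeasurable, hψmap,
        integral_smul_measure, Measure.restrict_congr_set hSZae, ENNReal.toReal_inv,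
        smul_eq_mul]
    have hR : (inner ℝ u (V v) : ℝ)
        = ∫ x, Z.indicator (fun y => (Real.sqrt mR)⁻¹ * (rep u y * rep v (φ y))) x ∂μX := by
      rw [inner_L2]
      refine integral_congr_ae ?_
      filter_upwards [hVco v, f4, rep_ae u] with x e1 e2 e3
      rw [e1]
      by_cases hx : x ∈ Z
      · rw [indicator_of_mem hx]
        have hne : kV x ≠ 0 := by
          rw [hkV_mem x hx]
          positivity
        rw [e2 hne, hkV_mem x hx, ← e3]
        ring
      · rw [indicator_of_notMem hx, hkV_zero x hx]
        ring
    rw [hL, hL2, hR, integral_indicator hZmeas, integral_const_mul]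
    have hG2 : ∀ y, G y = Real.sqrt mR * (rep u y * rep v (φ y)) := by
      intro y; rw [hG_def]; ring
    simp only [hG2]
    rw [integral_const_mul, ← mul_assoc]
    congr 1
    have h7 : mR⁻¹ = (Real.sqrt mR)⁻¹ * (Real.sqrt mR)⁻¹ := by rw [← mul_inv, hsq_mul]
    rw [h7, mul_assoc, inv_mul_cancel₀ hsq_pos.ne', mul_one]
  -- the operator A := V ∘L MS
  refine ⟨V ∘L MS, ?_, ?_⟩
  · -- positivity of A
    intro f hf
    rw [← Lp.coeFn_nonneg]
    have hu : ∀ᵐ y ∂μX, 0 ≤ (MS f) y := by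
      filter_upwards [hMco f, (Lp.coeFn_nonneg f).mpr hf] with y e1 e2
      rw [e1]
      exact mul_nonneg (Real.sqrt_nonneg _) e2
    rw [ae_iff] at hu
    have f5 : ∀ᵐ x ∂μX, kV x ≠ 0 → 0 ≤ (MS f) (φ x) := by
      rw [ae_iff]
      refine measure_mono_null (fun x hx => ?_) (wc_null (μ := μX) kV φ hφ_meas hcV hu)
      rw [mem_setOf_eq, Classical.not_imp] at hx
      exact ⟨hx.1, hx.2⟩
    filter_upwards [hVco (MS f), f5] with x e1 e2
    show (0:ℝ) ≤ ((V ∘L MS) f) x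
    have : ((V ∘L MS) f) x = (V (MS f)) x := rfl
    rw [this, e1]
    by_cases hx : kV x = 0
    · rw [hx, zero_mul]
    · exact mul_nonneg (hkV_nonneg x) (e2 hx)
  · -- the commutator identity
    have hadjA : ContinuousLinearMap.adjoint (V ∘L MS) = MS ∘L W := by
      rw [ContinuousLinearMap.adjoint_comp, hMS_def, mulL_adjoint, ← hVadj]
    refine ContinuousLinearMap.ext fun f => ?_
    have hLHSeq : (ContinuousLinearMap.adjoint (V ∘L MS) ∘L (V ∘L MS)
        - (V ∘L MS) ∘L ContinuousLinearMap.adjoint (V ∘L MS)) f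
        = MS (W (V (MS f))) - V (MS (MS (W f))) := by
      rw [hadjA]
      simp only [ContinuousLinearMap.sub_apply, ContinuousLinearMap.comp_apply]
    rw [hLHSeq]
    refine Lp.ext ?_
    have e₁ : ⇑(MS (W (V (MS f)))) =ᵐ[μX] fun x => hfun x * f x := by
      have s1 : ⇑(V (MS f)) =ᵐ[μX] fun y => kV y * ((fun z => sh z * f z) (φ y)) :=
        (hVco (MS f)).trans (wc_congr kV φ hφ_meas hcV (hMco f))
      have s2 : ⇑(W (V (MS f)))
          =ᵐ[μX] fun x => kW x * ((fun y => kV y * (sh (φ y) * f (φ y))) (ψ x)) :=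
        (hWco (V (MS f))).trans (wc_congr kW ψ hψ_meas hcW s1)
      have s3 : ⇑(MS (W (V (MS f))))
          =ᵐ[μX] fun x => sh x * (kW x * (kV (ψ x) * (sh (φ (ψ x)) * f (φ (ψ x))))) := by
        refine (hMco _).trans ?_
        filter_upwards [s2] with x e
        rw [e]
      refine s3.trans ?_
      filter_upwards [hae_range] with x hx
      have hkWx : kW x = Real.sqrt mR := rfl
      rw [hφψ x hx, hkV_mem (ψ x) (hψS x).1, hkWx]
      have hshx : sh x * sh x = hfun x := Real.mul_self_sqrt (hh_nonneg x)
      calc sh x * (Real.sqrt mR * ((Real.sqrt mR)⁻¹ * (sh x * f x)))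
          = (Real.sqrt mR * (Real.sqrt mR)⁻¹) * ((sh x * sh x) * f x) := by ring
        _ = hfun x * f x := by rw [hsq_cancel, hshx, one_mul]
    have e₂ : ⇑(V (MS (MS (W f)))) =ᵐ[μX] fun x => qfun x * f x := by
      have t1 : ⇑(MS (W f)) =ᵐ[μX] fun y => sh y * (kW y * f (ψ y)) := by
        refine (hMco _).trans ?_
        filter_upwards [hWco f] with y e
        rw [e]
      have t2 : ⇑(MS (MS (W f))) =ᵐ[μX] fun y => sh y * (sh y * (kW y * f (ψ y))) := by
        refine (hMco _).trans ?_
        filter_upwards [t1] with y e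
        rw [e]
      have t3 : ⇑(V (MS (MS (W f))))
          =ᵐ[μX] fun x => kV x * ((fun y => sh y * (sh y * (kW y * f (ψ y)))) (φ x)) :=
        (hVco _).trans (wc_congr kV φ hφ_meas hcV t2)
      refine t3.trans ?_
      filter_upwards [hae_S] with x hx
      by_cases hxZ : x ∈ Z
      · have hxS := hx hxZ
        have hψφ : ψ (φ x) = x := by
          have h8 : φ x = e ⟨x, hxS⟩ := rfl
          rw [h8, hψe ⟨x, hxS⟩]
        have hkWφ : kW (φ x) = Real.sqrt mR := rfl
        have hqx : qfun x = hfun (φ x) := by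
          simp only [hq_def]
          rw [if_pos (show g x = 0 from hxZ)]
        have hshφ : sh (φ x) * sh (φ x) = hfun (φ x) := Real.mul_self_sqrt (hh_nonneg (φ x))
        rw [hψφ, hkV_mem x hxZ, hkWφ, hqx]
        calc (Real.sqrt mR)⁻¹ * (sh (φ x) * (sh (φ x) * (Real.sqrt mR * f x)))
            = ((Real.sqrt mR)⁻¹ * Real.sqrt mR) * ((sh (φ x) * sh (φ x)) * f x) := by ring
          _ = hfun (φ x) * f x := by rw [inv_mul_cancel₀ hsq_pos.ne', hshφ, one_mul]
      · have hqx : qfun x = 0 := by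
          simp only [hq_def]
          rw [if_neg (show ¬ g x = 0 from hxZ)]
        rw [hkV_zero x hxZ, hqx, zero_mul, zero_mul]
    filter_upwards [Lp.coeFn_sub (MS (W (V (MS f)))) (V (MS (MS (W f)))), e₁, e₂,
      mulL_coeFn g hg l.toNNReal hb f] with x d1 d2 d3 d4
    rw [d1, Pi.sub_apply, d2, d3, d4]
    have h9 := hident x
    have h10 : g x = hfun x - qfun x := by linarith
    rw [h10]
    ring

end Main

end SelfCommAux


open SelfCommAux in
set_option maxHeartbeats 1000000 in
/-- Every positive central operator on `L²[0,1]` with infinite-dimensional kernel is a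
self-commutator of a positive operator. -/
theorem positive_central_infinite_kernel_is_selfCommutator_L2
    (C : Lp ℝ 2 (volume : Measure (Set.Icc (0:ℝ) 1)) →L[ℝ]
      Lp ℝ 2 (volume : Measure (Set.Icc (0:ℝ) 1)))
    (hC_pos : ∀ f, 0 ≤ f → 0 ≤ C f)
    (hC_central : ∃ l : ℝ, 0 ≤ l ∧ ∀ f, |C f| ≤ l • |f|)
    (hC_ker : ¬ FiniteDimensional ℝ (LinearMap.ker C.toLinearMap)) :
    ∃ A : Lp ℝ 2 (volume : Measure (Set.Icc (0:ℝ) 1)) →L[ℝ]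
        Lp ℝ 2 (volume : Measure (Set.Icc (0:ℝ) 1)),
      (∀ f, 0 ≤ f → 0 ≤ A f) ∧
      C = adjoint A ∘L A - A ∘L adjoint A := by
  haveI : IsProbabilityMeasure (volume : Measure XI) := XI_prob
  obtain ⟨l, hl, hcen⟩ := hC_central
  obtain ⟨g, hg, hb, hgbd, hCeq⟩ := central_is_mult C l hl hC_pos hcen
  by_cases hZc : (volume : Measure XI) {x | g x = 0}ᶜ = 0
  · -- C = 0 : take A = 0
    have hC0 : C = 0 := by
      refine ContinuousLinearMap.ext fun f => ?_
      rw [hCeq]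
      refine Lp.ext ?_
      have hZae : ∀ᵐ x ∂(volume : Measure XI), g x = 0 := by
        rw [ae_iff]
        exact hZc
      have hz : ((0 : Lp ℝ 2 (volume : Measure XI) →L[ℝ] Lp ℝ 2 (volume : Measure XI)) f)
          = (0 : Lp ℝ 2 (volume : Measure XI)) := rfl
      rw [hz]
      filter_upwards [mulL_coeFn g hg l.toNNReal hb f, hZae,
        Lp.coeFn_zero ℝ 2 (volume : Measure XI)] with x e1 e2 e3
      rw [e1, e2, zero_mul, e3]
      rfl
    refine ⟨0, fun f hf => ?_, ?_⟩
    · have : ((0 : Lp ℝ 2 (volume : Measure XI) →L[ℝ] Lp ℝ 2 (volume : Measure XI)) f)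
          = (0 : Lp ℝ 2 (volume : Measure XI)) := rfl
      rw [this]
    · have hadj0 : ContinuousLinearMap.adjoint
          (0 : Lp ℝ 2 (volume : Measure XI) →L[ℝ] Lp ℝ 2 (volume : Measure XI)) = 0 :=
        map_zero _
      rw [hC0, hadj0]
      simp
  by_cases hZ : (volume : Measure XI) {x | g x = 0} = 0
  · -- the kernel of C is trivial : contradiction
    exfalso
    apply hC_ker
    have hker : LinearMap.ker C.toLinearMap = ⊥ := by
      rw [LinearMap.ker_eq_bot']
      intro f hf
      rw [hCeq] at hf
      have h1 : ⇑(mulL g hg l.toNNReal hb f) =ᵐ[(volume : Measure XI)] (0 : XI → ℝ) := by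
        rw [show mulL g hg l.toNNReal hb f = 0 from hf]
        exact Lp.coeFn_zero ℝ 2 (volume : Measure XI)
      have h2 : ∀ᵐ x ∂(volume : Measure XI), ¬ g x = 0 := by
        rw [ae_iff]
        have he : {x : XI | ¬¬ g x = 0} = {x : XI | g x = 0} := by
          ext x; simp [not_not]
        rw [he]
        exact hZ
      refine Lp.ext ?_
      filter_upwards [mulL_coeFn g hg l.toNNReal hb f, h1, h2,
        Lp.coeFn_zero ℝ 2 (volume : Measure XI)] with x e1 e2 e3 e4
      rw [e4]
      have := e2
      rw [e1] at this
      have h5 : g x * f x = 0 := this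
      rcases mul_eq_zero.mp h5 with h | h
      · exact absurd h e3
      · exact h
    rw [hker]
    infer_instance
  · obtain ⟨A, hA1, hA2⟩ := main_construction g hg hl hgbd hb hZ hZc
    exact ⟨A, hA1, by rw [hCeq, ← hA2]⟩
end
end

section
/- Let p be a real number with 1 ≤ p < ∞ and let C be a positive central bounded linear operator on ℓᵖ whose kernel is infinite-dimensional. Then C is a commutator of positive operators: there exist positive bounded linear operators A and B on ℓᵖ such that C = A ∘ B − B ∘ A. -/
open ContinuousLinearMap Function Set
open scoped ENNReal

section Aux

variable {p : ℝ≥0∞} [Fact (1 ≤ p)]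

private lemma memℓp_weighted_comp (hq : 0 < p.toReal)
    (w : ℕ → ℝ) (g : ℕ → ℕ) (M : ℝ) (hw : ∀ n, |w n| ≤ M)
    (hg : Set.InjOn g {n | w n ≠ 0}) (x : lp (fun _ : ℕ => ℝ) p) :
    Memℓp (fun n => w n * x (g n)) p := by
  apply memℓp_gen
  have hM : 0 ≤ M := le_trans (abs_nonneg _) (hw 0)
  have hxs : Summable (fun m : ℕ => ‖x m‖ ^ p.toReal) := (lp.memℓp x).summable hq
  set F : ℕ → ℝ := fun n => ‖w n * x (g n)‖ ^ p.toReal with hF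
  have key : ∀ n, F n ≤ M ^ p.toReal * ‖x (g n)‖ ^ p.toReal := by
    intro n
    rw [← Real.mul_rpow hM (norm_nonneg _)]
    apply Real.rpow_le_rpow (norm_nonneg _) _ hq.le
    rw [norm_mul]
    exact mul_le_mul_of_nonneg_right (by simpa [Real.norm_eq_abs] using hw n)
      (norm_nonneg _)
  have hsub : Summable (fun n : {n | w n ≠ 0} => F n) := by
    refine Summable.of_nonneg_of_le (fun n => Real.rpow_nonneg (norm_nonneg _) _)
      (fun n => key n) ?_
    exact ((hxs.mul_left (M ^ p.toReal)).comp_injective hg.injective)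
  have hind : Summable (Set.indicator {n | w n ≠ 0} F) :=
    summable_subtype_iff_indicator.mp hsub
  refine hind.congr fun n => ?_
  by_cases hn : w n = 0
  · simp [Set.indicator, hn, F, Real.zero_rpow hq.ne']
  · simp [Set.indicator, hn]

private lemma norm_weighted_comp (hq : 0 < p.toReal)
    (w : ℕ → ℝ) (g : ℕ → ℕ) (M : ℝ) (hw : ∀ n, |w n| ≤ M)
    (hg : Set.InjOn g {n | w n ≠ 0}) (x : lp (fun _ : ℕ => ℝ) p) :
    ‖(⟨fun n => w n * x (g n), memℓp_weighted_comp hq w g M hw hg x⟩ :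
        lp (fun _ : ℕ => ℝ) p)‖ ≤ M * ‖x‖ := by
  have hM : 0 ≤ M := le_trans (abs_nonneg _) (hw 0)
  have hxs : Summable (fun m : ℕ => ‖x m‖ ^ p.toReal) := (lp.memℓp x).summable hq
  apply lp.norm_le_of_tsum_le hq (by positivity)
  have hMx : (M * ‖x‖) ^ p.toReal = M ^ p.toReal * ‖x‖ ^ p.toReal :=
    Real.mul_rpow hM (norm_nonneg _)
  rw [hMx, lp.norm_rpow_eq_tsum hq, ← tsum_mul_left]
  set F : ℕ → ℝ := fun n => ‖w n * x (g n)‖ ^ p.toReal with hF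
  have key : ∀ n, F n ≤ M ^ p.toReal * ‖x (g n)‖ ^ p.toReal := by
    intro n
    rw [← Real.mul_rpow hM (norm_nonneg _)]
    apply Real.rpow_le_rpow (norm_nonneg _) _ hq.le
    rw [norm_mul]
    exact mul_le_mul_of_nonneg_right (by simpa [Real.norm_eq_abs] using hw n)
      (norm_nonneg _)
  have hsub : Summable (fun n : {n | w n ≠ 0} => F n) := by
    refine Summable.of_nonneg_of_le (fun n => Real.rpow_nonneg (norm_nonneg _) _)
      (fun n => key n) ?_
    exact ((hxs.mul_left (M ^ p.toReal)).comp_injective hg.injective)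
  have h1 : (∑' n, F n) = ∑' n : {n | w n ≠ 0}, F n := by
    rw [tsum_subtype]
    refine tsum_congr fun n => ?_
    by_cases hn : w n = 0
    · simp [Set.indicator, hn, F, Real.zero_rpow hq.ne']
    · simp [Set.indicator, hn]
  calc (∑' n, ‖(fun n => w n * x (g n)) n‖ ^ p.toReal) = ∑' n : {n | w n ≠ 0}, F n := h1
    _ ≤ ∑' m, M ^ p.toReal * ‖x m‖ ^ p.toReal := by
        refine Summable.tsum_le_tsum_of_inj (fun n : {n | w n ≠ 0} => g n) hg.injective
          (fun m _ => by positivity) (fun n => key n) hsub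
          (hxs.mul_left (M ^ p.toReal))

/-- The operator `x ↦ (n ↦ w n * x (g n))` on `ℓᵖ`. -/
noncomputable def weightedComp (hq : 0 < p.toReal)
    (w : ℕ → ℝ) (g : ℕ → ℕ) (M : ℝ) (hw : ∀ n, |w n| ≤ M)
    (hg : Set.InjOn g {n | w n ≠ 0}) :
    lp (fun _ : ℕ => ℝ) p →L[ℝ] lp (fun _ : ℕ => ℝ) p :=
  LinearMap.mkContinuous
    { toFun := fun x => ⟨fun n => w n * x (g n), memℓp_weighted_comp hq w g M hw hg x⟩
      map_add' := fun x y => by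
        apply lp.ext
        funext n
        simp only [lp.coeFn_add, Pi.add_apply]
        ring
      map_smul' := fun r x => by
        apply lp.ext
        funext n
        simp only [lp.coeFn_smul, Pi.smul_apply, smul_eq_mul, RingHom.id_apply]
        ring }
    M (fun x => norm_weighted_comp hq w g M hw hg x)

lemma weightedComp_apply (hq : 0 < p.toReal)
    (w : ℕ → ℝ) (g : ℕ → ℕ) (M : ℝ) (hw : ∀ n, |w n| ≤ M)
    (hg : Set.InjOn g {n | w n ≠ 0}) (x : lp (fun _ : ℕ => ℝ) p) (n : ℕ) :
    (weightedComp hq w g M hw hg x) n = w n * x (g n) := rfl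

end Aux

/-- For `1 ≤ p < ∞`, every positive central operator on `ℓᵖ` with infinite-dimensional kernel is
a commutator of positive operators. -/
theorem positive_central_infinite_kernel_is_commutator_lp
    (p : ℝ≥0∞) [hp1 : Fact (1 ≤ p)] (hp2 : p ≠ ⊤)
    (C : lp (fun _ : ℕ => ℝ) p →L[ℝ] lp (fun _ : ℕ => ℝ) p)
    (hC_pos : ∀ x : lp (fun _ : ℕ => ℝ) p, (∀ n, 0 ≤ x n) → ∀ n, 0 ≤ C x n)
    (hC_central : ∃ l : ℝ, 0 ≤ l ∧ ∀ (x : lp (fun _ : ℕ => ℝ) p) (n : ℕ), |C x n| ≤ l * |x n|)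
    (hC_ker : ¬ FiniteDimensional ℝ (LinearMap.ker C.toLinearMap)) :
    ∃ A B : lp (fun _ : ℕ => ℝ) p →L[ℝ] lp (fun _ : ℕ => ℝ) p,
      (∀ x : lp (fun _ : ℕ => ℝ) p, (∀ n, 0 ≤ x n) → ∀ n, 0 ≤ A x n) ∧
      (∀ x : lp (fun _ : ℕ => ℝ) p, (∀ n, 0 ≤ x n) → ∀ n, 0 ≤ B x n) ∧
      C = A ∘L B - B ∘L A := by
  classical
  obtain ⟨l, hl0, hl⟩ := hC_central
  have hq : 0 < p.toReal :=
    ENNReal.toReal_pos (by exact ne_of_gt (lt_of_lt_of_le zero_lt_one hp1.out)) hp2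
  set c : ℕ → ℝ := fun n => C (lp.single p n (1 : ℝ)) n with hc
  -- coordinates of `lp.single`
  have hsingle : ∀ n j : ℕ, (lp.single p n (1 : ℝ) : lp (fun _ : ℕ => ℝ) p) j = if j = n then (1:ℝ) else (0:ℝ) := by
    intro n j
    rcases eq_or_ne j n with h | h
    · subst h; simp [lp.single_apply_self]
    · simp [lp.single_apply_ne p n _ h, h]
  -- C is a diagonal operator with diagonal c
  have hdiag : ∀ (x : lp (fun _ : ℕ => ℝ) p) (n : ℕ), C x n = c n * x n := by
    intro x n
    set y := x - x n • lp.single p n (1 : ℝ) with hy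
    have hyn : y n = 0 := by
      rw [hy, lp.coeFn_sub, lp.coeFn_smul, Pi.sub_apply, Pi.smul_apply, smul_eq_mul, hsingle]; simp
    have hCy : C y n = 0 := by
      have := hl y n
      rw [hyn, abs_zero, mul_zero] at this
      exact abs_nonpos_iff.mp this
    have : C y = C x - x n • C (lp.single p n (1 : ℝ)) := by
      rw [hy, map_sub, map_smul]
    rw [this] at hCy
    have : C x n - x n * C (lp.single p n (1 : ℝ)) n = 0 := by
      rw [lp.coeFn_sub, lp.coeFn_smul, Pi.sub_apply, Pi.smul_apply, smul_eq_mul] at hCy; exact hCy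
    have := sub_eq_zero.mp this
    rw [this, hc]; ring
  -- basic properties of c
  have hc0 : ∀ n, 0 ≤ c n := by
    intro n
    apply hC_pos
    intro j
    rw [hsingle]
    split <;> norm_num
  have hcl : ∀ n, c n ≤ l := by
    intro n
    have h1 := hl (lp.single p n (1 : ℝ)) n
    rw [hsingle n n, if_pos rfl, abs_one, mul_one] at h1
    exact (abs_le.mp h1).2
  -- the zero set of c is infinite
  set S : Set ℕ := {n | c n = 0} with hS
  have hSinf : S.Infinite := by
    by_contra hfin
    rw [Set.not_infinite] at hfin
    apply hC_ker
    refine FiniteDimensional.of_injective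
      (⟨⟨fun x => fun i : hfin.toFinset => (x : lp (fun _ : ℕ => ℝ) p) (i : ℕ), ?_⟩, ?_⟩ :
        LinearMap.ker C.toLinearMap →ₗ[ℝ] (hfin.toFinset → ℝ)) ?_
    · intro x y; funext i; simp [lp.coeFn_add]
    · intro r x; funext i; simp [lp.coeFn_smul]
    · intro x y hxy
      have hco : ∀ n : ℕ, (x : lp (fun _ : ℕ => ℝ) p) n = (y : lp (fun _ : ℕ => ℝ) p) n := by
        intro n
        by_cases hn : n ∈ S
        · have : n ∈ hfin.toFinset := hfin.mem_toFinset.mpr hn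
          exact congrFun hxy ⟨n, this⟩
        · have hxk : C (x : lp (fun _ : ℕ => ℝ) p) = 0 := x.2
          have hyk : C (y : lp (fun _ : ℕ => ℝ) p) = 0 := y.2
          have hx0 : c n * (x : lp (fun _ : ℕ => ℝ) p) n = 0 := by
            rw [← hdiag, hxk]; simp
          have hy0 : c n * (y : lp (fun _ : ℕ => ℝ) p) n = 0 := by
            rw [← hdiag, hyk]; simp
          have hcn : c n ≠ 0 := hn
          rw [mul_eq_zero] at hx0 hy0
          rcases hx0 with h | h; · exact absurd h hcn
          rcases hy0 with h' | h'; · exact absurd h' hcn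
          rw [h, h']
      exact Subtype.ext (lp.ext (funext hco))
  -- enumeration of (part of) S
  set f : ℕ → ℕ := fun m => ((hSinf.natEmbedding S m : S) : ℕ) with hfdef
  have hfinj : Function.Injective f :=
    fun a b h => (hSinf.natEmbedding S).injective (Subtype.ext h)
  have hfS : ∀ m, f m ∈ S := fun m => (hSinf.natEmbedding S m).2
  set finv : ℕ → ℕ := Function.invFun f with hfinvdef
  have hfinv : ∀ m, finv (f m) = m := Function.leftInverse_invFun hfinj
  have hffinv : ∀ n, n ∈ Set.range f → f (finv n) = n := fun n hn => Function.invFun_eq hn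
  set t : ℕ → ℕ := fun n => (Nat.unpair (finv n)).1 with ht
  set k : ℕ → ℕ := fun n => (Nat.unpair (finv n)).2 with hk
  have hmem : ∀ n ∈ Set.range f, f (Nat.pair (t n) (k n)) = n := by
    intro n hn
    have : Nat.pair (t n) (k n) = finv n := by
      simp [t, k, Nat.pair_unpair]
    rw [this, hffinv n hn]
  have htk : ∀ a b : ℕ, t (f (Nat.pair a b)) = a ∧ k (f (Nat.pair a b)) = b := by
    intro a b
    constructor <;> simp [t, k, hfinv]
  -- definitions of next, prev and weights
  set next : ℕ → ℕ := fun n => if n ∈ S then f (Nat.pair (t n) (k n + 1)) else f (Nat.pair n 0)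
    with hnext
  set prev : ℕ → ℕ := fun n => if k n = 0 then t n else f (Nat.pair (t n) (k n - 1)) with hprev
  set wA : ℕ → ℝ := fun n => if n ∈ S then (if n ∈ Set.range f then c (t n) else 0) else c n
    with hwA
  set wB : ℕ → ℝ := fun n => if n ∈ Set.range f ∧ t n ∉ S then 1 else 0 with hwB
  have hwA_nonneg : ∀ n, 0 ≤ wA n := by
    intro n; simp only [hwA]
    split
    · split
      · exact hc0 _
      · exact le_refl 0
    · exact hc0 _
  have hwA_le : ∀ n, |wA n| ≤ l := by
    intro n
    rw [abs_of_nonneg (hwA_nonneg n)]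
    simp only [hwA]
    split
    · split
      · exact hcl _
      · exact hl0
    · exact hcl _
  have hwB_nonneg : ∀ n, 0 ≤ wB n := by
    intro n; simp only [hwB]; split <;> norm_num
  have hwB_le : ∀ n, |wB n| ≤ 1 := by
    intro n; simp only [hwB]; split <;> norm_num
  have hinjA : Set.InjOn next {n | wA n ≠ 0} := by
    intro a ha b hb hab
    have hsup : ∀ x ∈ {n | wA n ≠ 0}, x ∈ S → x ∈ Set.range f := by
      intro x hx hxS
      by_contra hr
      apply hx
      simp only [hwA]
      rw [if_pos hxS, if_neg hr]
    by_cases haS : a ∈ S <;> by_cases hbS : b ∈ S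
    · have hra := hsup a ha haS
      have hrb := hsup b hb hbS
      simp only [hnext, if_pos haS, if_pos hbS] at hab
      obtain ⟨h1, h2⟩ := Nat.pair_eq_pair.mp (hfinj hab)
      rw [← hmem a hra, ← hmem b hrb, h1, (by omega : k a = k b)]
    · simp only [hnext, if_pos haS, if_neg hbS] at hab
      obtain ⟨h1, h2⟩ := Nat.pair_eq_pair.mp (hfinj hab)
      omega
    · simp only [hnext, if_neg haS, if_pos hbS] at hab
      obtain ⟨h1, h2⟩ := Nat.pair_eq_pair.mp (hfinj hab)
      omega
    · simp only [hnext, if_neg haS, if_neg hbS] at hab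
      exact (Nat.pair_eq_pair.mp (hfinj hab)).1
  have hinjB : Set.InjOn prev {n | wB n ≠ 0} := by
    intro a ha b hb hab
    have hra : a ∈ Set.range f ∧ t a ∉ S := by
      by_contra h; apply ha; simp only [hwB]; rw [if_neg h]
    have hrb : b ∈ Set.range f ∧ t b ∉ S := by
      by_contra h; apply hb; simp only [hwB]; rw [if_neg h]
    have ha' := hmem a hra.1
    have hb' := hmem b hrb.1
    simp only [hprev] at hab
    by_cases hka : k a = 0 <;> by_cases hkb : k b = 0
    · rw [if_pos hka, if_pos hkb] at hab
      rw [← ha', ← hb', hab, hka, hkb]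
    · rw [if_pos hka, if_neg hkb] at hab
      exact absurd (by rw [hab]; exact hfS _) hra.2
    · rw [if_neg hka, if_pos hkb] at hab
      exact absurd (by rw [← hab]; exact hfS _) hrb.2
    · rw [if_neg hka, if_neg hkb] at hab
      obtain ⟨h1, h2⟩ := Nat.pair_eq_pair.mp (hfinj hab)
      rw [← ha', ← hb', h1, (by omega : k a = k b)]
  set A := weightedComp hq wA next l hwA_le hinjA with hA
  set B := weightedComp hq wB prev 1 hwB_le hinjB with hB
  refine ⟨A, B, ?_, ?_, ?_⟩
  · intro x hx n
    rw [hA, weightedComp_apply]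
    exact mul_nonneg (hwA_nonneg n) (hx _)
  · intro x hx n
    rw [hB, weightedComp_apply]
    exact mul_nonneg (hwB_nonneg n) (hx _)
  · apply ContinuousLinearMap.ext
    intro x
    apply lp.ext
    funext n
    have hrhs : ((A ∘L B - B ∘L A) x) n
        = wA n * (wB (next n) * x (prev (next n)))
          - wB n * (wA (prev n) * x (next (prev n))) := by
      have h1 : ((A ∘L B - B ∘L A) x) = A (B x) - B (A x) := by
        simp [ContinuousLinearMap.sub_apply]
      rw [h1, lp.coeFn_sub]
      simp only [Pi.sub_apply, hA, hB, weightedComp_apply]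
    show C x n = ((A ∘L B - B ∘L A) x) n
    rw [hdiag x n, hrhs]
    by_cases hnS : n ∈ S
    · have hcn : c n = 0 := by rw [hS] at hnS; exact hnS
      rw [hcn, zero_mul]
      by_cases hr : n ∈ Set.range f
      · have hn' := hmem n hr
        by_cases htS : t n ∈ S
        · have h1 : wA n = 0 := by
            simp only [hwA, if_pos hnS, if_pos hr]
            rw [hS] at htS; exact htS
          have h2 : wB n = 0 := by
            simp only [hwB]
            rw [if_neg (by tauto)]
          rw [h1, h2]; ring
        · have hnextn : next n = f (Nat.pair (t n) (k n + 1)) := by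
            simp only [hnext, if_pos hnS]
          have htn : t (next n) = t n := by rw [hnextn]; exact (htk _ _).1
          have hkn : k (next n) = k n + 1 := by rw [hnextn]; exact (htk _ _).2
          have hWB : wB (next n) = 1 := by
            simp only [hwB]
            rw [if_pos ⟨Set.mem_range.mpr ⟨_, hnextn.symm⟩, by rw [htn]; exact htS⟩]
          have hPN : prev (next n) = n := by
            simp only [hprev, htn, hkn]
            rw [if_neg (by omega), Nat.add_sub_cancel]
            exact hn'
          have hWA : wA n = c (t n) := by
            simp only [hwA, if_pos hnS, if_pos hr]
          have hWBn : wB n = 1 := by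
            simp only [hwB]
            rw [if_pos ⟨hr, htS⟩]
          by_cases hk0 : k n = 0
          · have hprevn : prev n = t n := by simp only [hprev]; rw [if_pos hk0]
            have hWA2 : wA (prev n) = c (t n) := by
              rw [hprevn]
              simp only [hwA]
              rw [if_neg htS]
            have hNP : next (prev n) = n := by
              rw [hprevn]
              simp only [hnext]
              rw [if_neg htS, ← hk0]
              exact hn'
            rw [hWA, hWB, hPN, hWBn, hWA2, hNP]; ring
          · have hprevn : prev n = f (Nat.pair (t n) (k n - 1)) := by
              simp only [hprev]; rw [if_neg hk0]
            have hprevS : prev n ∈ S := by rw [hprevn]; exact hfS _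
            have ht2 : t (prev n) = t n := by rw [hprevn]; exact (htk _ _).1
            have hk2 : k (prev n) = k n - 1 := by rw [hprevn]; exact (htk _ _).2
            have hWA2 : wA (prev n) = c (t n) := by
              simp only [hwA, if_pos hprevS, ht2]
              rw [if_pos (Set.mem_range.mpr ⟨_, hprevn.symm⟩)]
            have hNP : next (prev n) = n := by
              simp only [hnext, if_pos hprevS, ht2, hk2]
              rw [(by omega : k n - 1 + 1 = k n)]
              exact hn'
            rw [hWA, hWB, hPN, hWBn, hWA2, hNP]; ring
      · have h1 : wA n = 0 := by
          simp only [hwA, if_pos hnS]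
          rw [if_neg hr]
        have h2 : wB n = 0 := by
          simp only [hwB]
          rw [if_neg (by tauto)]
        rw [h1, h2]; ring
    · have hWA : wA n = c n := by simp only [hwA]; rw [if_neg hnS]
      have hnextn : next n = f (Nat.pair n 0) := by simp only [hnext]; rw [if_neg hnS]
      have htn : t (next n) = n := by rw [hnextn]; exact (htk _ _).1
      have hkn : k (next n) = 0 := by rw [hnextn]; exact (htk _ _).2
      have hWB : wB (next n) = 1 := by
        simp only [hwB]
        rw [if_pos ⟨Set.mem_range.mpr ⟨_, hnextn.symm⟩, by rw [htn]; exact hnS⟩]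
      have hPN : prev (next n) = n := by
        simp [hprev, hkn, htn]
      have hWBn : wB n = 0 := by
        have hnr : n ∉ Set.range f := by
          rintro ⟨m, hm⟩
          exact hnS (hm ▸ hfS m)
        simp only [hwB]
        rw [if_neg (by tauto)]
      rw [hWA, hWB, hPN, hWBn]; ring
end

section
/- Let E be a nontrivial real Banach lattice and let A and B be bounded linear operators on E such that A is positive (A x ≥ 0 for all x ≥ 0) or A is negative (A x ≤ 0 for all x ≥ 0). Then there is no real number c > 0 such that AB − BA ≥ cI in the operator order, i.e. it is false that c • x ≤ A(B x) − B(A x) for all x ≥ 0. -/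
private theorem commutator_aux
    {E : Type*} [NormedAddCommGroup E] [Lattice E] [HasSolidNorm E] [IsOrderedAddMonoid E]
    [NormedSpace ℝ E] [PosSMulStrictMono ℝ E]
    [CompleteSpace E] [Nontrivial E]
    (A B : E →L[ℝ] E)
    (hA : ∀ x : E, 0 ≤ x → 0 ≤ A x) :
    ¬ ∃ c : ℝ, 0 < c ∧ ∀ x : E, 0 ≤ x → c • x ≤ A (B x) - B (A x) := by
  rintro ⟨c, hc, h⟩
  -- monotonicity of A
  have hmono : ∀ u v : E, u ≤ v → A u ≤ A v := by
    intro u v huv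
    have := hA (v - u) (sub_nonneg.mpr huv)
    rw [map_sub] at this
    exact sub_nonneg.mp this
  -- positivity of powers
  have hpow : ∀ n : ℕ, ∀ x : E, 0 ≤ x → 0 ≤ (A ^ n) x := by
    intro n
    induction n with
    | zero => intro x hx; simpa using hx
    | succ n ih =>
      intro x hx
      have : (A ^ (n+1)) x = A ((A ^ n) x) := by
        rw [pow_succ']; rfl
      rw [this]
      exact hA _ (ih x hx)
  -- key induction
  have key : ∀ n : ℕ, ∀ x : E, 0 ≤ x →
      (((n:ℝ)+1) * c) • ((A ^ n) x) ≤ (A ^ (n+1)) (B x) - B ((A ^ (n+1)) x) := by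
    intro n
    induction n with
    | zero =>
      intro x hx
      simpa using h x hx
    | succ n ih =>
      intro x hx
      have e1 : ∀ y : E, (A ^ (n+2)) y = A ((A ^ (n+1)) y) := by
        intro y; rw [pow_succ']; rfl
      have h1 : (((n:ℝ)+1) * c) • A ((A ^ n) x) ≤
          A ((A ^ (n+1)) (B x)) - A (B ((A ^ (n+1)) x)) := by
        have := hmono _ _ (ih x hx)
        rw [map_sub, map_smul] at this
        exact this
      have h2 : c • ((A ^ (n+1)) x) ≤ A (B ((A ^ (n+1)) x)) - B (A ((A ^ (n+1)) x)) :=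
        h _ (hpow (n+1) x hx)
      have hAn : A ((A ^ n) x) = (A ^ (n+1)) x := by rw [pow_succ']; rfl
      rw [hAn] at h1
      have hsum := add_le_add h1 h2
      rw [e1 (B x), e1 x]
      rw [Nat.cast_succ]
      calc (((n:ℝ)+1+1) * c) • ((A ^ (n+1)) x)
          = (((n:ℝ)+1) * c) • ((A ^ (n+1)) x) + c • ((A ^ (n+1)) x) := by
            rw [← add_smul]; ring_nf
        _ ≤ (A ((A ^ (n+1)) (B x)) - A (B ((A ^ (n+1)) x)))
            + (A (B ((A ^ (n+1)) x)) - B (A ((A ^ (n+1)) x))) := hsum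
        _ = A ((A ^ (n+1)) (B x)) - B (A ((A ^ (n+1)) x)) := by abel
  -- zero descent
  have desc : ∀ m : ℕ, (A ^ m) ≠ 0 := by
    intro m
    induction m with
    | zero =>
      intro h0
      obtain ⟨x, hx⟩ := exists_ne (0 : E)
      apply hx
      have : (A ^ 0) x = 0 := by rw [h0]; rfl
      simpa using this
    | succ m ih =>
      intro h0
      apply ih
      ext y
      have hz : ∀ x : E, 0 ≤ x → (A ^ m) x = 0 := by
        intro x hx
        have h1 := key m x hx
        have h2 : (A ^ (m+1)) (B x) - B ((A ^ (m+1)) x) = 0 := by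
          rw [h0]; simp
        rw [h2] at h1
        have h3 : (0:E) ≤ (((m:ℝ)+1) * c) • ((A ^ m) x) :=
          smul_nonneg (by positivity) (hpow m x hx)
        have h4 : (((m:ℝ)+1) * c) • ((A ^ m) x) = 0 := le_antisymm h1 h3
        have hne : ((m:ℝ)+1) * c ≠ 0 := by positivity
        exact (smul_eq_zero.mp h4).resolve_left hne
      have := hz (y⁺) (posPart_nonneg y)
      have := hz (y⁻) (negPart_nonneg y)
      have hy : y = y⁺ - y⁻ := (posPart_sub_negPart y).symm
      calc (A ^ m) y = (A ^ m) y⁺ - (A ^ m) y⁻ := by rw [hy, map_sub]; rw [← hy]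
        _ = 0 := by rw [hz y⁺ (posPart_nonneg y), hz y⁻ (negPart_nonneg y)]; simp
  -- norm bound
  obtain ⟨n, hn⟩ := exists_nat_gt ((2 * ‖A‖ * ‖B‖) / c)
  have hbig : 2 * ‖A‖ * ‖B‖ < ((n:ℝ)+1) * c := by
    rw [div_lt_iff₀ hc] at hn
    nlinarith [Nat.cast_nonneg (α := ℝ) n]
  -- for x ≥ 0
  have bound1 : ∀ x : E, 0 ≤ x →
      (((n:ℝ)+1) * c) * ‖(A ^ n) x‖ ≤ 2 * ‖A‖ * ‖B‖ * ‖A ^ n‖ * ‖x‖ := by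
    intro x hx
    have hk := key n x hx
    have hpos : (0:E) ≤ (((n:ℝ)+1) * c) • ((A ^ n) x) :=
      smul_nonneg (by positivity) (hpow n x hx)
    have hDpos : (0:E) ≤ (A ^ (n+1)) (B x) - B ((A ^ (n+1)) x) := le_trans hpos hk
    have habs : |(((n:ℝ)+1) * c) • ((A ^ n) x)| ≤
        |(A ^ (n+1)) (B x) - B ((A ^ (n+1)) x)| := by
      rw [abs_of_nonneg hpos, abs_of_nonneg hDpos]; exact hk
    have hnorm := HasSolidNorm.solid habs
    have hD : ‖(A ^ (n+1)) (B x) - B ((A ^ (n+1)) x)‖ ≤ 2 * ‖A‖ * ‖B‖ * ‖A ^ n‖ * ‖x‖ := by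
      have e1 : ∀ y : E, (A ^ (n+1)) y = A ((A ^ n) y) := by
        intro y; rw [pow_succ']; rfl
      have t1 : ‖(A ^ (n+1)) (B x)‖ ≤ ‖A‖ * ‖A ^ n‖ * ‖B‖ * ‖x‖ := by
        rw [e1]
        calc ‖A ((A ^ n) (B x))‖ ≤ ‖A‖ * ‖(A ^ n) (B x)‖ := A.le_opNorm _
          _ ≤ ‖A‖ * (‖A ^ n‖ * ‖B x‖) := by
              exact mul_le_mul_of_nonneg_left ((A ^ n).le_opNorm _) (norm_nonneg _)
          _ ≤ ‖A‖ * (‖A ^ n‖ * (‖B‖ * ‖x‖)) := by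
              gcongr
              exact B.le_opNorm _
          _ = ‖A‖ * ‖A ^ n‖ * ‖B‖ * ‖x‖ := by ring
      have t2 : ‖B ((A ^ (n+1)) x)‖ ≤ ‖A‖ * ‖A ^ n‖ * ‖B‖ * ‖x‖ := by
        rw [e1]
        calc ‖B (A ((A ^ n) x))‖ ≤ ‖B‖ * ‖A (((A ^ n)) x)‖ := B.le_opNorm _
          _ ≤ ‖B‖ * (‖A‖ * ‖(A ^ n) x‖) := by
              exact mul_le_mul_of_nonneg_left (A.le_opNorm _) (norm_nonneg _)
          _ ≤ ‖B‖ * (‖A‖ * (‖A ^ n‖ * ‖x‖)) := by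
              gcongr
              exact (A ^ n).le_opNorm _
          _ = ‖A‖ * ‖A ^ n‖ * ‖B‖ * ‖x‖ := by ring
      calc ‖(A ^ (n+1)) (B x) - B ((A ^ (n+1)) x)‖
          ≤ ‖(A ^ (n+1)) (B x)‖ + ‖B ((A ^ (n+1)) x)‖ := norm_sub_le _ _
        _ ≤ ‖A‖ * ‖A ^ n‖ * ‖B‖ * ‖x‖ + ‖A‖ * ‖A ^ n‖ * ‖B‖ * ‖x‖ := add_le_add t1 t2
        _ = 2 * ‖A‖ * ‖B‖ * ‖A ^ n‖ * ‖x‖ := by ring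
    calc (((n:ℝ)+1) * c) * ‖(A ^ n) x‖ = ‖(((n:ℝ)+1) * c) • ((A ^ n) x)‖ := by
          rw [norm_smul]
          rw [Real.norm_eq_abs, abs_of_pos (by positivity)]
      _ ≤ ‖(A ^ (n+1)) (B x) - B ((A ^ (n+1)) x)‖ := hnorm
      _ ≤ 2 * ‖A‖ * ‖B‖ * ‖A ^ n‖ * ‖x‖ := hD
  -- extend to all y via |Aⁿ y| ≤ Aⁿ |y|
  have bound2 : ∀ y : E, ‖(A ^ n) y‖ ≤ (2 * ‖A‖ * ‖B‖ * ‖A ^ n‖ / (((n:ℝ)+1)*c)) * ‖y‖ := by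
    intro y
    have habs : |(A ^ n) y| ≤ (A ^ n) |y| := by
      have hy : y = y⁺ - y⁻ := (posPart_sub_negPart y).symm
      have hay : |y| = y⁺ + y⁻ := (posPart_add_negPart y).symm
      calc |(A ^ n) y| = |(A ^ n) y⁺ - (A ^ n) y⁻| := by
            nth_rewrite 1 [hy]; rw [map_sub]
        _ ≤ |(A ^ n) y⁺| + |(A ^ n) y⁻| := by
            rw [sub_eq_add_neg]
            refine (abs_add_le ((A ^ n) y⁺) (-((A ^ n) y⁻))).trans ?_
            rw [abs_neg]
        _ = (A ^ n) y⁺ + (A ^ n) y⁻ := by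
            rw [abs_of_nonneg (hpow n _ (posPart_nonneg y)),
               abs_of_nonneg (hpow n _ (negPart_nonneg y))]
        _ = (A ^ n) |y| := by rw [hay, map_add]
      
    have h1 : ‖(A ^ n) y‖ ≤ ‖(A ^ n) |y|‖ := by
      apply HasSolidNorm.solid
      rwa [abs_of_nonneg (hpow n _ (abs_nonneg y))]
    have h2 := bound1 |y| (abs_nonneg y)
    have h3 : ‖(A ^ n) |y|‖ ≤ (2 * ‖A‖ * ‖B‖ * ‖A ^ n‖ / (((n:ℝ)+1)*c)) * ‖|y|‖ := by
      rw [div_mul_eq_mul_div, le_div_iff₀ (by positivity : (0:ℝ) < ((n:ℝ)+1)*c), mul_comm]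
      exact h2
    rw [norm_abs_eq_norm] at h3
    exact h1.trans h3
  have hop : ‖A ^ n‖ ≤ 2 * ‖A‖ * ‖B‖ * ‖A ^ n‖ / (((n:ℝ)+1)*c) :=
    ContinuousLinearMap.opNorm_le_bound _ (by positivity) bound2
  have hApos : 0 < ‖A ^ n‖ := by
    rcases (norm_nonneg (A ^ n)).lt_or_eq with h' | h'
    · exact h'
    · exact absurd (norm_eq_zero.mp h'.symm) (desc n)
  have : ((n:ℝ)+1)*c ≤ 2 * ‖A‖ * ‖B‖ := by
    rw [le_div_iff₀ (by positivity : (0:ℝ) < ((n:ℝ)+1)*c)] at hop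
    nlinarith [hApos]
  linarith [hbig]

/-- On a nontrivial Banach lattice, if one of the operators `A`, `B` is positive or negative,
then the commutator `AB - BA` cannot dominate a positive multiple of the identity. -/
theorem commutator_not_ge_positive_multiple_of_identity
    {E : Type*} [NormedAddCommGroup E] [Lattice E] [HasSolidNorm E] [IsOrderedAddMonoid E]
    [NormedSpace ℝ E] [PosSMulStrictMono ℝ E]
    [CompleteSpace E] [Nontrivial E]
    (A B : E →L[ℝ] E)
    (hA : (∀ x : E, 0 ≤ x → 0 ≤ A x) ∨ (∀ x : E, 0 ≤ x → A x ≤ 0)) :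
    ¬ ∃ c : ℝ, 0 < c ∧ ∀ x : E, 0 ≤ x → c • x ≤ A (B x) - B (A x) := by
  rcases hA with hA | hA
  · exact commutator_aux A B hA
  · rintro ⟨c, hc, h⟩
    have hA' : ∀ x : E, 0 ≤ x → 0 ≤ (-A) x := by
      intro x hx
      simpa using hA x hx
    exact commutator_aux (-A) (-B) hA' ⟨c, hc, fun x hx => by simpa using h x hx⟩
end
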